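/- arXiv:math/0311314 — 8 statements merged into one kernel-verified Lean document; each statement's English description precedes it below -/
import Mathlib

section
/- Let ℓ be a positive integer. For every τ ∈ ℍ and all ν, μ ∈ ℂ with 0 < Im(ν+μ) < Im τ, both double series below converge absolutely and K_ℓ(τ,ν,μ) = Σ_{m≥0} Σ_{n≥0} e^{iπ m² ℓ τ + 2iπ m n τ + 2iπ(mℓ+n)ν + 2iπ n μ} − Σ_{m≤−1} Σ_{n≤−1} e^{iπ m² ℓ τ + 2iπ m n τ + 2iπ(mℓ+n)ν + 2iπ n μ}. -/
set_option maxHeartbeats 1000000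


open Complex Real MeasureTheory Finset

noncomputable def appellK (ℓ : ℕ) (τ ν μ : ℂ) : ℂ :=
  ∑' m : ℤ,
    Complex.exp ((π : ℂ) * I * (m : ℂ) ^ 2 * ℓ * τ +
        2 * (π : ℂ) * I * (m : ℂ) * ℓ * ν) /
      (1 - Complex.exp (2 * (π : ℂ) * I * (ν + μ + (m : ℂ) * τ)))

noncomputable def theta (τ ν : ℂ) : ℂ :=
  ∑' m : ℤ, Complex.exp ((π : ℂ) * I * (m : ℂ) ^ 2 * τ + 2 * (π : ℂ) * I * (m : ℂ) * ν)

noncomputable def PhiFun (τ μ : ℂ) : ℂ :=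
  -I / (2 * (-I * τ) ^ (1/2 : ℂ)) -
    (1/2) * ∫ x : ℝ, Complex.exp (-(π : ℂ) * (x : ℂ) ^ 2) *
      (Complex.sinh ((π : ℂ) * (x : ℂ) * (-I * τ) ^ (1/2 : ℂ) * (1 + 2 * μ / τ)) /
       Complex.sinh ((π : ℂ) * (x : ℂ) * (-I * τ) ^ (1/2 : ℂ)))

noncomputable def theta10 (τ ν : ℂ) : ℂ :=
  ∑' m : ℤ, Complex.exp ((π : ℂ) * I * ((m : ℂ) ^ 2 - (m : ℂ)) * τ - 2 * (π : ℂ) * I * (m : ℂ) * ν)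

noncomputable def theta11 (τ ν : ℂ) : ℂ :=
  ∑' m : ℤ, (-1 : ℂ) ^ m *
    Complex.exp ((π : ℂ) * I * ((m : ℂ) ^ 2 - (m : ℂ)) * τ - 2 * (π : ℂ) * I * (m : ℂ) * ν)

noncomputable def etaF (τ : ℂ) : ℂ :=
  Complex.exp ((π : ℂ) * I * τ / 12) * ∏' m : ℕ, (1 - Complex.exp (2 * (π : ℂ) * I * ((m : ℂ) + 1) * τ))

noncomputable def thetaHL (r : ℤ) (ℓ : ℕ) (τ ν : ℂ) : ℂ :=
  ∑' n : ℤ, Complex.exp (2 * (π : ℂ) * I * ℓ *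
    ((((n : ℂ) + (r : ℂ) / (2 * ℓ)) ^ 2) * τ + ((n : ℂ) + (r : ℂ) / (2 * ℓ)) * ν))

noncomputable def zetaCD (c d : ℤ) : ℂ :=
  if Even c then Complex.exp ((π : ℂ) * I * ((d : ℂ) - 1) / 4) * (jacobiSym c d.natAbs : ℂ)
  else Complex.exp (-(π : ℂ) * I * (c : ℂ) / 4) * (jacobiSym d c.natAbs : ℂ)

noncomputable def appellTerm (ℓ : ℕ) (τ ν μ : ℂ) (m n : ℤ) : ℂ :=
  Complex.exp ((π : ℂ) * I * (m : ℂ) ^ 2 * ℓ * τ + 2 * (π : ℂ) * I * (m : ℂ) * (n : ℂ) * τ +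
    2 * (π : ℂ) * I * ((m : ℂ) * ℓ + (n : ℂ)) * ν + 2 * (π : ℂ) * I * (n : ℂ) * μ)


open Filter in
private lemma summable_exp_quad (a b : ℝ) (ha : 0 < a) :
    Summable fun m : ℕ => Real.exp (b * m - a * m ^ 2) := by
  apply summable_of_ratio_norm_eventually_le (r := Real.exp (-1))
    (by rw [Real.exp_lt_one_iff]; norm_num)
  obtain ⟨N, hN⟩ := exists_nat_ge ((b + 1) / (2 * a))
  filter_upwards [eventually_ge_atTop N] with m hm
  have hmr : (N : ℝ) ≤ m := Nat.cast_le.2 hm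
  have h2 : (b + 1) / (2 * a) ≤ (m : ℝ) := hN.trans hmr
  rw [Real.norm_eq_abs, Real.norm_eq_abs, _root_.abs_of_nonneg (Real.exp_pos _).le,
    _root_.abs_of_nonneg (Real.exp_pos _).le, ← Real.exp_add]
  apply Real.exp_le_exp.2
  have : b + 1 ≤ 2 * a * m := by
    rw [div_le_iff₀ (by positivity)] at h2; linarith
  push_cast
  nlinarith [ha.le]

private lemma norm_appellTerm' (ℓ : ℕ) (τ ν μ : ℂ) (m n : ℤ) :
    ‖appellTerm ℓ τ ν μ m n‖ =
      Real.exp (-π * ((m:ℝ)^2 * ℓ * τ.im + 2*m*ℓ*ν.im + 2*n*((m:ℝ)*τ.im + (ν+μ).im))) := by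
  rw [appellTerm, Complex.norm_exp]
  congr 1
  simp [Complex.add_re, Complex.mul_re, Complex.mul_im, Complex.I_re, Complex.I_im,
    Complex.ofReal_re, Complex.ofReal_im, Complex.intCast_re, Complex.intCast_im,
    Complex.natCast_re, Complex.natCast_im, pow_two]
  ring

private lemma appell_pos_term (ℓ : ℕ) (τ ν μ : ℂ) (hτ : 0 < τ.im) (h1 : 0 < (ν + μ).im)
    (m : ℕ) :
    Complex.exp ((π : ℂ) * I * ((m:ℤ) : ℂ) ^ 2 * ℓ * τ +
        2 * (π : ℂ) * I * ((m:ℤ) : ℂ) * ℓ * ν) /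
      (1 - Complex.exp (2 * (π : ℂ) * I * (ν + μ + ((m:ℤ) : ℂ) * τ))) =
    ∑' n : ℕ, appellTerm ℓ τ ν μ (m : ℤ) (n : ℤ) := by
  set q := Complex.exp (2 * (π : ℂ) * I * (ν + μ + ((m:ℤ) : ℂ) * τ)) with hq
  have hre : (2 * (π : ℂ) * I * (ν + μ + ((m:ℤ) : ℂ) * τ)).re
      = -(2 * π * ((ν+μ).im + m * τ.im)) := by
    simp [Complex.add_re, Complex.mul_re, Complex.mul_im, Complex.I_re, Complex.I_im,
      Complex.ofReal_re, Complex.ofReal_im]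
  have hqlt : ‖q‖ < 1 := by
    rw [hq, Complex.norm_exp, hre, Real.exp_lt_one_iff]
    have : (0:ℝ) ≤ m * τ.im := by positivity
    nlinarith [Real.pi_pos]
  rw [div_eq_mul_inv, ← tsum_geometric_of_norm_lt_one hqlt, ← tsum_mul_left]
  refine tsum_congr fun n => ?_
  rw [hq, ← Complex.exp_nat_mul, ← Complex.exp_add, appellTerm]
  congr 1
  push_cast
  ring

private lemma appell_neg_term (ℓ : ℕ) (τ ν μ : ℂ) (hτ : 0 < τ.im)
    (h2 : (ν + μ).im < τ.im) (m : ℕ) :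
    Complex.exp ((π : ℂ) * I * ((-(m:ℤ)-1 : ℤ) : ℂ) ^ 2 * ℓ * τ +
        2 * (π : ℂ) * I * ((-(m:ℤ)-1 : ℤ) : ℂ) * ℓ * ν) /
      (1 - Complex.exp (2 * (π : ℂ) * I * (ν + μ + ((-(m:ℤ)-1 : ℤ) : ℂ) * τ))) =
    -∑' n : ℕ, appellTerm ℓ τ ν μ (-(m:ℤ)-1) (-(n:ℤ)-1) := by
  set w := ν + μ + ((-(m:ℤ)-1 : ℤ) : ℂ) * τ with hw
  set q := Complex.exp (2 * (π : ℂ) * I * w) with hq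
  set r := Complex.exp (-(2 * (π : ℂ) * I * w)) with hr
  set a := Complex.exp ((π : ℂ) * I * ((-(m:ℤ)-1 : ℤ) : ℂ) ^ 2 * ℓ * τ +
        2 * (π : ℂ) * I * ((-(m:ℤ)-1 : ℤ) : ℂ) * ℓ * ν) with ha
  have hwim : w.im = (ν+μ).im + (-(m:ℝ)-1) * τ.im := by
    rw [hw]
    simp [Complex.add_im, Complex.mul_im, Complex.intCast_re, Complex.intCast_im]
  have hwneg : w.im < 0 := by
    rw [hwim]
    have : (0:ℝ) ≤ (m:ℝ) * τ.im := by positivity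
    nlinarith
  have hrlt : ‖r‖ < 1 := by
    rw [hr, Complex.norm_exp, Real.exp_lt_one_iff]
    have : (-(2 * (π : ℂ) * I * w)).re = 2 * π * w.im := by
      simp [Complex.mul_re, Complex.mul_im, Complex.I_re, Complex.I_im,
        Complex.ofReal_re, Complex.ofReal_im]
    rw [this]
    nlinarith [Real.pi_pos]
  have hqr : q * r = 1 := by rw [hq, hr, ← Complex.exp_add]; simp
  have h1r : (1 : ℂ) - r ≠ 0 := by
    intro h
    have : r = 1 := by linear_combination -h
    rw [this] at hrlt; simp at hrlt
  have hinv : (1 - q)⁻¹ = -(r * (1 - r)⁻¹) := by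
    refine inv_eq_of_mul_eq_one_right ?_
    calc (1 - q) * -(r * (1 - r)⁻¹) = (q * r - r) * (1 - r)⁻¹ := by ring
      _ = (1 - r) * (1 - r)⁻¹ := by rw [hqr]
      _ = 1 := mul_inv_cancel₀ h1r
  have hterm : ∀ n : ℕ, appellTerm ℓ τ ν μ (-(m:ℤ)-1) (-(n:ℤ)-1) = (a * r) * r ^ n := by
    intro n
    rw [appellTerm, ha, hr, ← Complex.exp_nat_mul, ← Complex.exp_add, ← Complex.exp_add]
    congr 1
    rw [hw]
    push_cast
    ring
  calc Complex.exp ((π : ℂ) * I * ((-(m:ℤ)-1 : ℤ) : ℂ) ^ 2 * ℓ * τ +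
        2 * (π : ℂ) * I * ((-(m:ℤ)-1 : ℤ) : ℂ) * ℓ * ν) / (1 - q)
      = -((a * r) * (1 - r)⁻¹) := by rw [div_eq_mul_inv, ← ha, hinv]; ring
    _ = -((a * r) * ∑' n : ℕ, r ^ n) := by rw [tsum_geometric_of_norm_lt_one hrlt]
    _ = -∑' n : ℕ, (a * r) * r ^ n := by rw [tsum_mul_left]
    _ = -∑' n : ℕ, appellTerm ℓ τ ν μ (-(m:ℤ)-1) (-(n:ℤ)-1) := by
        exact congrArg Neg.neg (tsum_congr fun n => (hterm n).symm)

theorem appellK_double_series (ℓ : ℕ) (hℓ : 0 < ℓ) (τ ν μ : ℂ) (hτ : 0 < τ.im)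
    (h1 : 0 < (ν + μ).im) (h2 : (ν + μ).im < τ.im) :
    Summable (fun p : ℕ × ℕ => appellTerm ℓ τ ν μ (p.1 : ℤ) (p.2 : ℤ)) ∧
    Summable (fun p : ℕ × ℕ => appellTerm ℓ τ ν μ (-(p.1 : ℤ) - 1) (-(p.2 : ℤ) - 1)) ∧
    appellK ℓ τ ν μ =
      (∑' p : ℕ × ℕ, appellTerm ℓ τ ν μ (p.1 : ℤ) (p.2 : ℤ)) -
      ∑' p : ℕ × ℕ, appellTerm ℓ τ ν μ (-(p.1 : ℤ) - 1) (-(p.2 : ℤ) - 1) := by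
  have hl : (0:ℝ) < ℓ := by exact_mod_cast hℓ
  have hts : (0:ℝ) < τ.im - (ν+μ).im := by linarith
  have hpi := Real.pi_pos
  -- Summability of the first double series
  have hS1 : Summable (fun p : ℕ × ℕ => appellTerm ℓ τ ν μ (p.1 : ℤ) (p.2 : ℤ)) := by
    have hA : Summable fun m : ℕ =>
        Real.exp ((-2*π*ℓ*ν.im) * m - (π*ℓ*τ.im) * m ^ 2) :=
      summable_exp_quad _ _ (by positivity)
    have hB : Summable fun n : ℕ => Real.exp (-(2*π*(ν+μ).im)) ^ n :=
      summable_geometric_of_lt_one (Real.exp_nonneg _)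
        (by rw [Real.exp_lt_one_iff]; nlinarith)
    refine Summable.of_norm_bounded
      (hA.mul_of_nonneg hB (fun m => (Real.exp_pos _).le)
        (fun n => pow_nonneg (Real.exp_nonneg _) _)) fun p => ?_
    rw [norm_appellTerm', ← Real.exp_nat_mul, ← Real.exp_add]
    apply Real.exp_le_exp.2
    push_cast
    have h0 : (0:ℝ) ≤ (p.1:ℝ) := Nat.cast_nonneg _
    have h0' : (0:ℝ) ≤ (p.2:ℝ) := Nat.cast_nonneg _
    nlinarith [mul_nonneg (mul_nonneg hpi.le h0) (mul_nonneg h0' hτ.le)]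
  -- Summability of the second double series
  have hS2 : Summable (fun p : ℕ × ℕ => appellTerm ℓ τ ν μ (-(p.1 : ℤ) - 1) (-(p.2 : ℤ) - 1)) := by
    have hA : Summable fun m : ℕ =>
        Real.exp ((2*π*ℓ*ν.im) * ((m+1 : ℕ):ℝ) - (π*ℓ*τ.im) * ((m+1 : ℕ):ℝ) ^ 2) :=
      (summable_nat_add_iff (f := fun m : ℕ => Real.exp ((2*π*ℓ*ν.im) * (m:ℝ) -
        (π*ℓ*τ.im) * (m:ℝ) ^ 2)) 1).mpr (summable_exp_quad _ _ (by positivity))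
    have hB : Summable fun n : ℕ => Real.exp (-(2*π*(τ.im - (ν+μ).im))) ^ n :=
      summable_geometric_of_lt_one (Real.exp_nonneg _)
        (by rw [Real.exp_lt_one_iff]; nlinarith)
    refine Summable.of_norm_bounded
      (hA.mul_of_nonneg hB (fun m => (Real.exp_pos _).le)
        (fun n => pow_nonneg (Real.exp_nonneg _) _)) fun p => ?_
    rw [norm_appellTerm', ← Real.exp_nat_mul, ← Real.exp_add]
    apply Real.exp_le_exp.2
    push_cast
    have h0 : (0:ℝ) ≤ (p.1:ℝ) := Nat.cast_nonneg _
    have h0' : (0:ℝ) ≤ (p.2:ℝ) := Nat.cast_nonneg _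
    nlinarith [mul_nonneg (mul_nonneg (mul_nonneg hpi.le h0') h0) hτ.le,
      mul_nonneg (mul_nonneg hpi.le h0) hτ.le,
      mul_nonneg hpi.le hts.le,
      mul_nonneg (mul_nonneg hpi.le h0') hts.le]
  refine ⟨hS1, hS2, ?_⟩
  -- the pointwise identities
  have hpos : ∀ m : ℕ,
      (fun m : ℤ => Complex.exp ((π : ℂ) * I * (m : ℂ) ^ 2 * ℓ * τ +
          2 * (π : ℂ) * I * (m : ℂ) * ℓ * ν) /
        (1 - Complex.exp (2 * (π : ℂ) * I * (ν + μ + (m : ℂ) * τ)))) (m : ℤ) =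
      ∑' n : ℕ, appellTerm ℓ τ ν μ (m : ℤ) (n : ℤ) :=
    fun m => appell_pos_term ℓ τ ν μ hτ h1 m
  have hneg : ∀ m : ℕ,
      (fun m : ℤ => Complex.exp ((π : ℂ) * I * (m : ℂ) ^ 2 * ℓ * τ +
          2 * (π : ℂ) * I * (m : ℂ) * ℓ * ν) /
        (1 - Complex.exp (2 * (π : ℂ) * I * (ν + μ + (m : ℂ) * τ)))) (-((m:ℤ) + 1)) =
      -∑' n : ℕ, appellTerm ℓ τ ν μ (-(m:ℤ)-1) (-(n:ℤ)-1) := by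
    intro m
    have : (-((m:ℤ) + 1)) = -(m:ℤ) - 1 := by ring
    rw [this]
    exact appell_neg_term ℓ τ ν μ hτ h2 m
  rw [appellK]
  rw [tsum_of_nat_of_neg_add_one
    (Summable.congr hS1.prod fun m => (hpos m).symm)
    (Summable.congr hS2.prod.neg fun m =>
      ((hneg m).trans (by rfl)).symm)]
  rw [tsum_congr hpos, tsum_congr hneg, tsum_neg, ← Summable.tsum_prod hS1, ← Summable.tsum_prod hS2]
  ring
end

section
/- Let ℓ be a positive integer, τ ∈ ℍ, and ν, μ ∈ ℂ with ν+μ ∉ ℤτ+ℤ. Then for every integer n ≥ 1: K_ℓ(τ, ν − (n/ℓ)τ, μ + (n/ℓ)τ) = e^{2iπ n(ν+μ)} K_ℓ(τ, ν, μ) + Σ_{r=1}^{n} e^{2iπ(n−r)(ν+μ)} ϑ(ℓτ, ℓν − rτ), and for every integer n ≤ −1: K_ℓ(τ, ν − (n/ℓ)τ, μ + (n/ℓ)τ) = e^{2iπ n(ν+μ)} K_ℓ(τ, ν, μ) − Σ_{r=n+1}^{0} e^{2iπ(n−r)(ν+μ)} ϑ(ℓτ, ℓν − rτ). -/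
open Complex Real MeasureTheory Finset

noncomputable def Sfun (ℓ : ℕ) (τ ν μ x : ℂ) : ℂ :=
  ∑' m : ℤ,
    Complex.exp ((π : ℂ) * I * (m : ℂ) ^ 2 * ℓ * τ +
        2 * (π : ℂ) * I * (m : ℂ) * ((ℓ : ℂ) * ν - x * τ)) /
      (1 - Complex.exp (2 * (π : ℂ) * I * (ν + μ + (m : ℂ) * τ)))

lemma denomD_ne_zero (τ ν μ : ℂ) (h : ∀ m n : ℤ, ν + μ ≠ (m : ℂ) * τ + (n : ℂ)) (m : ℤ) :
    1 - Complex.exp (2 * (π : ℂ) * I * (ν + μ + (m : ℂ) * τ)) ≠ 0 := by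
  intro hc
  have h1 : Complex.exp (2 * (π : ℂ) * I * (ν + μ + (m : ℂ) * τ)) = 1 := by
    linear_combination -hc
  rw [Complex.exp_eq_one_iff] at h1
  obtain ⟨k, hk⟩ := h1
  have h2π : (2 * (π : ℂ) * I) ≠ 0 := by
    refine mul_ne_zero (mul_ne_zero two_ne_zero ?_) Complex.I_ne_zero
    exact_mod_cast Complex.ofReal_ne_zero.mpr Real.pi_ne_zero
  have h2 : (2 * (π : ℂ) * I) * (ν + μ + (m : ℂ) * τ) = (2 * (π : ℂ) * I) * (k : ℂ) := by
    linear_combination hk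
  have h3 := mul_left_cancel₀ h2π h2
  exact h (-m) k (by push_cast; linear_combination h3)

lemma denom_lb (τ ν μ : ℂ) (hτ : 0 < τ.im)
    (h : ∀ m n : ℤ, ν + μ ≠ (m : ℂ) * τ + (n : ℂ)) :
    ∃ δ : ℝ, 0 < δ ∧ ∀ m : ℤ,
      δ ≤ ‖1 - Complex.exp (2 * (π : ℂ) * I * (ν + μ + (m : ℂ) * τ))‖ := by
  set t := τ.im with ht
  set s := (ν + μ).im with hs
  have hw : ∀ m : ℤ, ‖Complex.exp (2 * (π : ℂ) * I * (ν + μ + (m : ℂ) * τ))‖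
      = Real.exp (-(2 * π) * (s + m * t)) := by
    intro m
    rw [Complex.norm_exp]
    congr 1
    have him : (ν + μ + (m : ℂ) * τ).im = s + m * t := by
      rw [hs, ht]; simp [Complex.add_im, Complex.mul_im]
    have hre : (2 * (π : ℂ) * I * (ν + μ + (m : ℂ) * τ)).re
        = -(2 * π) * (ν + μ + (m : ℂ) * τ).im := by
      simp [Complex.mul_re, Complex.mul_im]
    rw [hre, him]
  have hπ : (0:ℝ) < 2 * π := by positivity
  have hπt : (0:ℝ) < 2 * π * t := by positivity
  have hexp1 : (2:ℝ) ≤ Real.exp 1 := by nlinarith [Real.add_one_le_exp (1:ℝ)]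
  set A : ℤ := ⌈(1 - 2 * π * s) / (2 * π * t)⌉ with hA
  set B : ℤ := ⌊(-1 - 2 * π * s) / (2 * π * t)⌋ with hB
  have hupper : ∀ m : ℤ, A ≤ m → (1:ℝ)/2 ≤ ‖1 - Complex.exp (2 * (π : ℂ) * I * (ν + μ + (m : ℂ) * τ))‖ := by
    intro m hm
    have h1 : (1 - 2 * π * s) / (2 * π * t) ≤ (m : ℝ) := by
      calc (1 - 2 * π * s) / (2 * π * t) ≤ (A : ℝ) := Int.le_ceil _
        _ ≤ (m : ℝ) := by exact_mod_cast hm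
    have h2 : 1 - 2 * π * s ≤ 2 * π * t * m := by
      rw [div_le_iff₀ hπt] at h1; linarith
    have h3 : -(2 * π) * (s + m * t) ≤ -1 := by nlinarith
    have h4 : ‖Complex.exp (2 * (π : ℂ) * I * (ν + μ + (m : ℂ) * τ))‖ ≤ 1/2 := by
      rw [hw m]
      calc Real.exp (-(2*π)*(s + m*t)) ≤ Real.exp (-1) := Real.exp_le_exp.mpr h3
        _ ≤ 1/2 := by
            rw [Real.exp_neg]
            rw [inv_le_comm₀ (Real.exp_pos 1) (by norm_num)]
            linarith
    calc (1:ℝ)/2 = 1 - 1/2 := by norm_num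
      _ ≤ ‖(1:ℂ)‖ - ‖Complex.exp (2 * (π : ℂ) * I * (ν + μ + (m : ℂ) * τ))‖ := by
          simp only [norm_one]; linarith
      _ ≤ _ := norm_sub_norm_le _ _
  have hlower : ∀ m : ℤ, m ≤ B → (1:ℝ)/2 ≤ ‖1 - Complex.exp (2 * (π : ℂ) * I * (ν + μ + (m : ℂ) * τ))‖ := by
    intro m hm
    have h1 : (m : ℝ) ≤ (-1 - 2 * π * s) / (2 * π * t) := by
      calc (m : ℝ) ≤ (B : ℝ) := by exact_mod_cast hm
        _ ≤ _ := Int.floor_le _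
    have h2 : 2 * π * t * m ≤ -1 - 2 * π * s := by
      rw [le_div_iff₀ hπt] at h1; linarith
    have h3 : (1:ℝ) ≤ -(2 * π) * (s + m * t) := by nlinarith
    have h4 : (2:ℝ) ≤ ‖Complex.exp (2 * (π : ℂ) * I * (ν + μ + (m : ℂ) * τ))‖ := by
      rw [hw m]
      calc (2:ℝ) ≤ Real.exp 1 := hexp1
        _ ≤ _ := Real.exp_le_exp.mpr h3
    calc (1:ℝ)/2 ≤ 2 - ‖(1:ℂ)‖ := by simp only [norm_one]; norm_num
      _ ≤ ‖Complex.exp (2 * (π : ℂ) * I * (ν + μ + (m : ℂ) * τ))‖ - ‖(1:ℂ)‖ := by linarith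
      _ ≤ ‖Complex.exp (2 * (π : ℂ) * I * (ν + μ + (m : ℂ) * τ)) - 1‖ := norm_sub_norm_le _ _
      _ = ‖1 - Complex.exp (2 * (π : ℂ) * I * (ν + μ + (m : ℂ) * τ))‖ := norm_sub_rev _ _
  set T : Finset ℤ := Finset.Ioo B A with hT
  rcases T.eq_empty_or_nonempty with hTe | hTne
  · refine ⟨1/2, by norm_num, fun m => ?_⟩
    rcases le_or_gt A m with hm | hm
    · exact hupper m hm
    · refine hlower m ?_
      by_contra hc
      have : m ∈ T := by rw [hT]; simp only [Finset.mem_Ioo]; omega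
      simp [hTe] at this
  · set δ₁ := T.inf' hTne (fun m => ‖1 - Complex.exp (2 * (π : ℂ) * I * (ν + μ + (m : ℂ) * τ))‖) with hδ₁
    refine ⟨min (1/2) δ₁, ?_, fun m => ?_⟩
    · refine lt_min (by norm_num) ?_
      rw [hδ₁, Finset.lt_inf'_iff]
      intro b _
      exact norm_pos_iff.mpr (sub_ne_zero.mpr fun hc => denomD_ne_zero τ ν μ h b (by rw [hc]; ring))
    · rcases le_or_gt A m with hm | hm
      · exact le_trans (min_le_left _ _) (hupper m hm)
      · rcases le_or_gt m B with hm' | hm'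
        · exact le_trans (min_le_left _ _) (hlower m hm')
        · refine le_trans (min_le_right _ _) ?_
          exact Finset.inf'_le _ (by rw [hT]; simp only [Finset.mem_Ioo]; exact ⟨hm', hm⟩)

lemma summable_term (ℓ : ℕ) (hℓ : 0 < ℓ) (τ ν μ : ℂ) (hτ : 0 < τ.im)
    (h : ∀ m n : ℤ, ν + μ ≠ (m : ℂ) * τ + (n : ℂ)) (c : ℂ) :
    Summable (fun m : ℤ =>
      Complex.exp ((π : ℂ) * I * (m : ℂ) ^ 2 * ℓ * τ + 2 * (π : ℂ) * I * (m : ℂ) * c) /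
        (1 - Complex.exp (2 * (π : ℂ) * I * (ν + μ + (m : ℂ) * τ)))) := by
  obtain ⟨δ, hδ, hδle⟩ := denom_lb τ ν μ hτ h
  have him : 0 < ((ℓ : ℂ) * τ).im := by
    have : ((ℓ : ℂ) * τ).im = (ℓ : ℝ) * τ.im := by
      simp [Complex.mul_im]
    rw [this]
    exact mul_pos (by exact_mod_cast hℓ) hτ
  have hnum : Summable (fun m : ℤ => jacobiTheta₂_term m c ((ℓ : ℂ) * τ)) :=
    (summable_jacobiTheta₂_term_iff c ((ℓ : ℂ) * τ)).mpr him
  have hnum' : Summable (fun m : ℤ => ‖jacobiTheta₂_term m c ((ℓ : ℂ) * τ)‖) := hnum.norm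
  rw [← summable_norm_iff]
  refine Summable.of_nonneg_of_le (fun m => norm_nonneg _) (fun m => ?_) (hnum'.mul_left δ⁻¹)
  have hexp : Complex.exp ((π : ℂ) * I * (m : ℂ) ^ 2 * ℓ * τ + 2 * (π : ℂ) * I * (m : ℂ) * c)
      = jacobiTheta₂_term m c ((ℓ : ℂ) * τ) := by
    rw [jacobiTheta₂_term]; congr 1; ring
  rw [norm_div, hexp, inv_mul_eq_div]
  exact div_le_div_of_nonneg_left (norm_nonneg _) hδ (hδle m)

lemma Sfun_appell (ℓ : ℕ) (hℓ : 0 < ℓ) (τ ν μ x : ℂ) :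
    appellK ℓ τ (ν - x / (ℓ : ℂ) * τ) (μ + x / (ℓ : ℂ) * τ) = Sfun ℓ τ ν μ x := by
  have hℓ' : (ℓ : ℂ) ≠ 0 := Nat.cast_ne_zero.mpr hℓ.ne'
  unfold appellK Sfun
  apply tsum_congr
  intro m
  have e1 : (π : ℂ) * I * (m : ℂ) ^ 2 * ℓ * τ +
      2 * (π : ℂ) * I * (m : ℂ) * ℓ * (ν - x / (ℓ : ℂ) * τ)
      = (π : ℂ) * I * (m : ℂ) ^ 2 * ℓ * τ +
      2 * (π : ℂ) * I * (m : ℂ) * ((ℓ : ℂ) * ν - x * τ) := by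
    field_simp
  have e2 : (ν - x / (ℓ : ℂ) * τ) + (μ + x / (ℓ : ℂ) * τ) + (m : ℂ) * τ
      = ν + μ + (m : ℂ) * τ := by ring
  rw [e1, e2]

lemma Sfun_step (ℓ : ℕ) (hℓ : 0 < ℓ) (τ ν μ : ℂ) (hτ : 0 < τ.im)
    (h : ∀ m n : ℤ, ν + μ ≠ (m : ℂ) * τ + (n : ℂ)) (x : ℂ) :
    Sfun ℓ τ ν μ x = Complex.exp (2 * (π : ℂ) * I * (ν + μ)) * Sfun ℓ τ ν μ (x - 1) +
      theta ((ℓ : ℂ) * τ) ((ℓ : ℂ) * ν - x * τ) := by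
  have hS1 := summable_term ℓ hℓ τ ν μ hτ h ((ℓ : ℂ) * ν - x * τ)
  have hS2 := summable_term ℓ hℓ τ ν μ hτ h ((ℓ : ℂ) * ν - (x - 1) * τ)
  have key : ∀ m : ℤ,
      Complex.exp ((π : ℂ) * I * (m : ℂ) ^ 2 * ℓ * τ +
          2 * (π : ℂ) * I * (m : ℂ) * ((ℓ : ℂ) * ν - x * τ)) /
        (1 - Complex.exp (2 * (π : ℂ) * I * (ν + μ + (m : ℂ) * τ)))
      - Complex.exp (2 * (π : ℂ) * I * (ν + μ)) *
        (Complex.exp ((π : ℂ) * I * (m : ℂ) ^ 2 * ℓ * τ +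
            2 * (π : ℂ) * I * (m : ℂ) * ((ℓ : ℂ) * ν - (x - 1) * τ)) /
          (1 - Complex.exp (2 * (π : ℂ) * I * (ν + μ + (m : ℂ) * τ))))
      = Complex.exp ((π : ℂ) * I * (m : ℂ) ^ 2 * ((ℓ : ℂ) * τ) +
          2 * (π : ℂ) * I * (m : ℂ) * ((ℓ : ℂ) * ν - x * τ)) := by
    intro m
    have hD := denomD_ne_zero τ ν μ h m
    have h1 : Complex.exp (2 * (π : ℂ) * I * (ν + μ)) *
        Complex.exp ((π : ℂ) * I * (m : ℂ) ^ 2 * ℓ * τ +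
          2 * (π : ℂ) * I * (m : ℂ) * ((ℓ : ℂ) * ν - (x - 1) * τ))
        = Complex.exp ((π : ℂ) * I * (m : ℂ) ^ 2 * ℓ * τ +
            2 * (π : ℂ) * I * (m : ℂ) * ((ℓ : ℂ) * ν - x * τ)) *
          Complex.exp (2 * (π : ℂ) * I * (ν + μ + (m : ℂ) * τ)) := by
      rw [← Complex.exp_add, ← Complex.exp_add]
      congr 1
      ring
    have h2 : Complex.exp ((π : ℂ) * I * (m : ℂ) ^ 2 * ((ℓ : ℂ) * τ) +
          2 * (π : ℂ) * I * (m : ℂ) * ((ℓ : ℂ) * ν - x * τ))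
        = Complex.exp ((π : ℂ) * I * (m : ℂ) ^ 2 * ℓ * τ +
          2 * (π : ℂ) * I * (m : ℂ) * ((ℓ : ℂ) * ν - x * τ)) := by
      congr 1; ring
    rw [h2]
    rw [mul_div_assoc', div_sub_div_same, div_eq_iff hD]
    linear_combination -h1
  have hsub : Sfun ℓ τ ν μ x - Complex.exp (2 * (π : ℂ) * I * (ν + μ)) * Sfun ℓ τ ν μ (x - 1)
      = theta ((ℓ : ℂ) * τ) ((ℓ : ℂ) * ν - x * τ) := by
    unfold Sfun theta
    rw [← tsum_mul_left, ← Summable.tsum_sub hS1 (hS2.mul_left _)]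
    exact tsum_congr key
  linear_combination hsub

lemma appellK_eq_Sfun_zero (ℓ : ℕ) (hℓ : 0 < ℓ) (τ ν μ : ℂ) :
    appellK ℓ τ ν μ = Sfun ℓ τ ν μ 0 := by
  have h0 := Sfun_appell ℓ hℓ τ ν μ 0
  simpa using h0

lemma main_pos (ℓ : ℕ) (hℓ : 0 < ℓ) (τ ν μ : ℂ) (hτ : 0 < τ.im)
    (h : ∀ m n : ℤ, ν + μ ≠ (m : ℂ) * τ + (n : ℂ)) :
    ∀ n : ℤ, 0 ≤ n → Sfun ℓ τ ν μ (n : ℂ) =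
      Complex.exp (2 * (π : ℂ) * I * (n : ℂ) * (ν + μ)) * Sfun ℓ τ ν μ 0 +
      ∑ r ∈ Finset.Icc (1 : ℤ) n,
        Complex.exp (2 * (π : ℂ) * I * ((n : ℂ) - (r : ℂ)) * (ν + μ)) *
          theta ((ℓ : ℂ) * τ) ((ℓ : ℂ) * ν - (r : ℂ) * τ) := by
  refine Int.le_induction ?_ ?_
  · norm_num [Finset.Icc_eq_empty (show ¬(1:ℤ) ≤ 0 by omega)]
  · intro n hn ih
    have hc : ((n + 1 : ℤ) : ℂ) = (n : ℂ) + 1 := by push_cast; ring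
    have hstep := Sfun_step ℓ hℓ τ ν μ hτ h ((n : ℂ) + 1)
    rw [show ((n : ℂ) + 1 - 1) = (n : ℂ) by ring] at hstep
    have hins : Finset.Icc (1 : ℤ) (n + 1) = insert (n + 1) (Finset.Icc 1 n) := by
      ext i
      simp only [Finset.mem_Icc, Finset.mem_insert]
      omega
    rw [hc, hstep, ih, hins,
      Finset.sum_insert (by simp only [Finset.mem_Icc]; omega), hc]
    have hE : Complex.exp (2 * (π : ℂ) * I * (ν + μ)) *
        Complex.exp (2 * (π : ℂ) * I * (n : ℂ) * (ν + μ))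
        = Complex.exp (2 * (π : ℂ) * I * ((n : ℂ) + 1) * (ν + μ)) := by
      rw [← Complex.exp_add]; congr 1; ring
    have h2 : Complex.exp (2 * (π : ℂ) * I * (((n : ℂ) + 1) - ((n : ℂ) + 1)) * (ν + μ)) = 1 := by
      rw [show (2 * (π : ℂ) * I * (((n : ℂ) + 1) - ((n : ℂ) + 1)) * (ν + μ)) = 0 by ring]
      exact Complex.exp_zero
    have hsum : ∀ r ∈ Finset.Icc (1 : ℤ) n,
        Complex.exp (2 * (π : ℂ) * I * (ν + μ)) *
          (Complex.exp (2 * (π : ℂ) * I * ((n : ℂ) - (r : ℂ)) * (ν + μ)) *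
            theta ((ℓ : ℂ) * τ) ((ℓ : ℂ) * ν - (r : ℂ) * τ))
        = Complex.exp (2 * (π : ℂ) * I * (((n : ℂ) + 1) - (r : ℂ)) * (ν + μ)) *
            theta ((ℓ : ℂ) * τ) ((ℓ : ℂ) * ν - (r : ℂ) * τ) := by
      intro r _
      rw [← mul_assoc, ← Complex.exp_add]
      congr 2
      ring
    have hcomb : Complex.exp (2 * (π : ℂ) * I * (ν + μ)) *
        ∑ r ∈ Finset.Icc (1 : ℤ) n,
          Complex.exp (2 * (π : ℂ) * I * ((n : ℂ) - (r : ℂ)) * (ν + μ)) *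
            theta ((ℓ : ℂ) * τ) ((ℓ : ℂ) * ν - (r : ℂ) * τ)
        = ∑ r ∈ Finset.Icc (1 : ℤ) n,
          Complex.exp (2 * (π : ℂ) * I * (((n : ℂ) + 1) - (r : ℂ)) * (ν + μ)) *
            theta ((ℓ : ℂ) * τ) ((ℓ : ℂ) * ν - (r : ℂ) * τ) := by
      rw [Finset.mul_sum]
      exact Finset.sum_congr rfl hsum
    linear_combination hE * Sfun ℓ τ ν μ 0 -
      h2 * theta ((ℓ : ℂ) * τ) ((ℓ : ℂ) * ν - ((n : ℂ) + 1) * τ) + hcomb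

lemma main_neg (ℓ : ℕ) (hℓ : 0 < ℓ) (τ ν μ : ℂ) (hτ : 0 < τ.im)
    (h : ∀ m n : ℤ, ν + μ ≠ (m : ℂ) * τ + (n : ℂ)) :
    ∀ n : ℤ, n ≤ 0 → Sfun ℓ τ ν μ (n : ℂ) =
      Complex.exp (2 * (π : ℂ) * I * (n : ℂ) * (ν + μ)) * Sfun ℓ τ ν μ 0 -
      ∑ r ∈ Finset.Icc (n + 1) (0 : ℤ),
        Complex.exp (2 * (π : ℂ) * I * ((n : ℂ) - (r : ℂ)) * (ν + μ)) *
          theta ((ℓ : ℂ) * τ) ((ℓ : ℂ) * ν - (r : ℂ) * τ) := by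
  refine Int.le_induction_down ?_ ?_
  · norm_num [Finset.Icc_eq_empty (show ¬(0 + 1 : ℤ) ≤ 0 by omega)]
  · intro n hn ih
    have hc : ((n - 1 : ℤ) : ℂ) = (n : ℂ) - 1 := by push_cast; ring
    have hstep := Sfun_step ℓ hℓ τ ν μ hτ h (n : ℂ)
    have hL : Complex.exp (2 * (π : ℂ) * I * (ν + μ)) * Sfun ℓ τ ν μ ((n : ℂ) - 1)
        = Sfun ℓ τ ν μ (n : ℂ) - theta ((ℓ : ℂ) * τ) ((ℓ : ℂ) * ν - (n : ℂ) * τ) := by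
      linear_combination -hstep
    have hins : Finset.Icc (n - 1 + 1) (0 : ℤ) = insert n (Finset.Icc (n + 1) 0) := by
      ext i
      simp only [Finset.mem_Icc, Finset.mem_insert]
      omega
    apply mul_left_cancel₀ (Complex.exp_ne_zero (2 * (π : ℂ) * I * (ν + μ)))
    rw [hc, hL, ih, hins,
      Finset.sum_insert (by simp only [Finset.mem_Icc]; omega)]
    have hE : Complex.exp (2 * (π : ℂ) * I * (ν + μ)) *
        Complex.exp (2 * (π : ℂ) * I * ((n : ℂ) - 1) * (ν + μ))
        = Complex.exp (2 * (π : ℂ) * I * (n : ℂ) * (ν + μ)) := by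
      rw [← Complex.exp_add]; congr 1; ring
    have hθ : Complex.exp (2 * (π : ℂ) * I * (ν + μ)) *
        (Complex.exp (2 * (π : ℂ) * I * (((n : ℂ) - 1) - (n : ℂ)) * (ν + μ)) *
          theta ((ℓ : ℂ) * τ) ((ℓ : ℂ) * ν - (n : ℂ) * τ))
        = theta ((ℓ : ℂ) * τ) ((ℓ : ℂ) * ν - (n : ℂ) * τ) := by
      rw [← mul_assoc, ← Complex.exp_add,
        show (2 * (π : ℂ) * I * (ν + μ) + 2 * (π : ℂ) * I * (((n : ℂ) - 1) - (n : ℂ)) * (ν + μ)) = 0 by ring,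
        Complex.exp_zero, one_mul]
    have hsum : ∀ r ∈ Finset.Icc (n + 1) (0 : ℤ),
        Complex.exp (2 * (π : ℂ) * I * (ν + μ)) *
          (Complex.exp (2 * (π : ℂ) * I * (((n : ℂ) - 1) - (r : ℂ)) * (ν + μ)) *
            theta ((ℓ : ℂ) * τ) ((ℓ : ℂ) * ν - (r : ℂ) * τ))
        = Complex.exp (2 * (π : ℂ) * I * ((n : ℂ) - (r : ℂ)) * (ν + μ)) *
            theta ((ℓ : ℂ) * τ) ((ℓ : ℂ) * ν - (r : ℂ) * τ) := by
      intro r _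
      rw [← mul_assoc, ← Complex.exp_add]
      congr 2
      ring
    have hcomb : Complex.exp (2 * (π : ℂ) * I * (ν + μ)) *
        ∑ r ∈ Finset.Icc (n + 1) (0 : ℤ),
          Complex.exp (2 * (π : ℂ) * I * (((n : ℂ) - 1) - (r : ℂ)) * (ν + μ)) *
            theta ((ℓ : ℂ) * τ) ((ℓ : ℂ) * ν - (r : ℂ) * τ)
        = ∑ r ∈ Finset.Icc (n + 1) (0 : ℤ),
          Complex.exp (2 * (π : ℂ) * I * ((n : ℂ) - (r : ℂ)) * (ν + μ)) *
            theta ((ℓ : ℂ) * τ) ((ℓ : ℂ) * ν - (r : ℂ) * τ) := by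
      rw [Finset.mul_sum]
      exact Finset.sum_congr rfl hsum
    linear_combination hθ + hcomb - hE * Sfun ℓ τ ν μ 0

theorem appellK_antidiagonal_quasiperiodicity (ℓ : ℕ) (hℓ : 0 < ℓ) (τ ν μ : ℂ)
    (hτ : 0 < τ.im) (h : ∀ m n : ℤ, ν + μ ≠ (m : ℂ) * τ + (n : ℂ)) (n : ℤ) :
    (1 ≤ n →
      appellK ℓ τ (ν - (n : ℂ) / (ℓ : ℂ) * τ) (μ + (n : ℂ) / (ℓ : ℂ) * τ) =
        Complex.exp (2 * (π : ℂ) * I * (n : ℂ) * (ν + μ)) * appellK ℓ τ ν μ +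
        ∑ r ∈ Finset.Icc (1 : ℤ) n,
          Complex.exp (2 * (π : ℂ) * I * ((n : ℂ) - (r : ℂ)) * (ν + μ)) *
            theta ((ℓ : ℂ) * τ) ((ℓ : ℂ) * ν - (r : ℂ) * τ)) ∧
    (n ≤ -1 →
      appellK ℓ τ (ν - (n : ℂ) / (ℓ : ℂ) * τ) (μ + (n : ℂ) / (ℓ : ℂ) * τ) =
        Complex.exp (2 * (π : ℂ) * I * (n : ℂ) * (ν + μ)) * appellK ℓ τ ν μ -
        ∑ r ∈ Finset.Icc (n + 1) (0 : ℤ),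
          Complex.exp (2 * (π : ℂ) * I * ((n : ℂ) - (r : ℂ)) * (ν + μ)) *
            theta ((ℓ : ℂ) * τ) ((ℓ : ℂ) * ν - (r : ℂ) * τ)) := by
  constructor
  · intro hn
    rw [Sfun_appell ℓ hℓ τ ν μ (n : ℂ), appellK_eq_Sfun_zero ℓ hℓ τ ν μ]
    exact main_pos ℓ hℓ τ ν μ hτ h n (by omega)
  · intro hn
    rw [Sfun_appell ℓ hℓ τ ν μ (n : ℂ), appellK_eq_Sfun_zero ℓ hℓ τ ν μ]
    exact main_neg ℓ hℓ τ ν μ hτ h n (by omega)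
end

section
/- Let ℓ be a positive integer, τ ∈ ℍ, and ν, μ ∈ ℂ with ν+μ ∉ ℤτ+ℤ. Then for every integer n ≥ 1: K_ℓ(τ, ν, μ + nτ) = e^{iπ n² ℓ τ + 2iπ n ℓ μ} K_ℓ(τ, ν, μ) + Σ_{j=0}^{ℓn−1} e^{2iπ j(ν+μ) + 2iπ n j τ} ϑ(ℓτ, ℓν + jτ), and for every integer n ≤ −1: K_ℓ(τ, ν, μ + nτ) = e^{iπ n² ℓ τ + 2iπ n ℓ μ} K_ℓ(τ, ν, μ) − Σ_{j=ℓn}^{−1} e^{2iπ j(ν+μ) + 2iπ n j τ} ϑ(ℓτ, ℓν + jτ). -/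
open Complex Real MeasureTheory Finset

namespace AppellAux

lemma theta_term_summable (T z : ℂ) (hT : 0 < T.im) :
    Summable fun m : ℤ => Complex.exp ((π : ℂ) * I * (m : ℂ) ^ 2 * T + 2 * (π : ℂ) * I * (m : ℂ) * z) := by
  have h := (summable_jacobiTheta₂_term_iff z T).mpr hT
  refine h.congr fun m => ?_
  simp only [jacobiTheta₂_term]
  congr 1
  ring

lemma theta_shift (T z : ℂ) (a : ℤ) :
    theta T (z + (a : ℂ) * T) =
      Complex.exp (-(π : ℂ) * I * (a : ℂ) ^ 2 * T - 2 * (π : ℂ) * I * (a : ℂ) * z) * theta T z := by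
  unfold theta
  rw [← tsum_mul_left,
    ← (Equiv.subRight a).tsum_eq
      (fun m : ℤ => Complex.exp ((π : ℂ) * I * (m : ℂ) ^ 2 * T + 2 * (π : ℂ) * I * (m : ℂ) * (z + (a : ℂ) * T)))]
  refine tsum_congr fun m => ?_
  simp only [Equiv.subRight_apply]
  rw [← Complex.exp_add]
  congr 1
  push_cast
  ring

lemma geom_zpow_pos (y : ℂ) (hy0 : y ≠ 0) (hy1 : y ≠ 1) (k : ℕ) :
    y ^ (-(k : ℤ)) / (1 - y) = 1 / (1 - y) + ∑ j ∈ Finset.range k, y ^ ((j : ℤ) - (k : ℤ)) := by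
  have h1 : (1 : ℂ) - y ≠ 0 := sub_ne_zero.mpr (Ne.symm hy1)
  have h2 : y - 1 ≠ 0 := sub_ne_zero.mpr hy1
  have hsum : ∑ j ∈ Finset.range k, y ^ ((j : ℤ) - (k : ℤ))
      = y ^ (-(k : ℤ)) * ((y ^ k - 1) / (y - 1)) := by
    rw [← geom_sum_eq hy1 k, Finset.mul_sum]
    refine Finset.sum_congr rfl fun j _ => ?_
    rw [sub_eq_add_neg, add_comm, zpow_add₀ hy0, zpow_natCast]
  rw [hsum, zpow_neg, zpow_natCast]
  have hp : y ^ k ≠ 0 := pow_ne_zero _ hy0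
  field_simp
  ring

lemma geom_pow_neg (y : ℂ) (hy1 : y ≠ 1) (k : ℕ) :
    y ^ ((k : ℤ)) / (1 - y) = 1 / (1 - y) - ∑ j ∈ Finset.range k, y ^ ((j : ℤ)) := by
  have h1 : (1 : ℂ) - y ≠ 0 := sub_ne_zero.mpr (Ne.symm hy1)
  have h2 : y - 1 ≠ 0 := sub_ne_zero.mpr hy1
  have hsum : ∑ j ∈ Finset.range k, y ^ ((j : ℤ)) = (y ^ k - 1) / (y - 1) := by
    rw [← geom_sum_eq hy1 k]
    exact Finset.sum_congr rfl fun j _ => zpow_natCast y j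
  rw [hsum, zpow_natCast]
  field_simp
  ring

lemma sum_range_shift (g : ℤ → ℂ) (k : ℕ) (a : ℤ) :
    ∑ j ∈ Finset.range k, g (a + (j : ℤ)) = ∑ j ∈ Finset.Icc a (a + (k : ℤ) - 1), g j := by
  refine Finset.sum_nbij' (fun j : ℕ => a + (j : ℤ)) (fun j : ℤ => (j - a).toNat) ?_ ?_ ?_ ?_ ?_
  · intro x hx; simp only [Finset.mem_range] at hx; simp only [Finset.mem_Icc]; omega
  · intro x hx; simp only [Finset.mem_Icc] at hx; simp only [Finset.mem_range]; omega
  · intro x hx; simp only [Finset.mem_range] at hx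
    show ((a + (x : ℤ)) - a).toNat = x; omega
  · intro x hx; simp only [Finset.mem_Icc] at hx
    show a + (((x - a).toNat : ℤ)) = x; omega
  · intro x _; rfl

lemma piece_eq (ℓ : ℕ) (τ ν μ : ℂ) (j m : ℤ) :
    Complex.exp ((π : ℂ) * I * (m : ℂ) ^ 2 * (ℓ : ℂ) * τ + 2 * (π : ℂ) * I * (m : ℂ) * (ℓ : ℂ) * ν) *
      Complex.exp (2 * (π : ℂ) * I * (ν + μ + (m : ℂ) * τ)) ^ j
    = Complex.exp (2 * (π : ℂ) * I * (j : ℂ) * (ν + μ)) *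
      Complex.exp ((π : ℂ) * I * (m : ℂ) ^ 2 * ((ℓ : ℂ) * τ) +
        2 * (π : ℂ) * I * (m : ℂ) * ((ℓ : ℂ) * ν + (j : ℂ) * τ)) := by
  rw [← Complex.exp_int_mul, ← Complex.exp_add, ← Complex.exp_add]
  congr 1
  ring

lemma him (ℓ : ℕ) (hℓ : 0 < ℓ) (τ : ℂ) (hτ : 0 < τ.im) : 0 < ((ℓ : ℂ) * τ).im := by
  have : ((ℓ : ℂ) * τ).im = (ℓ : ℝ) * τ.im := by
    simp [Complex.mul_im]
  rw [this]
  have : 0 < (ℓ : ℝ) := by exact_mod_cast hℓ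
  positivity

lemma piece_summable (ℓ : ℕ) (hℓ : 0 < ℓ) (τ ν μ : ℂ) (hτ : 0 < τ.im) (j : ℤ) :
    Summable fun m : ℤ =>
      Complex.exp ((π : ℂ) * I * (m : ℂ) ^ 2 * (ℓ : ℂ) * τ + 2 * (π : ℂ) * I * (m : ℂ) * (ℓ : ℂ) * ν) *
        Complex.exp (2 * (π : ℂ) * I * (ν + μ + (m : ℂ) * τ)) ^ j := by
  have := (theta_term_summable ((ℓ : ℂ) * τ) ((ℓ : ℂ) * ν + (j : ℂ) * τ) (him ℓ hℓ τ hτ)).mul_left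
    (Complex.exp (2 * (π : ℂ) * I * (j : ℂ) * (ν + μ)))
  exact this.congr fun m => (piece_eq ℓ τ ν μ j m).symm

lemma piece_tsum (ℓ : ℕ) (τ ν μ : ℂ) (j : ℤ) :
    (∑' m : ℤ,
      Complex.exp ((π : ℂ) * I * (m : ℂ) ^ 2 * (ℓ : ℂ) * τ + 2 * (π : ℂ) * I * (m : ℂ) * (ℓ : ℂ) * ν) *
        Complex.exp (2 * (π : ℂ) * I * (ν + μ + (m : ℂ) * τ)) ^ j)
    = Complex.exp (2 * (π : ℂ) * I * (j : ℂ) * (ν + μ)) * theta ((ℓ : ℂ) * τ) ((ℓ : ℂ) * ν + (j : ℂ) * τ) := by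
  unfold theta
  rw [← tsum_mul_left]
  exact tsum_congr fun m => piece_eq ℓ τ ν μ j m

lemma keyId (ℓ : ℕ) (τ ν μ : ℂ) (n j : ℤ) :
    Complex.exp ((π : ℂ) * I * (n : ℂ) ^ 2 * (ℓ : ℂ) * τ + 2 * (π : ℂ) * I * (n : ℂ) * (ℓ : ℂ) * μ) *
      (Complex.exp (2 * (π : ℂ) * I * ((j - (ℓ : ℤ) * n : ℤ) : ℂ) * (ν + μ)) *
        theta ((ℓ : ℂ) * τ) ((ℓ : ℂ) * ν + ((j - (ℓ : ℤ) * n : ℤ) : ℂ) * τ))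
    = Complex.exp (2 * (π : ℂ) * I * (j : ℂ) * (ν + μ) + 2 * (π : ℂ) * I * (n : ℂ) * (j : ℂ) * τ) *
        theta ((ℓ : ℂ) * τ) ((ℓ : ℂ) * ν + (j : ℂ) * τ) := by
  have harg : (ℓ : ℂ) * ν + ((j - (ℓ : ℤ) * n : ℤ) : ℂ) * τ
      = ((ℓ : ℂ) * ν + (j : ℂ) * τ) + ((-n : ℤ) : ℂ) * ((ℓ : ℂ) * τ) := by
    push_cast
    ring
  rw [harg, theta_shift]
  have comb : ∀ a b c θ : ℂ, Complex.exp a * (Complex.exp b * (Complex.exp c * θ))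
      = Complex.exp (a + b + c) * θ := by
    intro a b c θ
    rw [Complex.exp_add, Complex.exp_add]
    ring
  rw [comb]
  congr 1
  push_cast
  ring

lemma ynorm (τ ν μ : ℂ) (m : ℤ) :
    ‖Complex.exp (2 * (π : ℂ) * I * (ν + μ + (m : ℂ) * τ))‖
      = Real.exp (-(2 * π * ((ν + μ).im + (m : ℝ) * τ.im))) := by
  rw [Complex.norm_exp]
  congr 1
  simp [Complex.mul_re, Complex.mul_im, Complex.add_re, Complex.add_im]

lemma yne_one (τ ν μ : ℂ) (h : ∀ m n : ℤ, ν + μ ≠ (m : ℂ) * τ + (n : ℂ)) (m : ℤ) :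
    Complex.exp (2 * (π : ℂ) * I * (ν + μ + (m : ℂ) * τ)) ≠ 1 := by
  intro hc
  rw [Complex.exp_eq_one_iff] at hc
  obtain ⟨k, hk⟩ := hc
  have h2pi : (2 * (π : ℂ) * I) ≠ 0 :=
    mul_ne_zero (mul_ne_zero two_ne_zero (Complex.ofReal_ne_zero.mpr Real.pi_ne_zero))
      Complex.I_ne_zero
  have h3 : (2 * (π : ℂ) * I) * (ν + μ + (m : ℂ) * τ) = (2 * (π : ℂ) * I) * (k : ℂ) := by
    linear_combination hk
  have h4 := mul_left_cancel₀ h2pi h3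
  exact h ((-m : ℤ)) k (by push_cast; linear_combination h4)

lemma appell_summable (ℓ : ℕ) (hℓ : 0 < ℓ) (τ ν μ : ℂ) (hτ : 0 < τ.im)
    (hden : ∀ m : ℤ, (1 : ℂ) - Complex.exp (2 * (π : ℂ) * I * (ν + μ + (m : ℂ) * τ)) ≠ 0) :
    Summable fun m : ℤ =>
      Complex.exp ((π : ℂ) * I * (m : ℂ) ^ 2 * (ℓ : ℂ) * τ + 2 * (π : ℂ) * I * (m : ℂ) * (ℓ : ℂ) * ν) /
        (1 - Complex.exp (2 * (π : ℂ) * I * (ν + μ + (m : ℂ) * τ))) := by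
  set A : ℤ → ℂ := fun m =>
    Complex.exp ((π : ℂ) * I * (m : ℂ) ^ 2 * (ℓ : ℂ) * τ + 2 * (π : ℂ) * I * (m : ℂ) * (ℓ : ℂ) * ν)
    with hA
  set y : ℤ → ℂ := fun m => Complex.exp (2 * (π : ℂ) * I * (ν + μ + (m : ℂ) * τ)) with hy
  have hAnorm : Summable fun m : ℤ => ‖A m‖ := by
    refine summable_norm_iff.mpr ?_
    refine (theta_term_summable ((ℓ : ℂ) * τ) ((ℓ : ℂ) * ν) (him ℓ hℓ τ hτ)).congr fun m => ?_
    simp only [hA]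
    congr 1
    ring
  set c : ℝ := (ν + μ).im with hc
  set t : ℝ := τ.im with ht
  have ht0 : 0 < t := hτ
  set M : ℤ := max 1 ⌈(1 + |c|) / t⌉ with hM
  have hMt : 1 + |c| ≤ (M : ℝ) * t := by
    have h1 : (1 + |c|) / t ≤ (⌈(1 + |c|) / t⌉ : ℝ) := Int.le_ceil _
    have h2 : (⌈(1 + |c|) / t⌉ : ℝ) ≤ (M : ℝ) := by
      exact_mod_cast le_max_right 1 ⌈(1 + |c|) / t⌉
    calc 1 + |c| = ((1 + |c|) / t) * t := by field_simp
    _ ≤ (M : ℝ) * t := by nlinarith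
  have key : ∀ m : ℤ, m ∉ Finset.Icc (-M) M → (1 : ℝ) / 2 ≤ ‖1 - y m‖ := by
    intro m hm
    simp only [Finset.mem_Icc, not_and_or, not_le] at hm
    have hyn : ‖y m‖ = Real.exp (-(2 * π * (c + (m : ℝ) * t))) := ynorm τ ν μ m
    have hpi : (1 : ℝ) ≤ 2 * π := by nlinarith [Real.pi_gt_three]
    rcases hm with hm | hm
    · -- m < -M : ‖y m‖ ≥ 2
      have hmM : (m : ℝ) ≤ -(M : ℝ) := by exact_mod_cast (by omega : m ≤ -M)
      have h2 : c + (m : ℝ) * t ≤ -1 := by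
        have : (m : ℝ) * t ≤ -(M : ℝ) * t := by nlinarith
        have hcabs : -|c| ≤ c ∧ c ≤ |c| := ⟨neg_abs_le c, le_abs_self c⟩
        nlinarith
      have h3 : (1 : ℝ) ≤ -(2 * π * (c + (m : ℝ) * t)) := by nlinarith
      have h4 : (2 : ℝ) ≤ ‖y m‖ := by
        rw [hyn]
        calc (2 : ℝ) = 1 + 1 := by norm_num
        _ ≤ Real.exp 1 := Real.add_one_le_exp 1
        _ ≤ Real.exp (-(2 * π * (c + (m : ℝ) * t))) := Real.exp_le_exp.mpr h3
      have := norm_sub_norm_le (y m) (1 : ℂ)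
      rw [norm_one, norm_sub_rev (y m) 1] at this
      linarith
    · -- M < m : ‖y m‖ ≤ 1/2
      have hmM : (M : ℝ) ≤ (m : ℝ) := by exact_mod_cast (by omega : M ≤ m)
      have h2 : (1 : ℝ) ≤ c + (m : ℝ) * t := by
        have : (M : ℝ) * t ≤ (m : ℝ) * t := by nlinarith
        have hcabs : -|c| ≤ c ∧ c ≤ |c| := ⟨neg_abs_le c, le_abs_self c⟩
        nlinarith
      have h3 : -(2 * π * (c + (m : ℝ) * t)) ≤ -1 := by nlinarith
      have h4 : ‖y m‖ ≤ 1 / 2 := by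
        rw [hyn]
        calc Real.exp (-(2 * π * (c + (m : ℝ) * t))) ≤ Real.exp (-1) := Real.exp_le_exp.mpr h3
        _ ≤ 1 / 2 := by
          rw [Real.exp_neg]
          rw [inv_le_comm₀ (Real.exp_pos 1) (by norm_num)]
          norm_num
          nlinarith [Real.add_one_le_exp 1]
      have := norm_sub_norm_le (1 : ℂ) (y m)
      rw [norm_one] at this
      linarith
  rw [← Finset.summable_compl_iff (Finset.Icc (-M) M)]
  refine Summable.of_norm_bounded (g := fun x : {x // x ∉ Finset.Icc (-M) M} => 2 * ‖A x.1‖)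
    ((hAnorm.mul_left 2).subtype _) ?_
  rintro ⟨m, hm⟩
  have hden' : 0 < ‖1 - y m‖ := lt_of_lt_of_le (by norm_num) (key m hm)
  simp only
  rw [norm_div]
  rw [div_le_iff₀ hden']
  have h5 := key m hm
  nlinarith [norm_nonneg (A m)]

lemma core (ℓ : ℕ) (τ ν μ : ℂ) (n : ℤ) :
    appellK ℓ τ ν (μ + (n : ℂ) * τ) =
      Complex.exp ((π : ℂ) * I * (n : ℂ) ^ 2 * (ℓ : ℂ) * τ + 2 * (π : ℂ) * I * (n : ℂ) * (ℓ : ℂ) * μ) *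
        ∑' m : ℤ,
          Complex.exp ((π : ℂ) * I * (m : ℂ) ^ 2 * (ℓ : ℂ) * τ + 2 * (π : ℂ) * I * (m : ℂ) * (ℓ : ℂ) * ν) *
            Complex.exp (2 * (π : ℂ) * I * (ν + μ + (m : ℂ) * τ)) ^ (-((ℓ : ℤ) * n)) /
          (1 - Complex.exp (2 * (π : ℂ) * I * (ν + μ + (m : ℂ) * τ))) := by
  unfold appellK
  rw [← tsum_mul_left]
  calc
    (∑' m : ℤ,
        Complex.exp ((π : ℂ) * I * (m : ℂ) ^ 2 * (ℓ : ℂ) * τ + 2 * (π : ℂ) * I * (m : ℂ) * (ℓ : ℂ) * ν) /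
          (1 - Complex.exp (2 * (π : ℂ) * I * (ν + (μ + (n : ℂ) * τ) + (m : ℂ) * τ))))
      = ∑' m : ℤ, (fun m' : ℤ =>
          Complex.exp ((π : ℂ) * I * ((m' - n : ℤ) : ℂ) ^ 2 * (ℓ : ℂ) * τ +
              2 * (π : ℂ) * I * ((m' - n : ℤ) : ℂ) * (ℓ : ℂ) * ν) /
            (1 - Complex.exp (2 * (π : ℂ) * I * (ν + μ + (m' : ℂ) * τ)))) ((Equiv.addRight n) m) := by
        refine tsum_congr fun m => ?_
        simp only [Equiv.coe_addRight, add_sub_cancel_right]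
        have harg : 2 * (π : ℂ) * I * (ν + (μ + (n : ℂ) * τ) + (m : ℂ) * τ)
            = 2 * (π : ℂ) * I * (ν + μ + ((m + n : ℤ) : ℂ) * τ) := by push_cast; ring
        rw [harg]
    _ = ∑' m : ℤ,
          Complex.exp ((π : ℂ) * I * ((m - n : ℤ) : ℂ) ^ 2 * (ℓ : ℂ) * τ +
              2 * (π : ℂ) * I * ((m - n : ℤ) : ℂ) * (ℓ : ℂ) * ν) /
            (1 - Complex.exp (2 * (π : ℂ) * I * (ν + μ + (m : ℂ) * τ))) :=
        (Equiv.addRight n).tsum_eq (fun m' : ℤ =>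
          Complex.exp ((π : ℂ) * I * ((m' - n : ℤ) : ℂ) ^ 2 * (ℓ : ℂ) * τ +
              2 * (π : ℂ) * I * ((m' - n : ℤ) : ℂ) * (ℓ : ℂ) * ν) /
            (1 - Complex.exp (2 * (π : ℂ) * I * (ν + μ + (m' : ℂ) * τ))))
    _ = ∑' m : ℤ,
          Complex.exp ((π : ℂ) * I * (n : ℂ) ^ 2 * (ℓ : ℂ) * τ + 2 * (π : ℂ) * I * (n : ℂ) * (ℓ : ℂ) * μ) *
            (Complex.exp ((π : ℂ) * I * (m : ℂ) ^ 2 * (ℓ : ℂ) * τ + 2 * (π : ℂ) * I * (m : ℂ) * (ℓ : ℂ) * ν) *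
              Complex.exp (2 * (π : ℂ) * I * (ν + μ + (m : ℂ) * τ)) ^ (-((ℓ : ℤ) * n)) /
            (1 - Complex.exp (2 * (π : ℂ) * I * (ν + μ + (m : ℂ) * τ)))) := by
        refine tsum_congr fun m => ?_
        rw [← mul_div_assoc]
        congr 1
        rw [← Complex.exp_int_mul, ← Complex.exp_add, ← Complex.exp_add]
        congr 1
        push_cast
        ring

end AppellAux

theorem appellK_open_quasiperiodicity (ℓ : ℕ) (hℓ : 0 < ℓ) (τ ν μ : ℂ)
    (hτ : 0 < τ.im) (h : ∀ m n : ℤ, ν + μ ≠ (m : ℂ) * τ + (n : ℂ)) (n : ℤ) :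
    (1 ≤ n →
      appellK ℓ τ ν (μ + (n : ℂ) * τ) =
        Complex.exp ((π : ℂ) * I * (n : ℂ) ^ 2 * ℓ * τ + 2 * (π : ℂ) * I * (n : ℂ) * ℓ * μ) *
          appellK ℓ τ ν μ +
        ∑ j ∈ Finset.Icc (0 : ℤ) ((ℓ : ℤ) * n - 1),
          Complex.exp (2 * (π : ℂ) * I * (j : ℂ) * (ν + μ) + 2 * (π : ℂ) * I * (n : ℂ) * (j : ℂ) * τ) *
            theta ((ℓ : ℂ) * τ) ((ℓ : ℂ) * ν + (j : ℂ) * τ)) ∧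
    (n ≤ -1 →
      appellK ℓ τ ν (μ + (n : ℂ) * τ) =
        Complex.exp ((π : ℂ) * I * (n : ℂ) ^ 2 * ℓ * τ + 2 * (π : ℂ) * I * (n : ℂ) * ℓ * μ) *
          appellK ℓ τ ν μ -
        ∑ j ∈ Finset.Icc ((ℓ : ℤ) * n) (-1 : ℤ),
          Complex.exp (2 * (π : ℂ) * I * (j : ℂ) * (ν + μ) + 2 * (π : ℂ) * I * (n : ℂ) * (j : ℂ) * τ) *
            theta ((ℓ : ℂ) * τ) ((ℓ : ℂ) * ν + (j : ℂ) * τ)) := by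
  have hden : ∀ m : ℤ, (1 : ℂ) - Complex.exp (2 * (π : ℂ) * I * (ν + μ + (m : ℂ) * τ)) ≠ 0 :=
    fun m => sub_ne_zero.mpr (Ne.symm (AppellAux.yne_one τ ν μ h m))
  have hK : Summable fun m : ℤ =>
      Complex.exp ((π : ℂ) * I * (m : ℂ) ^ 2 * (ℓ : ℂ) * τ + 2 * (π : ℂ) * I * (m : ℂ) * (ℓ : ℂ) * ν) /
        (1 - Complex.exp (2 * (π : ℂ) * I * (ν + μ + (m : ℂ) * τ))) :=
    AppellAux.appell_summable ℓ hℓ τ ν μ hτ hden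
  constructor
  · -- positive case
    intro hn
    rw [AppellAux.core ℓ τ ν μ n]
    set k : ℕ := ((ℓ : ℤ) * n).toNat with hkdef
    have hkN : (k : ℤ) = (ℓ : ℤ) * n :=
      Int.toNat_of_nonneg (mul_nonneg (Int.natCast_nonneg ℓ) (by omega))
    have hpt : ∀ m : ℤ,
        Complex.exp ((π : ℂ) * I * (m : ℂ) ^ 2 * (ℓ : ℂ) * τ + 2 * (π : ℂ) * I * (m : ℂ) * (ℓ : ℂ) * ν) *
          Complex.exp (2 * (π : ℂ) * I * (ν + μ + (m : ℂ) * τ)) ^ (-((ℓ : ℤ) * n)) /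
          (1 - Complex.exp (2 * (π : ℂ) * I * (ν + μ + (m : ℂ) * τ)))
        = Complex.exp ((π : ℂ) * I * (m : ℂ) ^ 2 * (ℓ : ℂ) * τ + 2 * (π : ℂ) * I * (m : ℂ) * (ℓ : ℂ) * ν) /
            (1 - Complex.exp (2 * (π : ℂ) * I * (ν + μ + (m : ℂ) * τ))) +
          ∑ j ∈ Finset.range k,
            Complex.exp ((π : ℂ) * I * (m : ℂ) ^ 2 * (ℓ : ℂ) * τ + 2 * (π : ℂ) * I * (m : ℂ) * (ℓ : ℂ) * ν) *
              Complex.exp (2 * (π : ℂ) * I * (ν + μ + (m : ℂ) * τ)) ^ ((j : ℤ) - (k : ℤ)) := by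
      intro m
      rw [← hkN, mul_div_assoc,
        AppellAux.geom_zpow_pos _ (Complex.exp_ne_zero _) (AppellAux.yne_one τ ν μ h m) k,
        mul_add, mul_one_div, Finset.mul_sum]
    rw [tsum_congr hpt]
    have hB' : ∀ j ∈ Finset.range k,
        Summable (fun m : ℤ => Complex.exp ((π : ℂ) * I * (m : ℂ) ^ 2 * (ℓ : ℂ) * τ + 2 * (π : ℂ) * I * (m : ℂ) * (ℓ : ℂ) * ν) * Complex.exp (2 * (π : ℂ) * I * (ν + μ + (m : ℂ) * τ)) ^ ((j : ℤ) - (k : ℤ))) :=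
      fun j _ => AppellAux.piece_summable ℓ hℓ τ ν μ hτ ((j : ℤ) - (k : ℤ))
    have hB : Summable (fun m : ℤ =>
        ∑ j ∈ Finset.range k, Complex.exp ((π : ℂ) * I * (m : ℂ) ^ 2 * (ℓ : ℂ) * τ + 2 * (π : ℂ) * I * (m : ℂ) * (ℓ : ℂ) * ν) * Complex.exp (2 * (π : ℂ) * I * (ν + μ + (m : ℂ) * τ)) ^ ((j : ℤ) - (k : ℤ))) := summable_sum hB'
    have hsplit : (∑' m : ℤ,
          (Complex.exp ((π : ℂ) * I * (m : ℂ) ^ 2 * (ℓ : ℂ) * τ + 2 * (π : ℂ) * I * (m : ℂ) * (ℓ : ℂ) * ν) / (1 - Complex.exp (2 * (π : ℂ) * I * (ν + μ + (m : ℂ) * τ))) +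
            ∑ j ∈ Finset.range k, Complex.exp ((π : ℂ) * I * (m : ℂ) ^ 2 * (ℓ : ℂ) * τ + 2 * (π : ℂ) * I * (m : ℂ) * (ℓ : ℂ) * ν) * Complex.exp (2 * (π : ℂ) * I * (ν + μ + (m : ℂ) * τ)) ^ ((j : ℤ) - (k : ℤ))))
        = (∑' m : ℤ, Complex.exp ((π : ℂ) * I * (m : ℂ) ^ 2 * (ℓ : ℂ) * τ + 2 * (π : ℂ) * I * (m : ℂ) * (ℓ : ℂ) * ν) / (1 - Complex.exp (2 * (π : ℂ) * I * (ν + μ + (m : ℂ) * τ)))) +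
          ∑ j ∈ Finset.range k, ∑' m : ℤ, Complex.exp ((π : ℂ) * I * (m : ℂ) ^ 2 * (ℓ : ℂ) * τ + 2 * (π : ℂ) * I * (m : ℂ) * (ℓ : ℂ) * ν) * Complex.exp (2 * (π : ℂ) * I * (ν + μ + (m : ℂ) * τ)) ^ ((j : ℤ) - (k : ℤ)) :=
      (Summable.tsum_add hK hB).trans (congrArg (HAdd.hAdd _) (Summable.tsum_finsetSum hB'))
    rw [hsplit, mul_add]
    congr 1
    have hstep : ∀ j ∈ Finset.range k,
        Complex.exp ((π : ℂ) * I * (n : ℂ) ^ 2 * (ℓ : ℂ) * τ + 2 * (π : ℂ) * I * (n : ℂ) * (ℓ : ℂ) * μ) *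
          ∑' m : ℤ,
            Complex.exp ((π : ℂ) * I * (m : ℂ) ^ 2 * (ℓ : ℂ) * τ + 2 * (π : ℂ) * I * (m : ℂ) * (ℓ : ℂ) * ν) *
              Complex.exp (2 * (π : ℂ) * I * (ν + μ + (m : ℂ) * τ)) ^ ((j : ℤ) - (k : ℤ))
        = (fun j' : ℤ =>
            Complex.exp (2 * (π : ℂ) * I * (j' : ℂ) * (ν + μ) + 2 * (π : ℂ) * I * (n : ℂ) * (j' : ℂ) * τ) *
              theta ((ℓ : ℂ) * τ) ((ℓ : ℂ) * ν + (j' : ℂ) * τ)) ((0 : ℤ) + (j : ℤ)) := by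
      intro j hj
      rw [AppellAux.piece_tsum ℓ τ ν μ ((j : ℤ) - (k : ℤ))]
      rw [show (j : ℤ) - (k : ℤ) = ((0 : ℤ) + (j : ℤ)) - (ℓ : ℤ) * n by omega]
      exact AppellAux.keyId ℓ τ ν μ n ((0 : ℤ) + (j : ℤ))
    rw [Finset.mul_sum, Finset.sum_congr rfl hstep,
      AppellAux.sum_range_shift
        (fun j' : ℤ =>
          Complex.exp (2 * (π : ℂ) * I * (j' : ℂ) * (ν + μ) + 2 * (π : ℂ) * I * (n : ℂ) * (j' : ℂ) * τ) *
            theta ((ℓ : ℂ) * τ) ((ℓ : ℂ) * ν + (j' : ℂ) * τ)) k 0,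
      show (0 : ℤ) + (k : ℤ) - 1 = (ℓ : ℤ) * n - 1 by omega]
  · -- negative case
    intro hn
    rw [AppellAux.core ℓ τ ν μ n]
    set k : ℕ := (-((ℓ : ℤ) * n)).toNat with hkdef
    have hkN : (k : ℤ) = -((ℓ : ℤ) * n) := by
      refine Int.toNat_of_nonneg ?_
      have h1 : (0 : ℤ) ≤ (ℓ : ℤ) := Int.natCast_nonneg ℓ
      nlinarith
    have hpt : ∀ m : ℤ,
        Complex.exp ((π : ℂ) * I * (m : ℂ) ^ 2 * (ℓ : ℂ) * τ + 2 * (π : ℂ) * I * (m : ℂ) * (ℓ : ℂ) * ν) *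
          Complex.exp (2 * (π : ℂ) * I * (ν + μ + (m : ℂ) * τ)) ^ (-((ℓ : ℤ) * n)) /
          (1 - Complex.exp (2 * (π : ℂ) * I * (ν + μ + (m : ℂ) * τ)))
        = Complex.exp ((π : ℂ) * I * (m : ℂ) ^ 2 * (ℓ : ℂ) * τ + 2 * (π : ℂ) * I * (m : ℂ) * (ℓ : ℂ) * ν) /
            (1 - Complex.exp (2 * (π : ℂ) * I * (ν + μ + (m : ℂ) * τ))) -
          ∑ j ∈ Finset.range k,
            Complex.exp ((π : ℂ) * I * (m : ℂ) ^ 2 * (ℓ : ℂ) * τ + 2 * (π : ℂ) * I * (m : ℂ) * (ℓ : ℂ) * ν) *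
              Complex.exp (2 * (π : ℂ) * I * (ν + μ + (m : ℂ) * τ)) ^ ((j : ℤ)) := by
      intro m
      rw [show -((ℓ : ℤ) * n) = (k : ℤ) from hkN.symm, mul_div_assoc,
        AppellAux.geom_pow_neg _ (AppellAux.yne_one τ ν μ h m) k,
        mul_sub, mul_one_div, Finset.mul_sum]
    rw [tsum_congr hpt]
    have hB' : ∀ j ∈ Finset.range k,
        Summable (fun m : ℤ => Complex.exp ((π : ℂ) * I * (m : ℂ) ^ 2 * (ℓ : ℂ) * τ + 2 * (π : ℂ) * I * (m : ℂ) * (ℓ : ℂ) * ν) * Complex.exp (2 * (π : ℂ) * I * (ν + μ + (m : ℂ) * τ)) ^ ((j : ℤ))) :=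
      fun j _ => AppellAux.piece_summable ℓ hℓ τ ν μ hτ ((j : ℤ))
    have hB : Summable (fun m : ℤ =>
        ∑ j ∈ Finset.range k, Complex.exp ((π : ℂ) * I * (m : ℂ) ^ 2 * (ℓ : ℂ) * τ + 2 * (π : ℂ) * I * (m : ℂ) * (ℓ : ℂ) * ν) * Complex.exp (2 * (π : ℂ) * I * (ν + μ + (m : ℂ) * τ)) ^ ((j : ℤ))) := summable_sum hB'
    have hsplit : (∑' m : ℤ,
          (Complex.exp ((π : ℂ) * I * (m : ℂ) ^ 2 * (ℓ : ℂ) * τ + 2 * (π : ℂ) * I * (m : ℂ) * (ℓ : ℂ) * ν) / (1 - Complex.exp (2 * (π : ℂ) * I * (ν + μ + (m : ℂ) * τ))) -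
            ∑ j ∈ Finset.range k, Complex.exp ((π : ℂ) * I * (m : ℂ) ^ 2 * (ℓ : ℂ) * τ + 2 * (π : ℂ) * I * (m : ℂ) * (ℓ : ℂ) * ν) * Complex.exp (2 * (π : ℂ) * I * (ν + μ + (m : ℂ) * τ)) ^ ((j : ℤ))))
        = (∑' m : ℤ, Complex.exp ((π : ℂ) * I * (m : ℂ) ^ 2 * (ℓ : ℂ) * τ + 2 * (π : ℂ) * I * (m : ℂ) * (ℓ : ℂ) * ν) / (1 - Complex.exp (2 * (π : ℂ) * I * (ν + μ + (m : ℂ) * τ)))) -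
          ∑ j ∈ Finset.range k, ∑' m : ℤ, Complex.exp ((π : ℂ) * I * (m : ℂ) ^ 2 * (ℓ : ℂ) * τ + 2 * (π : ℂ) * I * (m : ℂ) * (ℓ : ℂ) * ν) * Complex.exp (2 * (π : ℂ) * I * (ν + μ + (m : ℂ) * τ)) ^ ((j : ℤ)) :=
      (Summable.tsum_sub hK hB).trans (congrArg (HSub.hSub _) (Summable.tsum_finsetSum hB'))
    rw [hsplit, mul_sub]
    congr 1
    have hstep : ∀ j ∈ Finset.range k,
        Complex.exp ((π : ℂ) * I * (n : ℂ) ^ 2 * (ℓ : ℂ) * τ + 2 * (π : ℂ) * I * (n : ℂ) * (ℓ : ℂ) * μ) *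
          ∑' m : ℤ,
            Complex.exp ((π : ℂ) * I * (m : ℂ) ^ 2 * (ℓ : ℂ) * τ + 2 * (π : ℂ) * I * (m : ℂ) * (ℓ : ℂ) * ν) *
              Complex.exp (2 * (π : ℂ) * I * (ν + μ + (m : ℂ) * τ)) ^ ((j : ℤ))
        = (fun j' : ℤ =>
            Complex.exp (2 * (π : ℂ) * I * (j' : ℂ) * (ν + μ) + 2 * (π : ℂ) * I * (n : ℂ) * (j' : ℂ) * τ) *
              theta ((ℓ : ℂ) * τ) ((ℓ : ℂ) * ν + (j' : ℂ) * τ)) ((ℓ : ℤ) * n + (j : ℤ)) := by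
      intro j hj
      rw [AppellAux.piece_tsum ℓ τ ν μ ((j : ℤ))]
      conv_lhs => rw [show ((j : ℤ)) = ((ℓ : ℤ) * n + (j : ℤ)) - (ℓ : ℤ) * n by ring]
      exact AppellAux.keyId ℓ τ ν μ n ((ℓ : ℤ) * n + (j : ℤ))
    rw [Finset.mul_sum, Finset.sum_congr rfl hstep,
      AppellAux.sum_range_shift
        (fun j' : ℤ =>
          Complex.exp (2 * (π : ℂ) * I * (j' : ℂ) * (ν + μ) + 2 * (π : ℂ) * I * (n : ℂ) * (j' : ℂ) * τ) *
            theta ((ℓ : ℂ) * τ) ((ℓ : ℂ) * ν + (j' : ℂ) * τ)) k ((ℓ : ℤ) * n),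
      show (ℓ : ℤ) * n + (k : ℤ) - 1 = (-1 : ℤ) by omega]
end

section
/- Let ℓ be a positive integer, τ ∈ ℍ, and ν, μ ∈ ℂ with ν+μ ∉ ℤτ+ℤ. Then K_ℓ(τ, ν, μ) = −K_ℓ(τ, −ν, −μ) + ϑ(ℓτ, ℓν), and K_ℓ(τ, ν, μ) = −e^{−2iπ(ν+μ)} K_ℓ(τ, −ν + τ/ℓ, −μ − τ/ℓ). -/
open Complex Real MeasureTheory Finset

section aux

open Filter

/-- Algebraic identity: `A / (1 - q⁻¹) = A - A / (1 - q)`. -/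
lemma alg_sub (A q : ℂ) (h0 : q ≠ 0) (h1 : q ≠ 1) :
    A / (1 - q⁻¹) = A - A / (1 - q) := by
  have hd : (1 : ℂ) - q ≠ 0 := sub_ne_zero.mpr (Ne.symm h1)
  have hdi : (1 : ℂ) - q⁻¹ ≠ 0 := by
    rw [sub_ne_zero]
    intro hc
    exact h1 (by rw [← inv_inv q, ← hc, inv_one])
  have h2 : (-1 : ℂ) + q ≠ 0 := fun hc => h1 (by linear_combination hc)
  field_simp
  ring

/-- Algebraic identity: `-(A * q⁻¹) / (1 - q⁻¹) = A / (1 - q)`. -/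
lemma alg_shift (A q : ℂ) (h0 : q ≠ 0) (h1 : q ≠ 1) :
    -(A * q⁻¹) / (1 - q⁻¹) = A / (1 - q) := by
  have hd : (1 : ℂ) - q ≠ 0 := sub_ne_zero.mpr (Ne.symm h1)
  have hdi : (1 : ℂ) - q⁻¹ ≠ 0 := by
    rw [sub_ne_zero]
    intro hc
    exact h1 (by rw [← inv_inv q, ← hc, inv_one])
  have h2 : (-q : ℂ) + q ^ 2 ≠ 0 := by
    intro hc
    have h3 : q * (q - 1) = 0 := by linear_combination hc
    rcases mul_eq_zero.mp h3 with h | h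
    · exact h0 h
    · exact h1 (by linear_combination h)
  field_simp
  ring

/-- The Appell numerator terms are summable. -/
lemma appell_num_summable (ℓ : ℕ) (hℓ : 0 < ℓ) (τ ν : ℂ) (hτ : 0 < τ.im) :
    Summable (fun m : ℤ => Complex.exp ((π : ℂ) * I * (m : ℂ) ^ 2 * ℓ * τ +
        2 * (π : ℂ) * I * (m : ℂ) * ℓ * ν)) := by
  have him : 0 < ((ℓ : ℂ) * τ).im := by
    simp only [Complex.mul_im, Complex.natCast_re, Complex.natCast_im, zero_mul, add_zero]
    positivity
  have hs := (summable_jacobiTheta₂_term_iff ((ℓ : ℂ) * ν) ((ℓ : ℂ) * τ)).mpr him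
  refine hs.congr fun m => ?_
  unfold jacobiTheta₂_term
  congr 1
  ring

lemma appell_denom_ne_one (τ ν μ : ℂ)
    (h : ∀ m n : ℤ, ν + μ ≠ (m : ℂ) * τ + (n : ℂ)) (m : ℤ) :
    Complex.exp (2 * (π : ℂ) * I * (ν + μ + (m : ℂ) * τ)) ≠ 1 := by
  intro hc
  rw [Complex.exp_eq_one_iff] at hc
  obtain ⟨n, hn⟩ := hc
  apply h (-m) n
  have h2 : ν + μ + (m : ℂ) * τ = n := by
    apply mul_left_cancel₀ Complex.two_pi_I_ne_zero
    linear_combination hn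
  push_cast
  linear_combination h2

/-- The Appell summands are summable. -/
lemma appell_summable (ℓ : ℕ) (hℓ : 0 < ℓ) (τ ν μ : ℂ) (hτ : 0 < τ.im)
    (h : ∀ m n : ℤ, ν + μ ≠ (m : ℂ) * τ + (n : ℂ)) :
    Summable (fun m : ℤ => Complex.exp ((π : ℂ) * I * (m : ℂ) ^ 2 * ℓ * τ +
        2 * (π : ℂ) * I * (m : ℂ) * ℓ * ν) /
      (1 - Complex.exp (2 * (π : ℂ) * I * (ν + μ + (m : ℂ) * τ)))) := by
  have ha : Summable (fun m : ℤ => Complex.exp ((π : ℂ) * I * (m : ℂ) ^ 2 * ℓ * τ +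
      2 * (π : ℂ) * I * (m : ℂ) * ℓ * ν)) := appell_num_summable ℓ hℓ τ ν hτ
  have habs : ∀ m : ℤ, ‖Complex.exp (2 * (π : ℂ) * I * (ν + μ + (m : ℂ) * τ))‖
      = Real.exp (-2 * π * ((ν + μ).im + (m : ℝ) * τ.im)) := by
    intro m
    rw [Complex.norm_exp]
    congr 1
    simp [Complex.mul_re, Complex.mul_im, Complex.add_re, Complex.add_im]
  have hneg : (-2 : ℝ) * π * τ.im < 0 := by nlinarith [Real.pi_pos]
  refine Summable.of_norm_bounded_eventually
    (g := fun (m : ℤ) => 2 * ‖Complex.exp ((π : ℂ) * I * (m : ℂ) ^ 2 * ℓ * τ +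
      2 * (π : ℂ) * I * (m : ℂ) * ℓ * ν)‖) (ha.norm.mul_left 2) ?_
  have hev : ∀ᶠ m : ℤ in cofinite,
      ‖Complex.exp (2 * (π : ℂ) * I * (ν + μ + (m : ℂ) * τ))‖ < 1/2 ∨
      2 < ‖Complex.exp (2 * (π : ℂ) * I * (ν + μ + (m : ℂ) * τ))‖ := by
    rw [Int.cofinite_eq, eventually_sup]
    constructor
    · -- atBot : the norm tends to ∞
      have ht : Tendsto (fun m : ℤ => -2 * π * ((ν + μ).im + (m : ℝ) * τ.im)) atBot atTop := by
        have h2 : Tendsto (fun m : ℤ => (-2 * π * τ.im) * (m : ℝ)) atBot atTop :=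
          (tendsto_const_mul_atTop_of_neg hneg).mpr (tendsto_intCast_atBot_iff.2 tendsto_id)
        have h3 := tendsto_atTop_add_const_left atBot (-2 * π * (ν + μ).im) h2
        refine h3.congr fun m => ?_
        ring
      have := (Real.tendsto_exp_atTop.comp ht).eventually_gt_atTop 2
      filter_upwards [this] with m hm
      right
      rw [habs m]
      exact hm
    · -- atTop : the norm tends to 0
      have ht : Tendsto (fun m : ℤ => -2 * π * ((ν + μ).im + (m : ℝ) * τ.im)) atTop atBot := by
        have h2 : Tendsto (fun m : ℤ => (-2 * π * τ.im) * (m : ℝ)) atTop atBot :=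
          (tendsto_const_mul_atBot_of_neg hneg).mpr tendsto_intCast_atTop_atTop
        have h3 := tendsto_atBot_add_const_left atTop (-2 * π * (ν + μ).im) h2
        refine h3.congr fun m => ?_
        ring
      have h0 : Tendsto (fun m : ℤ =>
          ‖Complex.exp (2 * (π : ℂ) * I * (ν + μ + (m : ℂ) * τ))‖) atTop (nhds 0) := by
        refine (Real.tendsto_exp_atBot.comp ht).congr fun m => ?_
        rw [habs m]
        rfl
      have := h0.eventually (gt_mem_nhds (by norm_num : (0:ℝ) < 1/2))
      filter_upwards [this] with m hm
      left
      exact hm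
  filter_upwards [hev] with m hm
  rw [norm_div]
  rcases hm with hm | hm
  · have hden : (1:ℝ)/2 ≤ ‖(1:ℂ) - Complex.exp (2 * (π : ℂ) * I * (ν + μ + (m : ℂ) * τ))‖ := by
      have := norm_sub_norm_le (1:ℂ) (Complex.exp (2 * (π : ℂ) * I * (ν + μ + (m : ℂ) * τ)))
      rw [norm_one] at this
      linarith
    rw [div_le_iff₀ (by linarith)]
    nlinarith [norm_nonneg (Complex.exp ((π : ℂ) * I * (m : ℂ) ^ 2 * ℓ * τ +
      2 * (π : ℂ) * I * (m : ℂ) * ℓ * ν))]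
  · have hden : (1:ℝ) ≤ ‖(1:ℂ) - Complex.exp (2 * (π : ℂ) * I * (ν + μ + (m : ℂ) * τ))‖ := by
      have := norm_sub_norm_le (Complex.exp (2 * (π : ℂ) * I * (ν + μ + (m : ℂ) * τ))) (1:ℂ)
      rw [norm_one, ← norm_sub_rev] at this
      linarith
    rw [div_le_iff₀ (by linarith)]
    nlinarith [norm_nonneg (Complex.exp ((π : ℂ) * I * (m : ℂ) ^ 2 * ℓ * τ +
      2 * (π : ℂ) * I * (m : ℂ) * ℓ * ν))]

end aux

theorem appellK_inversion (ℓ : ℕ) (hℓ : 0 < ℓ) (τ ν μ : ℂ) (hτ : 0 < τ.im)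
    (h : ∀ m n : ℤ, ν + μ ≠ (m : ℂ) * τ + (n : ℂ)) :
    appellK ℓ τ ν μ = -appellK ℓ τ (-ν) (-μ) + theta ((ℓ : ℂ) * τ) ((ℓ : ℂ) * ν) ∧
    appellK ℓ τ ν μ =
      -Complex.exp (-2 * (π : ℂ) * I * (ν + μ)) *
        appellK ℓ τ (-ν + τ / (ℓ : ℂ)) (-μ - τ / (ℓ : ℂ)) := by
  have hℓ0 : (ℓ : ℂ) ≠ 0 := Nat.cast_ne_zero.mpr hℓ.ne'
  have hq1 : ∀ m : ℤ, Complex.exp (2 * (π : ℂ) * I * (ν + μ + (m : ℂ) * τ)) ≠ 1 :=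
    appell_denom_ne_one τ ν μ h
  have hq0 : ∀ m : ℤ, Complex.exp (2 * (π : ℂ) * I * (ν + μ + (m : ℂ) * τ)) ≠ 0 :=
    fun m => Complex.exp_ne_zero _
  have ha : Summable (fun m : ℤ => Complex.exp ((π : ℂ) * I * (m : ℂ) ^ 2 * ℓ * τ +
      2 * (π : ℂ) * I * (m : ℂ) * ℓ * ν)) := appell_num_summable ℓ hℓ τ ν hτ
  have hf : Summable (fun m : ℤ => Complex.exp ((π : ℂ) * I * (m : ℂ) ^ 2 * ℓ * τ +
      2 * (π : ℂ) * I * (m : ℂ) * ℓ * ν) /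
      (1 - Complex.exp (2 * (π : ℂ) * I * (ν + μ + (m : ℂ) * τ)))) :=
    appell_summable ℓ hℓ τ ν μ hτ h
  constructor
  · -- first identity
    have hK' : appellK ℓ τ (-ν) (-μ) =
        theta ((ℓ : ℂ) * τ) ((ℓ : ℂ) * ν) - appellK ℓ τ ν μ := by
      rw [appellK, ← (Equiv.neg ℤ).tsum_eq]
      have key : ∀ m : ℤ,
          Complex.exp ((π : ℂ) * I * ((Equiv.neg ℤ m : ℤ) : ℂ) ^ 2 * ℓ * τ +
            2 * (π : ℂ) * I * ((Equiv.neg ℤ m : ℤ) : ℂ) * ℓ * (-ν)) /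
          (1 - Complex.exp (2 * (π : ℂ) * I * (-ν + -μ + ((Equiv.neg ℤ m : ℤ) : ℂ) * τ)))
          = Complex.exp ((π : ℂ) * I * (m : ℂ) ^ 2 * ℓ * τ +
              2 * (π : ℂ) * I * (m : ℂ) * ℓ * ν) -
            Complex.exp ((π : ℂ) * I * (m : ℂ) ^ 2 * ℓ * τ +
              2 * (π : ℂ) * I * (m : ℂ) * ℓ * ν) /
            (1 - Complex.exp (2 * (π : ℂ) * I * (ν + μ + (m : ℂ) * τ))) := by
        intro m
        have e1 : Complex.exp ((π : ℂ) * I * ((Equiv.neg ℤ m : ℤ) : ℂ) ^ 2 * ℓ * τ +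
            2 * (π : ℂ) * I * ((Equiv.neg ℤ m : ℤ) : ℂ) * ℓ * (-ν))
            = Complex.exp ((π : ℂ) * I * (m : ℂ) ^ 2 * ℓ * τ +
              2 * (π : ℂ) * I * (m : ℂ) * ℓ * ν) := by
          congr 1
          simp only [Equiv.neg_apply]
          push_cast
          ring
        have e2 : Complex.exp (2 * (π : ℂ) * I * (-ν + -μ + ((Equiv.neg ℤ m : ℤ) : ℂ) * τ))
            = (Complex.exp (2 * (π : ℂ) * I * (ν + μ + (m : ℂ) * τ)))⁻¹ := by
          rw [← Complex.exp_neg]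
          congr 1
          simp only [Equiv.neg_apply]
          push_cast
          ring
        rw [e1, e2]
        exact alg_sub _ _ (hq0 m) (hq1 m)
      rw [tsum_congr key, ha.tsum_sub hf]
      congr 1
      rw [theta]
      refine tsum_congr fun m => ?_
      congr 1
      ring
    rw [hK']
    ring
  · -- second identity
    rw [appellK, appellK, ← (Equiv.neg ℤ).tsum_eq, ← tsum_mul_left]
    refine tsum_congr fun m => ?_
    simp only [Equiv.neg_apply, Int.cast_neg]
    have hq0' : Complex.exp (2 * (π : ℂ) * I * (ν + μ + -(m : ℂ) * τ)) ≠ 0 :=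
      Complex.exp_ne_zero _
    have hq1' : Complex.exp (2 * (π : ℂ) * I * (ν + μ + -(m : ℂ) * τ)) ≠ 1 := by
      have := hq1 (-m)
      push_cast at this
      exact this
    have e1 : Complex.exp ((π : ℂ) * I * (m : ℂ) ^ 2 * ℓ * τ +
        2 * (π : ℂ) * I * (m : ℂ) * ℓ * (-ν + τ / (ℓ : ℂ)))
        = Complex.exp (2 * (π : ℂ) * I * (ν + μ)) *
          (Complex.exp ((π : ℂ) * I * (-(m : ℂ)) ^ 2 * ℓ * τ +
            2 * (π : ℂ) * I * (-(m : ℂ)) * ℓ * ν) *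
           (Complex.exp (2 * (π : ℂ) * I * (ν + μ + -(m : ℂ) * τ)))⁻¹) := by
      rw [← Complex.exp_neg, ← Complex.exp_add, ← Complex.exp_add]
      congr 1
      field_simp
      ring
    have e2 : Complex.exp (2 * (π : ℂ) * I *
        (-ν + τ / (ℓ : ℂ) + (-μ - τ / (ℓ : ℂ)) + (m : ℂ) * τ))
        = (Complex.exp (2 * (π : ℂ) * I * (ν + μ + -(m : ℂ) * τ)))⁻¹ := by
      rw [← Complex.exp_neg]
      congr 1
      ring
    have e3 : Complex.exp (-2 * (π : ℂ) * I * (ν + μ)) *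
        Complex.exp (2 * (π : ℂ) * I * (ν + μ)) = 1 := by
      rw [← Complex.exp_add]
      rw [show (-2 * (π : ℂ) * I * (ν + μ) + 2 * (π : ℂ) * I * (ν + μ)) = 0 by ring]
      exact Complex.exp_zero
    rw [e1, e2,
      ← alg_shift (Complex.exp ((π : ℂ) * I * (-(m : ℂ)) ^ 2 * ℓ * τ +
          2 * (π : ℂ) * I * (-(m : ℂ)) * ℓ * ν))
        (Complex.exp (2 * (π : ℂ) * I * (ν + μ + -(m : ℂ) * τ))) hq0' hq1']
    linear_combination (Complex.exp ((π : ℂ) * I * (-(m : ℂ)) ^ 2 * ℓ * τ +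
        2 * (π : ℂ) * I * (-(m : ℂ)) * ℓ * ν) *
      (Complex.exp (2 * (π : ℂ) * I * (ν + μ + -(m : ℂ) * τ)))⁻¹ /
      (1 - (Complex.exp (2 * (π : ℂ) * I * (ν + μ + -(m : ℂ) * τ)))⁻¹)) * e3
end

section
/- Let ℓ and u be positive integers, τ ∈ ℍ, and ν, μ ∈ ℂ with ν+μ ∉ ℤτ + (1/u)ℤ. Then K_ℓ(τ, ν, μ) = Σ_{a=0}^{u−1} Σ_{b=0}^{u−1} e^{iπ a² ℓ τ + 2iπ a b τ + 2iπ(aℓ+b)ν + 2iπ b μ} K_ℓ(u²τ, uν + (ua + bu/ℓ)τ, uμ − (bu/ℓ)τ). -/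
open Complex Real MeasureTheory Finset

/- ### Auxiliary lemmas -/

lemma aux_geom_inv (y : ℂ) (u : ℕ) (hy : y ≠ 1) (hyu : y ^ u ≠ 1) :
    (1 - y)⁻¹ = (∑ b ∈ Finset.range u, y ^ b) * (1 - y ^ u)⁻¹ := by
  have h1 : (1 : ℂ) - y ≠ 0 := sub_ne_zero.mpr (Ne.symm hy)
  have h2 : (1 : ℂ) - y ^ u ≠ 0 := sub_ne_zero.mpr (Ne.symm hyu)
  field_simp
  linear_combination geom_sum_mul y u

/-- Summability of theta-like terms. -/
lemma aux_summable_theta (T Z : ℂ) (hT : 0 < T.im) :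
    Summable fun k : ℤ => Complex.exp
      ((π : ℂ) * I * (k : ℂ) ^ 2 * T + 2 * (π : ℂ) * I * (k : ℂ) * Z) := by
  have h := (summable_jacobiTheta₂_term_iff Z T).mpr hT
  refine h.congr fun k => ?_
  rw [jacobiTheta₂_term]
  ring_nf

theorem appellK_period_multiplication (ℓ u : ℕ) (hℓ : 0 < ℓ) (hu : 0 < u)
    (τ ν μ : ℂ) (hτ : 0 < τ.im)
    (h : ∀ m n : ℤ, ν + μ ≠ (m : ℂ) * τ + (n : ℂ) / (u : ℂ)) :
    appellK ℓ τ ν μ =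
      ∑ a ∈ Finset.range u, ∑ b ∈ Finset.range u,
        Complex.exp ((π : ℂ) * I * (a : ℂ) ^ 2 * ℓ * τ + 2 * (π : ℂ) * I * (a : ℂ) * (b : ℂ) * τ +
            2 * (π : ℂ) * I * ((a : ℂ) * ℓ + (b : ℂ)) * ν + 2 * (π : ℂ) * I * (b : ℂ) * μ) *
          appellK ℓ ((u : ℂ) ^ 2 * τ)
            ((u : ℂ) * ν + ((u : ℂ) * (a : ℂ) + (b : ℂ) * (u : ℂ) / (ℓ : ℂ)) * τ)
            ((u : ℂ) * μ - (b : ℂ) * (u : ℂ) / (ℓ : ℂ) * τ) := by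
  haveI : NeZero u := ⟨hu.ne'⟩
  have huC : (u : ℂ) ≠ 0 := Nat.cast_ne_zero.mpr hu.ne'
  have hℓC : (ℓ : ℂ) ≠ 0 := Nat.cast_ne_zero.mpr hℓ.ne'
  have hπ : (π : ℂ) ≠ 0 := Complex.ofReal_ne_zero.mpr Real.pi_ne_zero
  -- notation
  set z : ℤ → ℂ := fun k => ν + μ + (k : ℂ) * τ with hz_def
  -- key nonvanishing
  have key : ∀ (k : ℤ) (c : ℕ), c ∣ u → 0 < c →
      Complex.exp (2 * (π : ℂ) * I * ((c : ℂ) * z k)) ≠ 1 := by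
    intro k c hcd hc hone
    rw [Complex.exp_eq_one_iff] at hone
    obtain ⟨n, hn⟩ := hone
    have hcC : (c : ℂ) ≠ 0 := Nat.cast_ne_zero.mpr hc.ne'
    have h2πI : (2:ℂ) * (π:ℂ) * I ≠ 0 := by simp [hπ, Complex.I_ne_zero]
    have h1 : (c : ℂ) * z k = n := by
      apply mul_left_cancel₀ h2πI
      rw [hn]; ring
    apply h (-k) (n * (u / c : ℕ))
    have hcu : (u : ℂ) = (c : ℂ) * ((u / c : ℕ) : ℂ) := by
      rw [← Nat.cast_mul, Nat.mul_div_cancel' hcd]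
    have hucC : ((u / c : ℕ) : ℂ) ≠ 0 := by
      intro h0
      rw [h0, mul_zero] at hcu
      exact huC hcu
    have h1' : (c : ℂ) * (ν + μ + (k : ℂ) * τ) = n := h1
    have hnm : ν + μ = -(k : ℂ) * τ + (n : ℂ) / (c : ℂ) := by
      field_simp
      linear_combination h1'
    rw [hnm]
    congr 1
    · push_cast; ring
    · rw [hcu]
      rw [Int.cast_mul, Int.cast_natCast]
      field_simp
  have hy_ne : ∀ k : ℤ, Complex.exp (2 * (π : ℂ) * I * z k) ≠ 1 := by
    intro k
    have := key k 1 (one_dvd u) one_pos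
    simpa using this
  have hY_ne : ∀ k : ℤ, Complex.exp (2 * (π : ℂ) * I * ((u : ℂ) * z k)) ≠ 1 :=
    fun k => key k u dvd_rfl hu
  set Y : ℤ → ℂ := fun k => Complex.exp (2 * (π : ℂ) * I * ((u : ℂ) * z k)) with hY_def
  have hYsub_ne : ∀ k : ℤ, (1 : ℂ) - Y k ≠ 0 := by
    intro k
    exact sub_ne_zero.mpr (Ne.symm (hY_ne k))
  -- norm of Y
  set c₀ : ℝ := -2 * π * u * (ν + μ).im with hc₀_def
  set s : ℝ := 2 * π * u * τ.im with hs_def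
  have hs_pos : 0 < s := by
    have : (0:ℝ) < 2 * π * u := by positivity
    exact mul_pos this hτ
  have habsY : ∀ k : ℤ, ‖Y k‖ = Real.exp (c₀ - s * k) := by
    intro k
    rw [hY_def]
    simp only
    rw [Complex.norm_exp]
    congr 1
    simp only [hz_def, hc₀_def, hs_def]
    simp [Complex.mul_re, Complex.mul_im, Complex.add_im, Complex.add_re]
    ring
  -- uniform lower bound on ‖1 - Y k‖
  obtain ⟨K₀, hK₀⟩ := exists_nat_gt ((|c₀| + Real.log 2) / s)
  set K : ℤ := (K₀ : ℤ) with hK_def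
  have hKb : (|c₀| + Real.log 2) / s < (K : ℝ) := by exact_mod_cast hK₀
  have hKs : |c₀| + Real.log 2 < s * K := by
    rw [div_lt_iff₀ hs_pos] at hKb
    linarith
  have hK0 : (0:ℤ) ≤ K := by
    by_contra hcon
    push_neg at hcon
    have h1 : (K : ℝ) < 0 := by exact_mod_cast hcon
    have h2 : (0:ℝ) ≤ |c₀| + Real.log 2 := by
      have := Real.log_pos (by norm_num : (1:ℝ) < 2)
      positivity
    nlinarith
  have hIcc : (Finset.Icc (-K) K).Nonempty :=
    Finset.nonempty_Icc.mpr (by linarith)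
  set δ : ℝ := min 2⁻¹ ((Finset.Icc (-K) K).inf' hIcc fun k => ‖(1:ℂ) - Y k‖) with hδ_def
  have hδ_pos : 0 < δ := by
    rw [hδ_def]
    apply lt_min (by norm_num)
    rw [Finset.lt_inf'_iff]
    intro k _
    exact norm_pos_iff.mpr (hYsub_ne k)
  have hδ_le : ∀ k : ℤ, δ ≤ ‖(1:ℂ) - Y k‖ := by
    intro k
    by_cases hk : k ∈ Finset.Icc (-K) K
    · exact le_trans (min_le_right _ _) (Finset.inf'_le _ hk)
    · refine le_trans (min_le_left _ _) ?_
      rw [Finset.mem_Icc, not_and_or, not_le, not_le] at hk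
      rcases hk with hk | hk
      · -- k < -K : ‖Y k‖ ≥ 2
        have hYk : (2:ℝ) ≤ ‖Y k‖ := by
          rw [habsY k]
          rw [show (2:ℝ) = Real.exp (Real.log 2) by rw [Real.exp_log]; norm_num]
          apply Real.exp_le_exp.mpr
          have h1 : (k:ℝ) ≤ -K := by
            have : k ≤ -K := by linarith
            exact_mod_cast this
          have h2 : s * k ≤ s * (-K) := mul_le_mul_of_nonneg_left h1 hs_pos.le
          have h3 : -|c₀| ≤ c₀ := neg_abs_le c₀
          nlinarith
        have h4 := norm_sub_norm_le (Y k) (1:ℂ)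
        rw [norm_one] at h4
        have h5 : ‖Y k - 1‖ = ‖(1:ℂ) - Y k‖ := by
          rw [← norm_neg]; congr 1; ring
        linarith
      · -- K < k : ‖Y k‖ ≤ 1/2
        have hYk : ‖Y k‖ ≤ 2⁻¹ := by
          rw [habsY k]
          rw [show (2:ℝ)⁻¹ = Real.exp (-Real.log 2) by
            rw [Real.exp_neg, Real.exp_log]; norm_num]
          apply Real.exp_le_exp.mpr
          have h1 : (K:ℝ) ≤ k := by exact_mod_cast hk.le
          have h2 : s * K ≤ s * k := mul_le_mul_of_nonneg_left h1 hs_pos.le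
          have h3 : c₀ ≤ |c₀| := le_abs_self c₀
          nlinarith
        have h4 := norm_sub_norm_le (1:ℂ) (Y k)
        rw [norm_one] at h4
        linarith
  -- the split terms
  set G : ℕ → ℤ → ℂ := fun b k =>
    Complex.exp ((π : ℂ) * I * (k : ℂ) ^ 2 * ℓ * τ + 2 * (π : ℂ) * I * (k : ℂ) * ℓ * ν +
      2 * (π : ℂ) * I * (b : ℂ) * z k) / (1 - Y k) with hG_def
  -- summability of each G b
  have hτℓ : 0 < ((ℓ : ℂ) * τ).im := by
    have h1 : ((ℓ : ℂ) * τ).im = (ℓ : ℝ) * τ.im := by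
      simp [Complex.mul_im]
    rw [h1]
    have : (0:ℝ) < (ℓ:ℝ) := by exact_mod_cast hℓ
    positivity
  have hGsum : ∀ b : ℕ, Summable (G b) := by
    intro b
    have hnum : Summable fun k : ℤ =>
        Complex.exp ((π : ℂ) * I * (k : ℂ) ^ 2 * ((ℓ:ℂ) * τ) +
          2 * (π : ℂ) * I * (k : ℂ) * ((ℓ:ℂ) * ν + (b:ℂ) * τ)) :=
      aux_summable_theta _ _ hτℓ
    have hnorm : Summable fun k : ℤ =>
        ‖Complex.exp ((π : ℂ) * I * (k : ℂ) ^ 2 * ((ℓ:ℂ) * τ) +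
          2 * (π : ℂ) * I * (k : ℂ) * ((ℓ:ℂ) * ν + (b:ℂ) * τ))‖ :=
      summable_norm_iff.mpr hnum
    set C : ℝ := ‖Complex.exp (2 * (π : ℂ) * I * (b:ℂ) * (ν + μ))‖ with hC_def
    apply Summable.of_norm_bounded ((hnorm.mul_left C).mul_left δ⁻¹)
    intro k
    simp only [hG_def]
    have hnum_eq : Complex.exp ((π : ℂ) * I * (k : ℂ) ^ 2 * ℓ * τ +
        2 * (π : ℂ) * I * (k : ℂ) * ℓ * ν + 2 * (π : ℂ) * I * (b : ℂ) * z k) =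
        Complex.exp (2 * (π : ℂ) * I * (b:ℂ) * (ν + μ)) *
        Complex.exp ((π : ℂ) * I * (k : ℂ) ^ 2 * ((ℓ:ℂ) * τ) +
          2 * (π : ℂ) * I * (k : ℂ) * ((ℓ:ℂ) * ν + (b:ℂ) * τ)) := by
      rw [← Complex.exp_add]
      congr 1
      simp only [hz_def]
      ring
    rw [div_eq_mul_inv, hnum_eq, norm_mul, norm_mul, norm_inv]
    have hYinv : ‖(1:ℂ) - Y k‖⁻¹ ≤ δ⁻¹ := by
      apply inv_anti₀ hδ_pos (hδ_le k)
    calc C * ‖Complex.exp ((π : ℂ) * I * (k : ℂ) ^ 2 * ((ℓ:ℂ) * τ) +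
          2 * (π : ℂ) * I * (k : ℂ) * ((ℓ:ℂ) * ν + (b:ℂ) * τ))‖ * ‖(1:ℂ) - Y k‖⁻¹
        ≤ C * ‖Complex.exp ((π : ℂ) * I * (k : ℂ) ^ 2 * ((ℓ:ℂ) * τ) +
          2 * (π : ℂ) * I * (k : ℂ) * ((ℓ:ℂ) * ν + (b:ℂ) * τ))‖ * δ⁻¹ := by
          gcongr
      _ = δ⁻¹ * (C * ‖Complex.exp ((π : ℂ) * I * (k : ℂ) ^ 2 * ((ℓ:ℂ) * τ) +
          2 * (π : ℂ) * I * (k : ℂ) * ((ℓ:ℂ) * ν + (b:ℂ) * τ))‖) := by ring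
  -- Step 1 : appellK = ∑' k, ∑ b, G b k
  have step1 : appellK ℓ τ ν μ = ∑' k : ℤ, ∑ b ∈ Finset.range u, G b k := by
    rw [appellK]
    apply tsum_congr
    intro k
    set y : ℂ := Complex.exp (2 * (π : ℂ) * I * z k) with hy_def'
    have hyu : y ^ u = Y k := by
      rw [hy_def', hY_def, ← Complex.exp_nat_mul]
      congr 1
      simp only [hz_def]
      ring
    have hYne : y ^ u ≠ 1 := by rw [hyu]; exact hY_ne k
    have hgeom := aux_geom_inv y u (hy_ne k) hYne
    have hden : (1 : ℂ) - Complex.exp (2 * (π:ℂ) * I * (ν + μ + (k:ℂ) * τ)) = 1 - y := rfl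
    rw [hden, div_eq_mul_inv, hgeom, hyu, ← mul_assoc, Finset.mul_sum, Finset.sum_mul]
    apply Finset.sum_congr rfl
    intro b _
    simp only [hG_def]
    rw [div_eq_mul_inv]
    congr 1
    rw [hy_def', ← Complex.exp_nat_mul, ← Complex.exp_add]
    congr 1
    simp only [hz_def]
    ring
  -- Step 2 : swap tsum and finite sum
  have step2 : (∑' k : ℤ, ∑ b ∈ Finset.range u, G b k) =
      ∑ b ∈ Finset.range u, ∑' k : ℤ, G b k :=
    Summable.tsum_finsetSum fun b _ => hGsum b
  -- Step 3 : reindex each inner tsum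
  have step3 : ∀ b : ℕ, (∑' k : ℤ, G b k) =
      ∑ a ∈ Finset.range u, ∑' m : ℤ, G b (m * u + a) := by
    intro b
    set e := Int.divModEquiv u with he_def
    have h1 : (∑' p : ℤ × Fin u, G b (e.symm p)) = ∑' k : ℤ, G b k :=
      e.symm.tsum_eq (G b)
    have hsump : Summable fun p : ℤ × Fin u => G b (e.symm p) :=
      (Equiv.summable_iff e.symm (f := G b)).mpr (hGsum b)
    have h2 : (∑' q : Fin u × ℤ, G b (e.symm ((Equiv.prodComm (Fin u) ℤ) q))) =
        ∑' p : ℤ × Fin u, G b (e.symm p) :=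
      (Equiv.prodComm (Fin u) ℤ).tsum_eq fun p => G b (e.symm p)
    have hsumq : Summable fun q : Fin u × ℤ => G b (e.symm ((Equiv.prodComm (Fin u) ℤ) q)) :=
      (Equiv.summable_iff (Equiv.prodComm (Fin u) ℤ) (f := fun p : ℤ × Fin u => G b (e.symm p))).mpr hsump
    have h3 : (∑' q : Fin u × ℤ, G b (e.symm ((Equiv.prodComm (Fin u) ℤ) q))) =
        ∑' (a : Fin u) (m : ℤ), G b (e.symm ((Equiv.prodComm (Fin u) ℤ) (a, m))) :=
      Summable.tsum_prod hsumq
    rw [← h1, ← h2, h3, tsum_fintype]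
    have h4 : ∀ a : Fin u, ∀ m : ℤ,
        G b (e.symm ((Equiv.prodComm (Fin u) ℤ) (a, m))) = G b (m * u + ((a : ℕ) : ℤ)) := by
      intro a m
      congr 1
    calc (∑ a : Fin u, ∑' m : ℤ, G b (e.symm ((Equiv.prodComm (Fin u) ℤ) (a, m))))
        = ∑ a : Fin u, ∑' m : ℤ, G b (m * u + ((a:ℕ) : ℤ)) := by
          apply Finset.sum_congr rfl
          intro a _
          exact tsum_congr (h4 a)
      _ = ∑ a ∈ Finset.range u, ∑' m : ℤ, G b (m * u + a) :=
          Fin.sum_univ_eq_sum_range (fun a : ℕ => ∑' m : ℤ, G b (m * u + (a : ℤ))) u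
  -- Step 4 : identify each ∑' m with prefactor * appellK
  have step4 : ∀ a b : ℕ, (∑' m : ℤ, G b (m * u + a)) =
      Complex.exp ((π : ℂ) * I * (a : ℂ) ^ 2 * ℓ * τ + 2 * (π : ℂ) * I * (a : ℂ) * (b : ℂ) * τ +
          2 * (π : ℂ) * I * ((a : ℂ) * ℓ + (b : ℂ)) * ν + 2 * (π : ℂ) * I * (b : ℂ) * μ) *
        appellK ℓ ((u : ℂ) ^ 2 * τ)
          ((u : ℂ) * ν + ((u : ℂ) * (a : ℂ) + (b : ℂ) * (u : ℂ) / (ℓ : ℂ)) * τ)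
          ((u : ℂ) * μ - (b : ℂ) * (u : ℂ) / (ℓ : ℂ) * τ) := by
    intro a b
    rw [appellK, ← tsum_mul_left]
    apply tsum_congr
    intro m
    simp only [hG_def, hY_def, hz_def]
    rw [mul_div_assoc']
    have hcast : ((m * u + a : ℤ) : ℂ) = (m : ℂ) * u + a := by push_cast; ring
    congr 1
    · -- numerators
      rw [← Complex.exp_add]
      congr 1
      rw [hcast]
      field_simp
      ring
    · -- denominators
      congr 2
      rw [hcast]
      field_simp
      ring
  -- assemble
  rw [step1, step2]
  rw [Finset.sum_congr rfl fun b _ => step3 b]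
  rw [Finset.sum_comm]
  refine Finset.sum_congr rfl fun a _ => Finset.sum_congr rfl fun b _ => step4 a b
end

section
/- Let ℓ and u be coprime positive integers and set r̄(n) = ⌊ℓn/u⌋ for n ∈ ℤ. Then for every τ ∈ ℍ and all ν, μ ∈ ℂ with ν+μ ∉ ℤτ+ℤ and μ−ν ∉ ℤτ+ℤ: K_{2ℓ}(τ/u, ν/u, μ/u) − K_{2ℓ}(τ/u, −ν/u, μ/u) = Σ_{s'=1}^{u} Σ_{b=0}^{u−1} e^{2iπ[(ℓ/u)(s'−1)ν + (ℓ/u)(s'+1+2b)μ − (ℓ/u)(b+1)(b+s')τ − r̄(s'+2b+1)·(ν+μ−(b+1)τ)]} · ( K_{2ℓ}(uτ, ν + ((s'−1)/2)τ − (u/(2ℓ)) r̄(s'+2b+1) τ, μ − ((s'+1)/2)τ − bτ + (u/(2ℓ)) r̄(s'+2b+1) τ) − e^{4iπ ν r̄(s'+2b+1) + 2iπ(s'−1) r̄(s'+2b+1) τ} K_{2ℓ}(uτ, −ν − ((s'−1)/2)τ − (u/(2ℓ)) r̄(s'+2b+1) τ, μ − ((s'+1)/2)τ − bτ + (u/(2ℓ))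 r̄(s'+2b+1) τ) ). -/
open Complex Real MeasureTheory Finset

lemma norm_exp_2piI (z : ℂ) :
    ‖Complex.exp (2*(π:ℂ)*I*z)‖ = Real.exp (-(2*π*z.im)) := by
  rw [Complex.norm_exp]
  congr 1
  have : (2*(π:ℂ)*I*z).re = -(2*π*z.im) := by
    simp [Complex.mul_re, Complex.mul_im]
  rw [this]

lemma denom_inv_bound (τ w : ℂ) (hτ : 0 < τ.im)
    (h : ∀ m : ℤ, 1 - Complex.exp (2*(π:ℂ)*I*(w + m*τ)) ≠ 0) :
    ∃ C : ℝ, ∀ m : ℤ, ‖(1 - Complex.exp (2*(π:ℂ)*I*(w + m*τ)))⁻¹‖ ≤ C := by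
  set B : ℝ := Real.log 2 / (2*π) with hB
  set M₁ : ℤ := ⌈(B - w.im)/τ.im⌉ with hM₁
  set M₂ : ℤ := ⌊(-B - w.im)/τ.im⌋ with hM₂
  set q : ℤ → ℂ := fun m => Complex.exp (2*(π:ℂ)*I*(w + m*τ)) with hq
  have hπ : (0:ℝ) < 2*π := by positivity
  have hnq : ∀ m : ℤ, ‖q m‖ = Real.exp (-(2*π*(w.im + m*τ.im))) := by
    intro m
    rw [hq, norm_exp_2piI]
    congr 2
    simp
  refine ⟨2 + ∑ m ∈ Finset.Icc M₂ M₁, ‖(1 - q m)⁻¹‖, fun m => ?_⟩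
  have hsum_nonneg : (0:ℝ) ≤ ∑ m ∈ Finset.Icc M₂ M₁, ‖(1 - q m)⁻¹‖ :=
    Finset.sum_nonneg fun i _ => norm_nonneg _
  rcases le_or_gt m M₂ with hm2 | hm2
  · -- ‖q m‖ ≥ 2
    have h1 : (m:ℝ) * τ.im ≤ -B - w.im := by
      have : (m:ℝ) ≤ (-B - w.im)/τ.im := le_trans (by exact_mod_cast hm2) (Int.floor_le _)
      calc (m:ℝ) * τ.im ≤ ((-B - w.im)/τ.im) * τ.im := by
            exact mul_le_mul_of_nonneg_right this hτ.le
        _ = -B - w.im := by field_simp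
    have h2 : Real.log 2 ≤ -(2*π*(w.im + m*τ.im)) := by
      have : w.im + m*τ.im ≤ -B := by linarith
      have := mul_le_mul_of_nonneg_left this hπ.le
      rw [hB] at this
      have h2' : 2*π*(Real.log 2/(2*π)) = Real.log 2 := by field_simp
      nlinarith [this]
    have hq2 : (2:ℝ) ≤ ‖q m‖ := by
      have h3 := Real.exp_le_exp.2 h2
      rw [Real.exp_log (by norm_num : (0:ℝ) < 2)] at h3
      rw [hnq m]; exact h3
    have hd : (1:ℝ) ≤ ‖1 - q m‖ := by
      have := norm_sub_norm_le (q m) (1:ℂ)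
      rw [norm_one] at this
      calc (1:ℝ) ≤ ‖q m‖ - 1 := by linarith
        _ ≤ ‖q m - 1‖ := this
        _ = ‖1 - q m‖ := by rw [norm_sub_rev]
    have : ‖(1 - q m)⁻¹‖ ≤ 1 := by
      rw [norm_inv]
      exact inv_le_one_of_one_le₀ hd
    linarith
  rcases le_or_gt M₁ m with hm1 | hm1
  · -- ‖q m‖ ≤ 1/2
    have h1 : B - w.im ≤ (m:ℝ) * τ.im := by
      have : (B - w.im)/τ.im ≤ (m:ℝ) := le_trans (Int.le_ceil _) (by exact_mod_cast hm1)
      calc B - w.im = ((B - w.im)/τ.im) * τ.im := by field_simp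
        _ ≤ (m:ℝ) * τ.im := mul_le_mul_of_nonneg_right this hτ.le
    have h2 : -(2*π*(w.im + m*τ.im)) ≤ -Real.log 2 := by
      have : B ≤ w.im + m*τ.im := by linarith
      have := mul_le_mul_of_nonneg_left this hπ.le
      rw [hB] at this
      have h2' : 2*π*(Real.log 2/(2*π)) = Real.log 2 := by field_simp
      nlinarith [this]
    have hq2 : ‖q m‖ ≤ 1/2 := by
      have h3 := Real.exp_le_exp.2 h2
      have h4 : rexp (-Real.log 2) = 1/2 := by
        rw [Real.exp_neg, Real.exp_log (by norm_num : (0:ℝ) < 2)]; norm_num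
      rw [hnq m]; linarith
    have hd : (1/2:ℝ) ≤ ‖1 - q m‖ := by
      have := norm_sub_norm_le (1:ℂ) (q m)
      rw [norm_one] at this
      linarith
    have : ‖(1 - q m)⁻¹‖ ≤ 2 := by
      rw [norm_inv]
      rw [inv_le_comm₀ (lt_of_lt_of_le (by norm_num) hd) (by norm_num)]
      linarith
    linarith
  · -- middle
    have hmem : m ∈ Finset.Icc M₂ M₁ := Finset.mem_Icc.2 ⟨hm2.le, hm1.le⟩
    have := Finset.single_le_sum (f := fun m => ‖(1 - q m)⁻¹‖)
      (fun i _ => norm_nonneg _) hmem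
    linarith

lemma sum_range_eq_sum_Icc (u : ℕ) (g : ℤ → ℂ) :
    ∑ j ∈ Finset.range u, g (j:ℤ) = ∑ j ∈ Finset.Icc (0:ℤ) ((u:ℤ)-1), g j := by
  refine Finset.sum_nbij' (fun j => (j:ℤ)) (fun j => j.toNat) ?_ ?_ ?_ ?_ ?_
  · intro a ha
    simp only [Finset.mem_range] at ha
    simp only [Finset.mem_Icc]
    omega
  · intro a ha
    simp only [Finset.mem_Icc] at ha
    simp only [Finset.mem_range]
    omega
  · intro a ha
    simp only [Finset.mem_range] at ha
    show ((a:ℤ)).toNat = a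
    omega
  · intro a ha
    simp only [Finset.mem_Icc] at ha
    show ((a.toNat : ℕ) : ℤ) = a
    omega
  · intro a _
    rfl

lemma geom_expand (N x : ℂ) (u : ℕ) (hx : 1 - x ≠ 0) (hxu : 1 - x^u ≠ 0) :
    N / (1 - x) = ∑ j ∈ Finset.range u, N * x^j / (1 - x^u) := by
  rw [← Finset.sum_div, ← Finset.mul_sum, div_eq_div_iff hx hxu]
  linear_combination N * geom_sum_mul x u

lemma two_pi_I_ne : (2*(π:ℂ)*I) ≠ 0 :=
  mul_ne_zero (mul_ne_zero two_ne_zero (Complex.ofReal_ne_zero.2 Real.pi_ne_zero)) Complex.I_ne_zero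

lemma one_sub_exp_ne (τ z : ℂ) (hz : ∀ m n : ℤ, z ≠ (m:ℂ)*τ + n) (m : ℤ) :
    1 - Complex.exp (2*(π:ℂ)*I*(z + m*τ)) ≠ 0 := by
  intro hc
  have h1 : Complex.exp (2*(π:ℂ)*I*(z + m*τ)) = 1 := by linear_combination -hc
  rw [Complex.exp_eq_one_iff] at h1
  obtain ⟨k, hk⟩ := h1
  apply hz (-m) k
  have h2 : (2*(π:ℂ)*I) * (z + m*τ) = (2*(π:ℂ)*I) * k := by linear_combination hk
  have h3 := mul_left_cancel₀ two_pi_I_ne h2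
  push_cast
  linear_combination h3

lemma one_sub_exp_div_ne (u : ℕ) (hu : 0 < u) (τ z : ℂ)
    (hz : ∀ m n : ℤ, z ≠ (m:ℂ)*τ + n) (m : ℤ) :
    1 - Complex.exp (2*(π:ℂ)*I*((z + m*τ)/u)) ≠ 0 := by
  intro hc
  have h1 : Complex.exp (2*(π:ℂ)*I*((z + m*τ)/u)) = 1 := by linear_combination -hc
  rw [Complex.exp_eq_one_iff] at h1
  obtain ⟨k, hk⟩ := h1
  apply hz (-m) (k*u)
  have h2 : (2*(π:ℂ)*I) * ((z + m*τ)/u) = (2*(π:ℂ)*I) * k := by linear_combination hk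
  have h3 := mul_left_cancel₀ two_pi_I_ne h2
  have hU : (u:ℂ) ≠ 0 := Nat.cast_ne_zero.2 hu.ne'
  push_cast
  field_simp at h3
  linear_combination h3

lemma summable_appell_aux (a b c w τ : ℂ) (ha : 0 < a.im) (hτ : 0 < τ.im)
    (h : ∀ m : ℤ, 1 - Complex.exp (2*(π:ℂ)*I*(w + m*τ)) ≠ 0) :
    Summable (fun m : ℤ => Complex.exp (2*(π:ℂ)*I*(a*m^2 + b*m + c)) /
      (1 - Complex.exp (2*(π:ℂ)*I*(w + m*τ)))) := by
  obtain ⟨C, hC⟩ := denom_inv_bound τ w hτ h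
  have hC0 : 0 ≤ C := le_trans (norm_nonneg _) (hC 0)
  have h2a : 0 < (2*a).im := by
    rw [Complex.mul_im]
    simp
    linarith
  have hsum : Summable (fun m : ℤ =>
      (‖Complex.exp (2*(π:ℂ)*I*c)‖ * C) * ‖jacobiTheta₂_term m b (2*a)‖) := by
    apply Summable.mul_left
    exact ((summable_jacobiTheta₂_term_iff b (2*a)).2 h2a).norm
  apply Summable.of_norm_bounded hsum
  intro m
  have hfac : Complex.exp (2*(π:ℂ)*I*(a*m^2 + b*m + c)) =
      Complex.exp (2*(π:ℂ)*I*c) * jacobiTheta₂_term m b (2*a) := by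
    rw [jacobiTheta₂_term, ← Complex.exp_add]
    congr 1
    ring
  rw [div_eq_mul_inv, hfac, norm_mul, norm_mul]
  calc ‖Complex.exp (2*(π:ℂ)*I*c)‖ * ‖jacobiTheta₂_term m b (2*a)‖ *
        ‖(1 - Complex.exp (2*(π:ℂ)*I*(w + m*τ)))⁻¹‖
      ≤ ‖Complex.exp (2*(π:ℂ)*I*c)‖ * ‖jacobiTheta₂_term m b (2*a)‖ * C := by
        apply mul_le_mul_of_nonneg_left (hC m) (by positivity)
    _ = ‖Complex.exp (2*(π:ℂ)*I*c)‖ * C * ‖jacobiTheta₂_term m b (2*a)‖ := by ring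

lemma tsum_int_decomp (u : ℕ) (hu : 0 < u) (f : ℤ → ℂ) (hf : Summable f) :
    ∑' m : ℤ, f m = ∑ c ∈ Finset.range u, ∑' n : ℤ, f (n * u + (c:ℤ)) := by
  haveI : NeZero u := ⟨hu.ne'⟩
  have h1 : ∑' p : ℤ × Fin u, f (p.1 * u + (p.2 : ℤ)) = ∑' m : ℤ, f m := by
    have := Equiv.tsum_eq (Int.divModEquiv u).symm f
    simpa [Int.divModEquiv] using this
  have hsumm : Summable (fun p : ℤ × Fin u => f (p.1 * u + (p.2 : ℤ))) := by
    have := (Equiv.summable_iff (Int.divModEquiv u).symm (f := f)).2 hf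
    simpa [Int.divModEquiv, Function.comp_def] using this
  rw [← h1, Summable.tsum_prod hsumm]
  have h2 : ∀ n : ℤ, ∑' c : Fin u, f (n * u + (c:ℤ)) = ∑ c ∈ Finset.range u, f (n * u + (c:ℤ)) := by
    intro n
    rw [tsum_fintype]
    exact Fin.sum_univ_eq_sum_range (fun c => f (n * u + (c:ℤ))) u
  calc ∑' n : ℤ, ∑' c : Fin u, f (n * u + (c:ℤ))
      = ∑' n : ℤ, ∑ c ∈ Finset.range u, f (n * u + (c:ℤ)) := tsum_congr h2
    _ = ∑ c ∈ Finset.range u, ∑' n : ℤ, f (n * u + (c:ℤ)) := by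
        apply Summable.tsum_finsetSum
        intro c _
        apply hf.comp_injective
        intro n1 n2 hh
        simp only at hh
        have : n1 * (u:ℤ) = n2 * u := by omega
        exact mul_right_cancel₀ (by exact_mod_cast hu.ne') this

noncomputable def TpF (ℓ u : ℕ) (τ ν μ : ℂ) (j m : ℤ) : ℂ :=
  Complex.exp (2*(π:ℂ)*I*((((ℓ:ℂ)*(m:ℂ)^2 + (j:ℂ)*(m:ℂ))*τ + (2*(ℓ:ℂ)*(m:ℂ) + (j:ℂ))*ν + (j:ℂ)*μ)/(u:ℂ))) /
    (1 - Complex.exp (2*(π:ℂ)*I*(ν + μ + (m:ℂ)*τ)))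

noncomputable def TmF (ℓ u : ℕ) (τ ν μ : ℂ) (j m : ℤ) : ℂ :=
  Complex.exp (2*(π:ℂ)*I*((((ℓ:ℂ)*(m:ℂ)^2 + (j:ℂ)*(m:ℂ))*τ - (2*(ℓ:ℂ)*(m:ℂ) + (j:ℂ))*ν + (j:ℂ)*μ)/(u:ℂ))) /
    (1 - Complex.exp (2*(π:ℂ)*I*(μ - ν + (m:ℂ)*τ)))

lemma summable_TpF (ℓ u : ℕ) (hℓ : 0 < ℓ) (hu : 0 < u) (τ ν μ : ℂ) (hτ : 0 < τ.im)
    (h1 : ∀ m n : ℤ, ν + μ ≠ (m:ℂ)*τ + n) (j : ℤ) : Summable (TpF ℓ u τ ν μ j) := by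
  have hD : ∀ m : ℤ, 1 - Complex.exp (2*(π:ℂ)*I*(ν + μ + m*τ)) ≠ 0 := one_sub_exp_ne τ (ν+μ) h1
  have hU : (u:ℂ) ≠ 0 := Nat.cast_ne_zero.2 hu.ne'
  have ha : 0 < ((ℓ:ℂ)*τ/(u:ℂ)).im := by
    have he : ((ℓ:ℂ)*τ/(u:ℂ)) = (((ℓ:ℝ)/(u:ℝ) : ℝ):ℂ) * τ := by push_cast; ring
    rw [he, Complex.mul_im]
    simp only [Complex.ofReal_re, Complex.ofReal_im, zero_mul, add_zero]
    exact mul_pos (div_pos (by exact_mod_cast hℓ) (by exact_mod_cast hu)) hτ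
  apply Summable.congr (summable_appell_aux ((ℓ:ℂ)*τ/u) (((j:ℂ)*τ + 2*ℓ*ν)/u)
    ((j:ℂ)*(ν+μ)/u) (ν+μ) τ ha hτ hD)
  intro m
  rw [TpF]
  have harg : (2*(π:ℂ)*I*(((ℓ:ℂ)*τ/u)*(m:ℂ)^2 + (((j:ℂ)*τ + 2*(ℓ:ℂ)*ν)/u)*(m:ℂ) + (j:ℂ)*(ν+μ)/u)) =
      2*(π:ℂ)*I*((((ℓ:ℂ)*(m:ℂ)^2 + (j:ℂ)*(m:ℂ))*τ + (2*(ℓ:ℂ)*(m:ℂ) + (j:ℂ))*ν + (j:ℂ)*μ)/(u:ℂ)) := by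
    ring
  rw [harg]

lemma summable_TmF (ℓ u : ℕ) (hℓ : 0 < ℓ) (hu : 0 < u) (τ ν μ : ℂ) (hτ : 0 < τ.im)
    (h2 : ∀ m n : ℤ, μ - ν ≠ (m:ℂ)*τ + n) (j : ℤ) : Summable (TmF ℓ u τ ν μ j) := by
  have hD : ∀ m : ℤ, 1 - Complex.exp (2*(π:ℂ)*I*(μ - ν + m*τ)) ≠ 0 := one_sub_exp_ne τ (μ-ν) h2
  have hU : (u:ℂ) ≠ 0 := Nat.cast_ne_zero.2 hu.ne'
  have ha : 0 < ((ℓ:ℂ)*τ/(u:ℂ)).im := by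
    have he : ((ℓ:ℂ)*τ/(u:ℂ)) = (((ℓ:ℝ)/(u:ℝ) : ℝ):ℂ) * τ := by push_cast; ring
    rw [he, Complex.mul_im]
    simp only [Complex.ofReal_re, Complex.ofReal_im, zero_mul, add_zero]
    exact mul_pos (div_pos (by exact_mod_cast hℓ) (by exact_mod_cast hu)) hτ
  apply Summable.congr (summable_appell_aux ((ℓ:ℂ)*τ/u) (((j:ℂ)*τ - 2*ℓ*ν)/u)
    ((j:ℂ)*(μ-ν)/u) (μ-ν) τ ha hτ hD)
  intro m
  rw [TmF]
  have harg : (2*(π:ℂ)*I*(((ℓ:ℂ)*τ/u)*(m:ℂ)^2 + (((j:ℂ)*τ - 2*(ℓ:ℂ)*ν)/u)*(m:ℂ) + (j:ℂ)*(μ-ν)/u)) =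
      2*(π:ℂ)*I*((((ℓ:ℂ)*(m:ℂ)^2 + (j:ℂ)*(m:ℂ))*τ - (2*(ℓ:ℂ)*(m:ℂ) + (j:ℂ))*ν + (j:ℂ)*μ)/(u:ℂ)) := by
    ring
  rw [harg]
lemma appell_expand_plus (ℓ u : ℕ) (hℓ : 0 < ℓ) (hu : 0 < u) (τ ν μ : ℂ) (hτ : 0 < τ.im)
    (h1 : ∀ m n : ℤ, ν + μ ≠ (m:ℂ)*τ + n) :
    appellK (2*ℓ) (τ/u) (ν/u) (μ/u) =
      ∑ j ∈ Finset.Icc (0:ℤ) ((u:ℤ)-1), ∑' m : ℤ, TpF ℓ u τ ν μ j m := by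
  have hU : (u:ℂ) ≠ 0 := Nat.cast_ne_zero.2 hu.ne'
  have hper : ∀ m : ℤ,
      Complex.exp ((π:ℂ)*I*(m:ℂ)^2*((2*ℓ:ℕ):ℂ)*(τ/(u:ℂ)) + 2*(π:ℂ)*I*(m:ℂ)*((2*ℓ:ℕ):ℂ)*(ν/(u:ℂ))) /
        (1 - Complex.exp (2*(π:ℂ)*I*(ν/(u:ℂ) + μ/(u:ℂ) + (m:ℂ)*(τ/(u:ℂ))))) =
      ∑ j ∈ Finset.range u, TpF ℓ u τ ν μ (j:ℤ) m := by
    intro m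
    have hden : (2*(π:ℂ)*I*(ν/(u:ℂ) + μ/(u:ℂ) + (m:ℂ)*(τ/(u:ℂ)))) =
        2*(π:ℂ)*I*((ν + μ + (m:ℂ)*τ)/(u:ℂ)) := by ring
    have hx : 1 - Complex.exp (2*(π:ℂ)*I*((ν + μ + (m:ℂ)*τ)/(u:ℂ))) ≠ 0 :=
      one_sub_exp_div_ne u hu τ (ν+μ) h1 m
    have hpow : (Complex.exp (2*(π:ℂ)*I*((ν + μ + (m:ℂ)*τ)/(u:ℂ))))^u =
        Complex.exp (2*(π:ℂ)*I*(ν + μ + (m:ℂ)*τ)) := by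
      rw [← Complex.exp_nat_mul]
      congr 1
      field_simp
    have hxu : 1 - (Complex.exp (2*(π:ℂ)*I*((ν + μ + (m:ℂ)*τ)/(u:ℂ))))^u ≠ 0 := by
      rw [hpow]; exact one_sub_exp_ne τ (ν+μ) h1 m
    rw [hden, geom_expand _ _ u hx hxu]
    refine Finset.sum_congr rfl fun j hj => ?_
    rw [TpF, hpow]
    congr 1
    rw [← Complex.exp_nat_mul, ← Complex.exp_add]
    congr 1
    push_cast
    ring
  rw [appellK, tsum_congr hper,
    Summable.tsum_finsetSum (f := fun (j : ℕ) (m : ℤ) => TpF ℓ u τ ν μ (j:ℤ) m) (s := Finset.range u)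
      (fun j _ => summable_TpF ℓ u hℓ hu τ ν μ hτ h1 (j:ℤ))]
  exact sum_range_eq_sum_Icc u (fun j => ∑' m, TpF ℓ u τ ν μ j m)

lemma appell_expand_minus (ℓ u : ℕ) (hℓ : 0 < ℓ) (hu : 0 < u) (τ ν μ : ℂ) (hτ : 0 < τ.im)
    (h2 : ∀ m n : ℤ, μ - ν ≠ (m:ℂ)*τ + n) :
    appellK (2*ℓ) (τ/u) (-ν/u) (μ/u) =
      ∑ j ∈ Finset.Icc (0:ℤ) ((u:ℤ)-1), ∑' m : ℤ, TmF ℓ u τ ν μ j m := by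
  have hU : (u:ℂ) ≠ 0 := Nat.cast_ne_zero.2 hu.ne'
  have hper : ∀ m : ℤ,
      Complex.exp ((π:ℂ)*I*(m:ℂ)^2*((2*ℓ:ℕ):ℂ)*(τ/(u:ℂ)) + 2*(π:ℂ)*I*(m:ℂ)*((2*ℓ:ℕ):ℂ)*(-ν/(u:ℂ))) /
        (1 - Complex.exp (2*(π:ℂ)*I*(-ν/(u:ℂ) + μ/(u:ℂ) + (m:ℂ)*(τ/(u:ℂ))))) =
      ∑ j ∈ Finset.range u, TmF ℓ u τ ν μ (j:ℤ) m := by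
    intro m
    have hden : (2*(π:ℂ)*I*(-ν/(u:ℂ) + μ/(u:ℂ) + (m:ℂ)*(τ/(u:ℂ)))) =
        2*(π:ℂ)*I*((μ - ν + (m:ℂ)*τ)/(u:ℂ)) := by ring
    have hx : 1 - Complex.exp (2*(π:ℂ)*I*((μ - ν + (m:ℂ)*τ)/(u:ℂ))) ≠ 0 :=
      one_sub_exp_div_ne u hu τ (μ-ν) h2 m
    have hpow : (Complex.exp (2*(π:ℂ)*I*((μ - ν + (m:ℂ)*τ)/(u:ℂ))))^u =
        Complex.exp (2*(π:ℂ)*I*(μ - ν + (m:ℂ)*τ)) := by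
      rw [← Complex.exp_nat_mul]
      congr 1
      field_simp
    have hxu : 1 - (Complex.exp (2*(π:ℂ)*I*((μ - ν + (m:ℂ)*τ)/(u:ℂ))))^u ≠ 0 := by
      rw [hpow]; exact one_sub_exp_ne τ (μ-ν) h2 m
    rw [hden, geom_expand _ _ u hx hxu]
    refine Finset.sum_congr rfl fun j hj => ?_
    rw [TmF, hpow]
    congr 1
    rw [← Complex.exp_nat_mul, ← Complex.exp_add]
    congr 1
    push_cast
    ring
  rw [appellK, tsum_congr hper,
    Summable.tsum_finsetSum (f := fun (j : ℕ) (m : ℤ) => TmF ℓ u τ ν μ (j:ℤ) m) (s := Finset.range u)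
      (fun j _ => summable_TmF ℓ u hℓ hu τ ν μ hτ h2 (j:ℤ))]
  exact sum_range_eq_sum_Icc u (fun j => ∑' m, TmF ℓ u τ ν μ j m)
lemma int_eq_zero_of_dvd_of_lt {u d : ℤ} (hu : 0 < u) (hdvd : u ∣ d) (h1 : -u < d) (h2 : d < u) :
    d = 0 := by
  rcases hdvd with ⟨k, rfl⟩
  rcases lt_trichotomy k 0 with hk | hk | hk
  · exfalso
    nlinarith [mul_le_mul_of_nonneg_left (by omega : k ≤ -1) hu.le]
  · simp [hk]
  · exfalso
    nlinarith [mul_le_mul_of_nonneg_left (by omega : (1:ℤ) ≤ k) hu.le]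

lemma coprime_dvd_aux (ℓ u : ℕ) (hcop : Nat.Coprime ℓ u) (d : ℤ) (hd : (u:ℤ) ∣ (ℓ:ℤ) * d) :
    (u:ℤ) ∣ d := by
  have hco : IsCoprime (u:ℤ) (ℓ:ℤ) := by
    rw [Int.isCoprime_iff_gcd_eq_one, Int.gcd_natCast_natCast]
    exact (Nat.coprime_comm.1 hcop)
  exact hco.dvd_of_dvd_mul_left hd

lemma emod_diff_dvd (u a b : ℤ) (h : a % u = b % u) : u ∣ a - b :=
  Int.dvd_of_emod_eq_zero (Int.emod_eq_emod_iff_emod_sub_eq_zero.mp h)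

lemma sum_bij_gen (u : ℕ) (hu : 0 < u) (ψ : ℤ×ℤ → ℤ×ℤ)
    (hmem : ∀ p ∈ (Finset.Icc (1:ℤ) (u:ℤ)) ×ˢ (Finset.Icc (0:ℤ) ((u:ℤ)-1)),
      ψ p ∈ (Finset.Icc (0:ℤ) ((u:ℤ)-1)) ×ˢ (Finset.Icc (0:ℤ) ((u:ℤ)-1)))
    (hinj : ∀ p ∈ (Finset.Icc (1:ℤ) (u:ℤ)) ×ˢ (Finset.Icc (0:ℤ) ((u:ℤ)-1)),
      ∀ q ∈ (Finset.Icc (1:ℤ) (u:ℤ)) ×ˢ (Finset.Icc (0:ℤ) ((u:ℤ)-1)), ψ p = ψ q → p = q)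
    (G : ℤ×ℤ → ℂ) :
    ∑ p ∈ (Finset.Icc (1:ℤ) (u:ℤ)) ×ˢ (Finset.Icc (0:ℤ) ((u:ℤ)-1)), G (ψ p) =
      ∑ q ∈ (Finset.Icc (0:ℤ) ((u:ℤ)-1)) ×ˢ (Finset.Icc (0:ℤ) ((u:ℤ)-1)), G q := by
  classical
  set S := (Finset.Icc (1:ℤ) (u:ℤ)) ×ˢ (Finset.Icc (0:ℤ) ((u:ℤ)-1)) with hS
  set T := (Finset.Icc (0:ℤ) ((u:ℤ)-1)) ×ˢ (Finset.Icc (0:ℤ) ((u:ℤ)-1)) with hT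
  have e1 : ((u:ℤ) + 1 - 1).toNat = u := by omega
  have e2 : ((u:ℤ) - 1 + 1 - 0).toNat = u := by omega
  have hcardS : S.card = u * u := by
    rw [hS, Finset.card_product, Int.card_Icc, Int.card_Icc, e1, e2]
  have hcardT : T.card = u * u := by
    rw [hT, Finset.card_product, Int.card_Icc, e2]
  have himg : S.image ψ = T := by
    apply Finset.eq_of_subset_of_card_le
    · intro q hq
      rw [Finset.mem_image] at hq
      obtain ⟨p, hp, rfl⟩ := hq
      exact hmem p hp
    · rw [Finset.card_image_of_injOn hinj, hcardS, hcardT]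
  rw [← himg, Finset.sum_image hinj]
lemma bij_plus (ℓ u : ℕ) (hu : 0 < u) (hcop : Nat.Coprime ℓ u) (G : ℤ×ℤ → ℂ) :
    ∑ s' ∈ Finset.Icc (1:ℤ) (u:ℤ), ∑ b ∈ Finset.Icc (0:ℤ) ((u:ℤ)-1),
        G ((ℓ:ℤ)*(s'+2*b+1) % (u:ℤ), (u:ℤ)-1-b) =
      ∑ j ∈ Finset.Icc (0:ℤ) ((u:ℤ)-1), ∑ c ∈ Finset.Icc (0:ℤ) ((u:ℤ)-1), G (j, c) := by
  rw [← Finset.sum_product' (s := Finset.Icc (1:ℤ) (u:ℤ)) (t := Finset.Icc (0:ℤ) ((u:ℤ)-1))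
    (f := fun s' b => G ((ℓ:ℤ)*(s'+2*b+1) % (u:ℤ), (u:ℤ)-1-b))]
  rw [← Finset.sum_product' (s := Finset.Icc (0:ℤ) ((u:ℤ)-1)) (t := Finset.Icc (0:ℤ) ((u:ℤ)-1))
    (f := fun j c => G (j, c))]
  refine sum_bij_gen u hu (fun p => ((ℓ:ℤ)*(p.1+2*p.2+1) % (u:ℤ), (u:ℤ)-1-p.2)) ?_ ?_ G
  · intro p hp
    rw [Finset.mem_product, Finset.mem_Icc, Finset.mem_Icc] at hp
    rw [Finset.mem_product, Finset.mem_Icc, Finset.mem_Icc]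
    have h1 : 0 ≤ (ℓ:ℤ)*(p.1+2*p.2+1) % (u:ℤ) := Int.emod_nonneg _ (by exact_mod_cast hu.ne')
    have h2 : (ℓ:ℤ)*(p.1+2*p.2+1) % (u:ℤ) < u := Int.emod_lt_of_pos _ (by exact_mod_cast hu)
    constructor
    · exact ⟨h1, by omega⟩
    · simp only
      omega
  · intro p hp q hq hpq
    rw [Finset.mem_product, Finset.mem_Icc, Finset.mem_Icc] at hp hq
    rw [Prod.ext_iff] at hpq
    obtain ⟨hj, hc⟩ := hpq
    simp only at hj hc
    have hb : p.2 = q.2 := by omega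
    have hdvd : (u:ℤ) ∣ (ℓ:ℤ)*(p.1+2*p.2+1) - (ℓ:ℤ)*(q.1+2*q.2+1) := emod_diff_dvd _ _ _ hj
    have hdvd2 : (u:ℤ) ∣ (ℓ:ℤ)*(p.1 - q.1) := by
      have he : (ℓ:ℤ)*(p.1+2*p.2+1) - (ℓ:ℤ)*(q.1+2*q.2+1) = (ℓ:ℤ)*(p.1 - q.1) := by
        rw [hb]; ring
      rwa [he] at hdvd
    have hdvd3 := coprime_dvd_aux ℓ u hcop _ hdvd2
    have hz : p.1 - q.1 = 0 :=
      int_eq_zero_of_dvd_of_lt (by exact_mod_cast hu) hdvd3 (by omega) (by omega)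
    exact Prod.ext (by omega) hb

lemma bij_minus (ℓ u : ℕ) (hu : 0 < u) (hcop : Nat.Coprime ℓ u) (G : ℤ×ℤ → ℂ) :
    ∑ s' ∈ Finset.Icc (1:ℤ) (u:ℤ), ∑ b ∈ Finset.Icc (0:ℤ) ((u:ℤ)-1),
        G ((ℓ:ℤ)*(s'+2*b+1) % (u:ℤ), (-(s'+b)) % (u:ℤ)) =
      ∑ j ∈ Finset.Icc (0:ℤ) ((u:ℤ)-1), ∑ c ∈ Finset.Icc (0:ℤ) ((u:ℤ)-1), G (j, c) := by
  rw [← Finset.sum_product' (s := Finset.Icc (1:ℤ) (u:ℤ)) (t := Finset.Icc (0:ℤ) ((u:ℤ)-1))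
    (f := fun s' b => G ((ℓ:ℤ)*(s'+2*b+1) % (u:ℤ), (-(s'+b)) % (u:ℤ)))]
  rw [← Finset.sum_product' (s := Finset.Icc (0:ℤ) ((u:ℤ)-1)) (t := Finset.Icc (0:ℤ) ((u:ℤ)-1))
    (f := fun j c => G (j, c))]
  refine sum_bij_gen u hu (fun p => ((ℓ:ℤ)*(p.1+2*p.2+1) % (u:ℤ), (-(p.1+p.2)) % (u:ℤ))) ?_ ?_ G
  · intro p hp
    rw [Finset.mem_product, Finset.mem_Icc, Finset.mem_Icc] at hp
    rw [Finset.mem_product, Finset.mem_Icc, Finset.mem_Icc]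
    have hune : ((u:ℤ)) ≠ 0 := by exact_mod_cast hu.ne'
    have hupos : (0:ℤ) < u := by exact_mod_cast hu
    exact ⟨⟨Int.emod_nonneg _ hune, by have := Int.emod_lt_of_pos ((ℓ:ℤ)*(p.1+2*p.2+1)) hupos; omega⟩,
      ⟨Int.emod_nonneg _ hune, by have := Int.emod_lt_of_pos (-(p.1+p.2)) hupos; omega⟩⟩
  · intro p hp q hq hpq
    rw [Finset.mem_product, Finset.mem_Icc, Finset.mem_Icc] at hp hq
    rw [Prod.ext_iff] at hpq
    obtain ⟨hj, hc⟩ := hpq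
    simp only at hj hc
    have hdvd1 : (u:ℤ) ∣ (ℓ:ℤ)*((p.1 - q.1) + 2*(p.2 - q.2)) := by
      have := emod_diff_dvd ((u:ℤ)) _ _ hj
      have he : (ℓ:ℤ)*(p.1+2*p.2+1) - (ℓ:ℤ)*(q.1+2*q.2+1) = (ℓ:ℤ)*((p.1 - q.1) + 2*(p.2 - q.2)) := by
        ring
      rwa [he] at this
    have hdvd1' := coprime_dvd_aux ℓ u hcop _ hdvd1
    have hdvd2 : (u:ℤ) ∣ ((p.1 - q.1) + (p.2 - q.2)) := by
      have := emod_diff_dvd ((u:ℤ)) _ _ hc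
      have he : (-(p.1+p.2)) - (-(q.1+q.2)) = -((p.1 - q.1) + (p.2 - q.2)) := by ring
      rw [he] at this
      exact (dvd_neg.mp this)
    have hdvdb : (u:ℤ) ∣ (p.2 - q.2) := by
      have := dvd_sub hdvd1' hdvd2
      have he : ((p.1 - q.1) + 2*(p.2 - q.2)) - ((p.1 - q.1) + (p.2 - q.2)) = p.2 - q.2 := by ring
      rwa [he] at this
    have hb : p.2 - q.2 = 0 :=
      int_eq_zero_of_dvd_of_lt (by exact_mod_cast hu) hdvdb (by omega) (by omega)
    have hdvds : (u:ℤ) ∣ (p.1 - q.1) := by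
      have he : ((p.1 - q.1) + (p.2 - q.2)) = (p.1 - q.1) + 0 := by rw [hb]
      rw [he, add_zero] at hdvd2
      exact hdvd2
    have hs : p.1 - q.1 = 0 :=
      int_eq_zero_of_dvd_of_lt (by exact_mod_cast hu) hdvds (by omega) (by omega)
    exact Prod.ext (by omega) (by omega)

lemma tsum_eq_sum_Icc (u : ℕ) (hu : 0 < u) (f : ℤ → ℂ) (hf : Summable f) :
    ∑ c ∈ Finset.Icc (0:ℤ) ((u:ℤ)-1), ∑' n : ℤ, f (n * u + c) = ∑' m : ℤ, f m := by
  rw [← sum_range_eq_sum_Icc u (fun c => ∑' n : ℤ, f (n * u + c))]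
  exact (tsum_int_decomp u hu f hf).symm
set_option maxHeartbeats 1600000 in
lemma rhs_plus (ℓ u : ℕ) (hℓ : 0 < ℓ) (hu : 0 < u) (hcop : Nat.Coprime ℓ u)
    (τ ν μ : ℂ) (hτ : 0 < τ.im)
    (h1 : ∀ m n : ℤ, ν + μ ≠ (m : ℂ) * τ + (n : ℂ)) :
    ∑ s' ∈ Finset.Icc (1 : ℤ) (u : ℤ), ∑ b ∈ Finset.Icc (0 : ℤ) ((u : ℤ) - 1),
        Complex.exp (2 * (π : ℂ) * I *
          ((ℓ : ℂ) / u * ((s' : ℂ) - 1) * ν + (ℓ : ℂ) / u * ((s' : ℂ) + 1 + 2 * (b : ℂ)) * μ -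
            (ℓ : ℂ) / u * ((b : ℂ) + 1) * ((b : ℂ) + (s' : ℂ)) * τ -
            ((((ℓ : ℤ) * (s' + 2 * b + 1)).fdiv (u : ℤ) : ℤ) : ℂ) *
              (ν + μ - ((b : ℂ) + 1) * τ))) *
        appellK (2 * ℓ) ((u : ℂ) * τ)
            (ν + ((s' : ℂ) - 1) / 2 * τ -
              (u : ℂ) / (2 * ℓ) * ((((ℓ : ℤ) * (s' + 2 * b + 1)).fdiv (u : ℤ) : ℤ) : ℂ) * τ)
            (μ - ((s' : ℂ) + 1) / 2 * τ - (b : ℂ) * τ +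
              (u : ℂ) / (2 * ℓ) * ((((ℓ : ℤ) * (s' + 2 * b + 1)).fdiv (u : ℤ) : ℤ) : ℂ) * τ)
      = ∑ j ∈ Finset.Icc (0:ℤ) ((u:ℤ)-1), ∑' m : ℤ, TpF ℓ u τ ν μ j m := by
  have hU : (u:ℂ) ≠ 0 := Nat.cast_ne_zero.2 hu.ne'
  have hL : (ℓ:ℂ) ≠ 0 := Nat.cast_ne_zero.2 hℓ.ne'
  have hterm : ∀ s' b : ℤ,
      Complex.exp (2 * (π : ℂ) * I *
          ((ℓ : ℂ) / u * ((s' : ℂ) - 1) * ν + (ℓ : ℂ) / u * ((s' : ℂ) + 1 + 2 * (b : ℂ)) * μ -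
            (ℓ : ℂ) / u * ((b : ℂ) + 1) * ((b : ℂ) + (s' : ℂ)) * τ -
            ((((ℓ : ℤ) * (s' + 2 * b + 1)).fdiv (u : ℤ) : ℤ) : ℂ) *
              (ν + μ - ((b : ℂ) + 1) * τ))) *
        appellK (2 * ℓ) ((u : ℂ) * τ)
            (ν + ((s' : ℂ) - 1) / 2 * τ -
              (u : ℂ) / (2 * ℓ) * ((((ℓ : ℤ) * (s' + 2 * b + 1)).fdiv (u : ℤ) : ℤ) : ℂ) * τ)
            (μ - ((s' : ℂ) + 1) / 2 * τ - (b : ℂ) * τ +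
              (u : ℂ) / (2 * ℓ) * ((((ℓ : ℤ) * (s' + 2 * b + 1)).fdiv (u : ℤ) : ℤ) : ℂ) * τ)
      = ∑' n : ℤ, TpF ℓ u τ ν μ ((ℓ:ℤ)*(s'+2*b+1) % (u:ℤ)) (n*(u:ℤ) + ((u:ℤ)-1-b)) := by
    intro s' b
    have hjd : (ℓ:ℤ)*(s'+2*b+1) % (u:ℤ) =
        (ℓ:ℤ)*(s'+2*b+1) - (u:ℤ) * (((ℓ:ℤ)*(s'+2*b+1)).fdiv (u:ℤ)) := by
      rw [Int.fdiv_eq_ediv_of_nonneg _ (Int.natCast_nonneg u), Int.emod_def]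
    rw [hjd, appellK, ← tsum_mul_left,
      ← Equiv.tsum_eq (Equiv.subRight (1:ℤ))
        (fun n => TpF ℓ u τ ν μ ((ℓ:ℤ)*(s'+2*b+1) - (u:ℤ) * (((ℓ:ℤ)*(s'+2*b+1)).fdiv (u:ℤ)))
          (n*(u:ℤ) + ((u:ℤ)-1-b)))]
    refine tsum_congr fun n => ?_
    simp only [Equiv.subRight_apply]
    rw [TpF, ← mul_div_assoc, ← Complex.exp_add]
    congr 1
    · congr 1
      push_cast
      field_simp
      ring
    · congr 2
      push_cast
      ring
  calc ∑ s' ∈ Finset.Icc (1 : ℤ) (u : ℤ), ∑ b ∈ Finset.Icc (0 : ℤ) ((u : ℤ) - 1),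
        Complex.exp (2 * (π : ℂ) * I *
          ((ℓ : ℂ) / u * ((s' : ℂ) - 1) * ν + (ℓ : ℂ) / u * ((s' : ℂ) + 1 + 2 * (b : ℂ)) * μ -
            (ℓ : ℂ) / u * ((b : ℂ) + 1) * ((b : ℂ) + (s' : ℂ)) * τ -
            ((((ℓ : ℤ) * (s' + 2 * b + 1)).fdiv (u : ℤ) : ℤ) : ℂ) *
              (ν + μ - ((b : ℂ) + 1) * τ))) *
        appellK (2 * ℓ) ((u : ℂ) * τ)
            (ν + ((s' : ℂ) - 1) / 2 * τ -
              (u : ℂ) / (2 * ℓ) * ((((ℓ : ℤ) * (s' + 2 * b + 1)).fdiv (u : ℤ) : ℤ) : ℂ) * τ)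
            (μ - ((s' : ℂ) + 1) / 2 * τ - (b : ℂ) * τ +
              (u : ℂ) / (2 * ℓ) * ((((ℓ : ℤ) * (s' + 2 * b + 1)).fdiv (u : ℤ) : ℤ) : ℂ) * τ)
      = ∑ s' ∈ Finset.Icc (1 : ℤ) (u : ℤ), ∑ b ∈ Finset.Icc (0 : ℤ) ((u : ℤ) - 1),
          (fun q : ℤ×ℤ => ∑' n : ℤ, TpF ℓ u τ ν μ q.1 (n*(u:ℤ) + q.2))
            ((ℓ:ℤ)*(s'+2*b+1) % (u:ℤ), (u:ℤ)-1-b) :=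
        Finset.sum_congr rfl fun s' _ => Finset.sum_congr rfl fun b _ => hterm s' b
    _ = ∑ j ∈ Finset.Icc (0:ℤ) ((u:ℤ)-1), ∑ c ∈ Finset.Icc (0:ℤ) ((u:ℤ)-1),
          (fun q : ℤ×ℤ => ∑' n : ℤ, TpF ℓ u τ ν μ q.1 (n*(u:ℤ) + q.2)) (j, c) :=
        bij_plus ℓ u hu hcop (fun q : ℤ×ℤ => ∑' n : ℤ, TpF ℓ u τ ν μ q.1 (n*(u:ℤ) + q.2))
    _ = ∑ j ∈ Finset.Icc (0:ℤ) ((u:ℤ)-1), ∑' m : ℤ, TpF ℓ u τ ν μ j m :=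
        Finset.sum_congr rfl fun j _ =>
          tsum_eq_sum_Icc u hu (TpF ℓ u τ ν μ j) (summable_TpF ℓ u hℓ hu τ ν μ hτ h1 j)
set_option maxHeartbeats 1600000 in
lemma rhs_minus (ℓ u : ℕ) (hℓ : 0 < ℓ) (hu : 0 < u) (hcop : Nat.Coprime ℓ u)
    (τ ν μ : ℂ) (hτ : 0 < τ.im)
    (h2 : ∀ m n : ℤ, μ - ν ≠ (m : ℂ) * τ + (n : ℂ)) :
    ∑ s' ∈ Finset.Icc (1 : ℤ) (u : ℤ), ∑ b ∈ Finset.Icc (0 : ℤ) ((u : ℤ) - 1),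
        Complex.exp (2 * (π : ℂ) * I *
          ((ℓ : ℂ) / u * ((s' : ℂ) - 1) * ν + (ℓ : ℂ) / u * ((s' : ℂ) + 1 + 2 * (b : ℂ)) * μ -
            (ℓ : ℂ) / u * ((b : ℂ) + 1) * ((b : ℂ) + (s' : ℂ)) * τ -
            ((((ℓ : ℤ) * (s' + 2 * b + 1)).fdiv (u : ℤ) : ℤ) : ℂ) *
              (ν + μ - ((b : ℂ) + 1) * τ))) *
        (Complex.exp (4 * (π : ℂ) * I * ν * ((((ℓ : ℤ) * (s' + 2 * b + 1)).fdiv (u : ℤ) : ℤ) : ℂ) +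
              2 * (π : ℂ) * I * ((s' : ℂ) - 1) *
                ((((ℓ : ℤ) * (s' + 2 * b + 1)).fdiv (u : ℤ) : ℤ) : ℂ) * τ) *
          appellK (2 * ℓ) ((u : ℂ) * τ)
            (-ν - ((s' : ℂ) - 1) / 2 * τ -
              (u : ℂ) / (2 * ℓ) * ((((ℓ : ℤ) * (s' + 2 * b + 1)).fdiv (u : ℤ) : ℤ) : ℂ) * τ)
            (μ - ((s' : ℂ) + 1) / 2 * τ - (b : ℂ) * τ +
              (u : ℂ) / (2 * ℓ) * ((((ℓ : ℤ) * (s' + 2 * b + 1)).fdiv (u : ℤ) : ℤ) : ℂ) * τ))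
      = ∑ j ∈ Finset.Icc (0:ℤ) ((u:ℤ)-1), ∑' m : ℤ, TmF ℓ u τ ν μ j m := by
  have hU : (u:ℂ) ≠ 0 := Nat.cast_ne_zero.2 hu.ne'
  have hL : (ℓ:ℂ) ≠ 0 := Nat.cast_ne_zero.2 hℓ.ne'
  have hterm : ∀ s' b : ℤ,
      Complex.exp (2 * (π : ℂ) * I *
          ((ℓ : ℂ) / u * ((s' : ℂ) - 1) * ν + (ℓ : ℂ) / u * ((s' : ℂ) + 1 + 2 * (b : ℂ)) * μ -
            (ℓ : ℂ) / u * ((b : ℂ) + 1) * ((b : ℂ) + (s' : ℂ)) * τ -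
            ((((ℓ : ℤ) * (s' + 2 * b + 1)).fdiv (u : ℤ) : ℤ) : ℂ) *
              (ν + μ - ((b : ℂ) + 1) * τ))) *
        (Complex.exp (4 * (π : ℂ) * I * ν * ((((ℓ : ℤ) * (s' + 2 * b + 1)).fdiv (u : ℤ) : ℤ) : ℂ) +
              2 * (π : ℂ) * I * ((s' : ℂ) - 1) *
                ((((ℓ : ℤ) * (s' + 2 * b + 1)).fdiv (u : ℤ) : ℤ) : ℂ) * τ) *
          appellK (2 * ℓ) ((u : ℂ) * τ)
            (-ν - ((s' : ℂ) - 1) / 2 * τ -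
              (u : ℂ) / (2 * ℓ) * ((((ℓ : ℤ) * (s' + 2 * b + 1)).fdiv (u : ℤ) : ℤ) : ℂ) * τ)
            (μ - ((s' : ℂ) + 1) / 2 * τ - (b : ℂ) * τ +
              (u : ℂ) / (2 * ℓ) * ((((ℓ : ℤ) * (s' + 2 * b + 1)).fdiv (u : ℤ) : ℤ) : ℂ) * τ))
      = ∑' n : ℤ, TmF ℓ u τ ν μ ((ℓ:ℤ)*(s'+2*b+1) % (u:ℤ)) (n*(u:ℤ) + (-(s'+b)) % (u:ℤ)) := by
    intro s' b
    have hjd : (ℓ:ℤ)*(s'+2*b+1) % (u:ℤ) =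
        (ℓ:ℤ)*(s'+2*b+1) - (u:ℤ) * (((ℓ:ℤ)*(s'+2*b+1)).fdiv (u:ℤ)) := by
      rw [Int.fdiv_eq_ediv_of_nonneg _ (Int.natCast_nonneg u), Int.emod_def]
    rw [hjd, appellK, ← tsum_mul_left, ← tsum_mul_left,
      ← Equiv.tsum_eq (Equiv.addRight ((-(s'+b))/(u:ℤ)))
        (fun n => TmF ℓ u τ ν μ ((ℓ:ℤ)*(s'+2*b+1) - (u:ℤ) * (((ℓ:ℤ)*(s'+2*b+1)).fdiv (u:ℤ)))
          (n*(u:ℤ) + (-(s'+b)) % (u:ℤ)))]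
    refine tsum_congr fun n => ?_
    simp only [Equiv.coe_addRight]
    have harg : (n + (-(s'+b))/(u:ℤ))*(u:ℤ) + (-(s'+b)) % (u:ℤ) = n*(u:ℤ) - (s'+b) := by
      have h0 := Int.mul_ediv_add_emod (-(s'+b)) (u:ℤ)
      linear_combination h0
    rw [harg, TmF, mul_div_assoc', mul_div_assoc', ← Complex.exp_add, ← Complex.exp_add]
    congr 1
    · congr 1
      push_cast
      field_simp
      ring
    · congr 2
      push_cast
      ring
  calc ∑ s' ∈ Finset.Icc (1 : ℤ) (u : ℤ), ∑ b ∈ Finset.Icc (0 : ℤ) ((u : ℤ) - 1),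
        Complex.exp (2 * (π : ℂ) * I *
          ((ℓ : ℂ) / u * ((s' : ℂ) - 1) * ν + (ℓ : ℂ) / u * ((s' : ℂ) + 1 + 2 * (b : ℂ)) * μ -
            (ℓ : ℂ) / u * ((b : ℂ) + 1) * ((b : ℂ) + (s' : ℂ)) * τ -
            ((((ℓ : ℤ) * (s' + 2 * b + 1)).fdiv (u : ℤ) : ℤ) : ℂ) *
              (ν + μ - ((b : ℂ) + 1) * τ))) *
        (Complex.exp (4 * (π : ℂ) * I * ν * ((((ℓ : ℤ) * (s' + 2 * b + 1)).fdiv (u : ℤ) : ℤ) : ℂ) +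
              2 * (π : ℂ) * I * ((s' : ℂ) - 1) *
                ((((ℓ : ℤ) * (s' + 2 * b + 1)).fdiv (u : ℤ) : ℤ) : ℂ) * τ) *
          appellK (2 * ℓ) ((u : ℂ) * τ)
            (-ν - ((s' : ℂ) - 1) / 2 * τ -
              (u : ℂ) / (2 * ℓ) * ((((ℓ : ℤ) * (s' + 2 * b + 1)).fdiv (u : ℤ) : ℤ) : ℂ) * τ)
            (μ - ((s' : ℂ) + 1) / 2 * τ - (b : ℂ) * τ +
              (u : ℂ) / (2 * ℓ) * ((((ℓ : ℤ) * (s' + 2 * b + 1)).fdiv (u : ℤ) : ℤ) : ℂ) * τ))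
      = ∑ s' ∈ Finset.Icc (1 : ℤ) (u : ℤ), ∑ b ∈ Finset.Icc (0 : ℤ) ((u : ℤ) - 1),
          (fun q : ℤ×ℤ => ∑' n : ℤ, TmF ℓ u τ ν μ q.1 (n*(u:ℤ) + q.2))
            ((ℓ:ℤ)*(s'+2*b+1) % (u:ℤ), (-(s'+b)) % (u:ℤ)) :=
        Finset.sum_congr rfl fun s' _ => Finset.sum_congr rfl fun b _ => hterm s' b
    _ = ∑ j ∈ Finset.Icc (0:ℤ) ((u:ℤ)-1), ∑ c ∈ Finset.Icc (0:ℤ) ((u:ℤ)-1),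
          (fun q : ℤ×ℤ => ∑' n : ℤ, TmF ℓ u τ ν μ q.1 (n*(u:ℤ) + q.2)) (j, c) :=
        bij_minus ℓ u hu hcop (fun q : ℤ×ℤ => ∑' n : ℤ, TmF ℓ u τ ν μ q.1 (n*(u:ℤ) + q.2))
    _ = ∑ j ∈ Finset.Icc (0:ℤ) ((u:ℤ)-1), ∑' m : ℤ, TmF ℓ u τ ν μ j m :=
        Finset.sum_congr rfl fun j _ =>
          tsum_eq_sum_Icc u hu (TmF ℓ u τ ν μ j) (summable_TmF ℓ u hℓ hu τ ν μ hτ h2 j)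


set_option maxHeartbeats 1600000 in
theorem appellK_blow_u (ℓ u : ℕ) (hℓ : 0 < ℓ) (hu : 0 < u) (hcop : Nat.Coprime ℓ u)
    (τ ν μ : ℂ) (hτ : 0 < τ.im)
    (h1 : ∀ m n : ℤ, ν + μ ≠ (m : ℂ) * τ + (n : ℂ))
    (h2 : ∀ m n : ℤ, μ - ν ≠ (m : ℂ) * τ + (n : ℂ)) :
    appellK (2 * ℓ) (τ / u) (ν / u) (μ / u) - appellK (2 * ℓ) (τ / u) (-ν / u) (μ / u) =
      ∑ s' ∈ Finset.Icc (1 : ℤ) (u : ℤ), ∑ b ∈ Finset.Icc (0 : ℤ) ((u : ℤ) - 1),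
        Complex.exp (2 * (π : ℂ) * I *
          ((ℓ : ℂ) / u * ((s' : ℂ) - 1) * ν + (ℓ : ℂ) / u * ((s' : ℂ) + 1 + 2 * (b : ℂ)) * μ -
            (ℓ : ℂ) / u * ((b : ℂ) + 1) * ((b : ℂ) + (s' : ℂ)) * τ -
            ((((ℓ : ℤ) * (s' + 2 * b + 1)).fdiv (u : ℤ) : ℤ) : ℂ) *
              (ν + μ - ((b : ℂ) + 1) * τ))) *
        (appellK (2 * ℓ) ((u : ℂ) * τ)
            (ν + ((s' : ℂ) - 1) / 2 * τ -
              (u : ℂ) / (2 * ℓ) * ((((ℓ : ℤ) * (s' + 2 * b + 1)).fdiv (u : ℤ) : ℤ) : ℂ) * τ)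
            (μ - ((s' : ℂ) + 1) / 2 * τ - (b : ℂ) * τ +
              (u : ℂ) / (2 * ℓ) * ((((ℓ : ℤ) * (s' + 2 * b + 1)).fdiv (u : ℤ) : ℤ) : ℂ) * τ) -
          Complex.exp (4 * (π : ℂ) * I * ν * ((((ℓ : ℤ) * (s' + 2 * b + 1)).fdiv (u : ℤ) : ℤ) : ℂ) +
              2 * (π : ℂ) * I * ((s' : ℂ) - 1) *
                ((((ℓ : ℤ) * (s' + 2 * b + 1)).fdiv (u : ℤ) : ℤ) : ℂ) * τ) *
            appellK (2 * ℓ) ((u : ℂ) * τ)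
              (-ν - ((s' : ℂ) - 1) / 2 * τ -
                (u : ℂ) / (2 * ℓ) * ((((ℓ : ℤ) * (s' + 2 * b + 1)).fdiv (u : ℤ) : ℤ) : ℂ) * τ)
              (μ - ((s' : ℂ) + 1) / 2 * τ - (b : ℂ) * τ +
                (u : ℂ) / (2 * ℓ) * ((((ℓ : ℤ) * (s' + 2 * b + 1)).fdiv (u : ℤ) : ℤ) : ℂ) * τ)) := by
  have key1 := appell_expand_plus ℓ u hℓ hu τ ν μ hτ h1
  have key2 := appell_expand_minus ℓ u hℓ hu τ ν μ hτ h2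
  rw [key1, key2, ← rhs_plus ℓ u hℓ hu hcop τ ν μ hτ h1,
    ← rhs_minus ℓ u hℓ hu hcop τ ν μ hτ h2, ← Finset.sum_sub_distrib]
  refine Finset.sum_congr rfl fun s' _ => ?_
  rw [← Finset.sum_sub_distrib]
  exact Finset.sum_congr rfl fun b _ => (mul_sub _ _ _).symm
end

section
/- For every τ ∈ ℍ, every μ ∈ ℂ, and every positive integer m: Φ(τ, μ + mτ) = Φ(τ, μ) − Σ_{j=1}^{m} e^{−iπ(μ + jτ)²/τ}, and Φ(τ, μ − mτ) = Φ(τ, μ) + Σ_{j=0}^{m−1} e^{−iπ(μ − jτ)²/τ}. -/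
open Complex Real MeasureTheory Finset

private lemma sinh_shift (b s : ℂ) :
    Complex.sinh (b + 2*s) - Complex.sinh b = 2 * Complex.cosh (b + s) * Complex.sinh s := by
  have e1 : Complex.exp (b+2*s) = Complex.exp (b+s) * Complex.exp s := by
    rw [← Complex.exp_add]; congr 1; ring
  have e2 : Complex.exp (-(b+2*s)) = Complex.exp (-(b+s)) * Complex.exp (-s) := by
    rw [← Complex.exp_add]; congr 1; ring
  have e3 : Complex.exp b = Complex.exp (b+s) * Complex.exp (-s) := by
    rw [← Complex.exp_add]; congr 1; ring
  have e4 : Complex.exp (-b) = Complex.exp (-(b+s)) * Complex.exp s := by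
    rw [← Complex.exp_add]; congr 1; ring
  simp only [Complex.sinh, Complex.cosh, e1, e2, e3, e4]
  ring

private lemma abs_sinh_lower (u : ℂ) : Real.sinh |u.re| ≤ ‖Complex.sinh u‖ := by
  have h2 : |‖Complex.exp u‖ - ‖Complex.exp (-u)‖| ≤
      ‖Complex.exp u - Complex.exp (-u)‖ :=
    abs_norm_sub_norm_le _ _
  rw [Complex.norm_exp, Complex.norm_exp, neg_re] at h2
  have h3 : Real.sinh |u.re| = |Real.exp u.re - Real.exp (-u.re)| / 2 := by
    rw [← Real.abs_sinh, Real.sinh_eq, abs_div]; norm_num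
  rw [h3, Complex.sinh, norm_div]
  simp only [Complex.norm_two]
  gcongr

private lemma abs_cosh_le (u : ℂ) : ‖Complex.cosh u‖ ≤ Real.exp (‖u‖) := by
  have h1 : u.re ≤ ‖u‖ := Complex.re_le_norm u
  have h2 : -u.re ≤ ‖u‖ := by
    have := Complex.abs_re_le_norm u
    cases abs_le.1 this with
    | intro a b => linarith
  calc ‖Complex.cosh u‖
      ≤ (‖Complex.exp u‖ + ‖Complex.exp (-u)‖) / 2 := by
        rw [Complex.cosh, norm_div, Complex.norm_two]; gcongr; exact norm_add_le _ _
    _ ≤ (Real.exp (‖u‖) + Real.exp (‖u‖)) / 2 := by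
        rw [Complex.norm_exp, Complex.norm_exp, neg_re]; gcongr
    _ = Real.exp (‖u‖) := by ring

private lemma abs_sinh_upper (u : ℂ) :
    ‖Complex.sinh u‖ ≤ ‖u‖ * Real.exp (‖u‖) := by
  have hf : ∀ t ∈ Set.Icc (0:ℝ) 1, HasDerivWithinAt (fun t : ℝ => Complex.sinh ((t:ℂ) * u))
      ((fun t : ℝ => Complex.cosh ((t:ℂ) * u) * u) t) (Set.Icc (0:ℝ) 1) t := by
    intro t _
    have h1 : HasDerivAt (fun t : ℝ => (t : ℂ) * u) u t := by
      simpa using (Complex.ofRealCLM.hasDerivAt (x := t)).mul_const u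
    exact ((Complex.hasDerivAt_sinh _).comp t h1).hasDerivWithinAt
  have hb : ∀ t ∈ Set.Ico (0:ℝ) 1,
      ‖(fun t : ℝ => Complex.cosh ((t:ℂ) * u) * u) t‖ ≤ ‖u‖ * Real.exp (‖u‖) := by
    intro t ht
    rw [norm_mul]
    calc ‖Complex.cosh ((t:ℂ) * u)‖ * ‖u‖
        ≤ Real.exp (‖(t:ℂ)*u‖) * ‖u‖ := by
          gcongr; exact abs_cosh_le _
      _ ≤ Real.exp (‖u‖) * ‖u‖ := by
          gcongr
          rw [norm_mul, Complex.norm_real, Real.norm_eq_abs]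
          nlinarith [norm_nonneg u, _root_.abs_of_nonneg ht.1, ht.1, ht.2.le,
            norm_nonneg ((t:ℂ)*u)]
      _ = ‖u‖ * Real.exp (‖u‖) := by ring
  have key := norm_image_sub_le_of_norm_deriv_le_segment_01' (E := ℂ) hf hb
  simpa using key

private lemma w_facts (τ : ℂ) (hτ : 0 < τ.im) :
    ((-I*τ) ^ (1/2:ℂ)) * ((-I*τ) ^ (1/2:ℂ)) = -I*τ ∧ 0 < ((-I*τ) ^ (1/2:ℂ)).re := by
  have hzre : (-I*τ).re = τ.im := by simp [Complex.mul_re]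
  have hz : (-I*τ) ≠ 0 := by
    intro h; rw [h] at hzre; simp at hzre; linarith
  constructor
  · rw [← Complex.cpow_add _ _ hz]; norm_num
  · rw [Complex.cpow_def_of_ne_zero hz]
    rw [Complex.exp_re]
    have harg : |Complex.arg (-I*τ)| < π/2 :=
      Complex.abs_arg_lt_pi_div_two_iff.2 (Or.inl (by rw [hzre]; exact hτ))
    have him : (Complex.log (-I*τ) * (1/2)).im = Complex.arg (-I*τ) / 2 := by
      simp [Complex.mul_im, Complex.log_im]
      ring
    rw [him]
    apply mul_pos (Real.exp_pos _)
    apply Real.cos_pos_of_mem_Ioo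
    constructor
    · have := abs_lt.1 harg
      linarith [Real.pi_pos]
    · have := abs_lt.1 harg
      linarith [Real.pi_pos]

private lemma integrable_phi (τ μ : ℂ) (hτ : 0 < τ.im) :
    Integrable (fun x : ℝ => Complex.exp (-(π : ℂ) * (x : ℂ) ^ 2) *
      (Complex.sinh ((π : ℂ) * (x : ℂ) * (-I * τ) ^ (1/2 : ℂ) * (1 + 2 * μ / τ)) /
       Complex.sinh ((π : ℂ) * (x : ℂ) * (-I * τ) ^ (1/2 : ℂ)))) := by
  set w : ℂ := (-I * τ) ^ (1/2 : ℂ) with hw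
  obtain ⟨hw2, hwre⟩ := w_facts τ hτ
  set A : ℝ := ‖(π:ℂ) * w * (1 + 2*μ/τ)‖ with hA
  set r : ℝ := π * w.re with hr
  have hrpos : 0 < r := mul_pos Real.pi_pos hwre
  have hApos : 0 ≤ A := norm_nonneg _
  have hb : (0:ℝ) < ((π:ℂ)).re := by simpa using Real.pi_pos
  have hint : ∀ B : ℝ, Integrable (fun x : ℝ => Real.exp (-π*x^2 + B*x)) := by
    intro B
    refine ((integrable_cexp_quadratic (b := (π:ℂ)) hb (B:ℂ) 0).norm).congr
      (Filter.Eventually.of_forall fun x => ?_)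
    simp only [Complex.norm_exp]
    congr 1
    have : (-(π:ℂ)*(x:ℂ)^2 + (B:ℂ)*(x:ℂ) + 0) = ((-π*x^2 + B*x : ℝ) : ℂ) := by
      push_cast; ring
    rw [this, Complex.ofReal_re]
  refine Integrable.mono' (g := fun x : ℝ =>
      (A/r) * (Real.exp (-π*x^2 + A*x) + Real.exp (-π*x^2 + (-A)*x))) ?_ ?_ ?_
  · exact (((hint A).add (hint (-A)))).const_mul _
  · apply Measurable.aestronglyMeasurable
    fun_prop
  · have h0 : ∀ᵐ x : ℝ, x ≠ 0 := by
      rw [ae_iff]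
      simp only [ne_eq, not_not]
      have hset : {x : ℝ | x = 0} = {(0:ℝ)} := by ext y; simp
      rw [hset]
      exact measure_singleton 0
    filter_upwards [h0] with x hx
    have hxpos : 0 < |x| := abs_pos.2 hx
    -- numerator bound
    have hnum : ‖Complex.sinh ((π:ℂ) * (x:ℂ) * w * (1 + 2*μ/τ))‖
        ≤ A * |x| * Real.exp (A * |x|) := by
      have harg : ‖(π:ℂ) * (x:ℂ) * w * (1 + 2*μ/τ)‖ = A * |x| := by
        rw [hA]
        rw [show (π:ℂ) * (x:ℂ) * w * (1 + 2*μ/τ) = ((π:ℂ) * w * (1 + 2*μ/τ)) * (x:ℂ) by ring]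
        rw [norm_mul, Complex.norm_real, Real.norm_eq_abs]
      calc ‖Complex.sinh ((π:ℂ) * (x:ℂ) * w * (1 + 2*μ/τ))‖
          ≤ ‖(π:ℂ) * (x:ℂ) * w * (1 + 2*μ/τ)‖ *
            Real.exp (‖(π:ℂ) * (x:ℂ) * w * (1 + 2*μ/τ)‖) := abs_sinh_upper _
        _ = A * |x| * Real.exp (A * |x|) := by rw [harg]
    -- denominator bound
    have hre : ((π:ℂ) * (x:ℂ) * w).re = π * x * w.re := by
      rw [show (π:ℂ) * (x:ℂ) * w = ((π * x : ℝ) : ℂ) * w by push_cast; ring]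
      rw [Complex.re_ofReal_mul]
    have hden : r * |x| ≤ ‖Complex.sinh ((π:ℂ) * (x:ℂ) * w)‖ := by
      have h1 : Real.sinh |((π:ℂ) * (x:ℂ) * w).re| ≤ _ := abs_sinh_lower ((π:ℂ) * (x:ℂ) * w)
      have h2 : |((π:ℂ) * (x:ℂ) * w).re| = r * |x| := by
        rw [hre, abs_mul, abs_mul, abs_of_pos Real.pi_pos, abs_of_pos hwre, hr]; ring
      rw [h2] at h1
      exact le_trans (Real.self_le_sinh_iff.2 (by positivity)) h1
    have hdenpos : 0 < ‖Complex.sinh ((π:ℂ) * (x:ℂ) * w)‖ :=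
      lt_of_lt_of_le (by positivity) hden
    -- assemble
    rw [norm_mul, norm_div]
    have hexp : ‖Complex.exp (-(π:ℂ) * (x:ℂ)^2)‖ = Real.exp (-π * x^2) := by
      rw [Complex.norm_exp]
      congr 1
      rw [show -(π:ℂ) * (x:ℂ)^2 = ((-π * x^2 : ℝ) : ℂ) by push_cast; ring, Complex.ofReal_re]
    rw [hexp]
    have hratio : ‖Complex.sinh ((π:ℂ) * (x:ℂ) * w * (1 + 2*μ/τ))‖ /
        ‖Complex.sinh ((π:ℂ) * (x:ℂ) * w)‖
        ≤ (A/r) * Real.exp (A * |x|) := by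
      calc ‖Complex.sinh ((π:ℂ) * (x:ℂ) * w * (1 + 2*μ/τ))‖ /
          ‖Complex.sinh ((π:ℂ) * (x:ℂ) * w)‖
          ≤ (A * |x| * Real.exp (A * |x|)) / (r * |x|) :=
            div_le_div₀ (by positivity) hnum (by positivity) hden
        _ = (A/r) * Real.exp (A * |x|) := by
            field_simp
    calc Real.exp (-π*x^2) * (‖Complex.sinh ((π:ℂ) * (x:ℂ) * w * (1 + 2*μ/τ))‖ /
          ‖Complex.sinh ((π:ℂ) * (x:ℂ) * w)‖)
        ≤ Real.exp (-π*x^2) * ((A/r) * Real.exp (A * |x|)) := by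
          gcongr
      _ = (A/r) * Real.exp (-π*x^2 + A * |x|) := by rw [Real.exp_add]; ring
      _ ≤ (A/r) * (Real.exp (-π*x^2 + A*x) + Real.exp (-π*x^2 + (-A)*x)) := by
          gcongr (A/r) * ?_
          rcases abs_cases x with ⟨h, _⟩ | ⟨h, _⟩
          · rw [h]
            exact le_add_of_nonneg_right (Real.exp_pos _).le
          · rw [h]
            have : -π*x^2 + A * -x = -π*x^2 + (-A)*x := by ring
            rw [this]
            exact le_add_of_nonneg_left (Real.exp_pos _).le

private lemma phi_step (τ μ : ℂ) (hτ : 0 < τ.im) :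
    PhiFun τ (μ + τ) = PhiFun τ μ - Complex.exp (-(π:ℂ)*I*(μ+τ)^2/τ) := by
  obtain ⟨hw2, hwre⟩ := w_facts τ hτ
  set w : ℂ := (-I * τ) ^ (1/2 : ℂ) with hw
  have hτ0 : τ ≠ 0 := by intro h; rw [h] at hτ; simp at hτ
  have hπ : (π:ℂ) ≠ 0 := Complex.ofReal_ne_zero.2 Real.pi_ne_zero
  set q : ℂ := (π:ℂ) * w * (2 + 2*μ/τ) with hq
  set E : ℂ := Complex.exp (-(π:ℂ)*I*(μ+τ)^2/τ) with hE
  have hb' : (-(π:ℂ)).re < 0 := by simpa using Real.pi_pos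
  -- value of the Gaussian integrals
  have hgauss : ∀ c : ℂ, (∫ x : ℝ, Complex.exp (-(π:ℂ) * (x:ℂ)^2 + c * (x:ℂ))) =
      Complex.exp (c^2 / (4*(π:ℂ))) := by
    intro c
    have h := integral_cexp_quadratic hb' c 0
    simp only [add_zero] at h
    rw [h, neg_neg, div_self hπ, Complex.one_cpow, one_mul]
    congr 1
    field_simp
    ring
  have hq2 : q^2 / (4*(π:ℂ)) = -(π:ℂ)*I*(μ+τ)^2/τ := by
    have : q^2 = (π:ℂ)^2 * (w*w) * (2+2*μ/τ)^2 := by rw [hq]; ring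
    rw [this, hw2]
    field_simp
    ring
  -- a.e. identity for the difference of integrands
  have hdiff : ∀ᵐ x : ℝ, (Complex.exp (-(π : ℂ) * (x : ℂ) ^ 2) *
      (Complex.sinh ((π : ℂ) * (x : ℂ) * w * (1 + 2 * (μ+τ) / τ)) /
       Complex.sinh ((π : ℂ) * (x : ℂ) * w)) -
      Complex.exp (-(π : ℂ) * (x : ℂ) ^ 2) *
      (Complex.sinh ((π : ℂ) * (x : ℂ) * w * (1 + 2 * μ / τ)) /
       Complex.sinh ((π : ℂ) * (x : ℂ) * w))) =
      Complex.exp (-(π:ℂ) * (x:ℂ)^2 + q * (x:ℂ)) +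
      Complex.exp (-(π:ℂ) * (x:ℂ)^2 + (-q) * (x:ℂ)) := by
    have h0 : ∀ᵐ x : ℝ, x ≠ 0 := by
      rw [ae_iff]
      simp only [ne_eq, not_not]
      have hset : {x : ℝ | x = 0} = {(0:ℝ)} := by ext y; simp
      rw [hset]; exact measure_singleton 0
    filter_upwards [h0] with x hx
    set s : ℂ := (π:ℂ) * (x:ℂ) * w with hs
    have hsne : Complex.sinh s ≠ 0 := by
      have hre : s.re = π * x * w.re := by
        rw [hs, show (π:ℂ) * (x:ℂ) * w = ((π * x : ℝ) : ℂ) * w by push_cast; ring,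
          Complex.re_ofReal_mul]
      have h1 := abs_sinh_lower s
      have h2 : |s.re| = (π * w.re) * |x| := by
        rw [hre, abs_mul, abs_mul, abs_of_pos Real.pi_pos, abs_of_pos hwre]; ring
      rw [h2] at h1
      have hpos : 0 < (π * w.re) * |x| := by positivity
      have : 0 < ‖Complex.sinh s‖ :=
        lt_of_lt_of_le (lt_of_lt_of_le hpos (Real.self_le_sinh_iff.2 hpos.le)) h1
      exact fun h => by rw [h] at this; simp at this
    have hB : (π : ℂ) * (x : ℂ) * w * (1 + 2 * (μ+τ) / τ) =
        s * (1 + 2*μ/τ) + 2*s := by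
      rw [hs]; field_simp; ring
    have hBs : s * (1 + 2*μ/τ) + s = q * (x:ℂ) := by rw [hs, hq]; ring
    have hshift := sinh_shift (s * (1 + 2*μ/τ)) s
    have hkey : Complex.sinh ((π : ℂ) * (x : ℂ) * w * (1 + 2 * (μ+τ) / τ)) /
        Complex.sinh s - Complex.sinh ((π : ℂ) * (x : ℂ) * w * (1 + 2 * μ / τ)) /
        Complex.sinh s = 2 * Complex.cosh (q * (x:ℂ)) := by
      rw [div_sub_div_same, hB, show (π : ℂ) * (x : ℂ) * w * (1 + 2 * μ / τ) =
        s * (1 + 2*μ/τ) by rw [hs], hshift, hBs]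
      rw [mul_div_assoc, div_self hsne]
      try rw [mul_one]
      try ring
    rw [← mul_sub, hkey, Complex.cosh]
    rw [show ((-q)*(x:ℂ)) = -(q*(x:ℂ)) by ring]
    rw [Complex.exp_add, Complex.exp_add]
    ring
  -- integrate
  have hI : (∫ x : ℝ, Complex.exp (-(π : ℂ) * (x : ℂ) ^ 2) *
      (Complex.sinh ((π : ℂ) * (x : ℂ) * w * (1 + 2 * (μ+τ) / τ)) /
       Complex.sinh ((π : ℂ) * (x : ℂ) * w))) =
      (∫ x : ℝ, Complex.exp (-(π : ℂ) * (x : ℂ) ^ 2) *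
      (Complex.sinh ((π : ℂ) * (x : ℂ) * w * (1 + 2 * μ / τ)) /
       Complex.sinh ((π : ℂ) * (x : ℂ) * w))) + 2 * E := by
    have h1 := integral_sub (integrable_phi τ (μ+τ) hτ) (integrable_phi τ μ hτ)
    have h2 := integral_congr_ae hdiff
    rw [h1] at h2
    have h3 : (∫ x : ℝ, (Complex.exp (-(π:ℂ) * (x:ℂ)^2 + q * (x:ℂ)) +
        Complex.exp (-(π:ℂ) * (x:ℂ)^2 + (-q) * (x:ℂ)))) = 2 * E := by
      rw [integral_add]
      · rw [hgauss q, hgauss (-q)]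
        have h4 : (-q)^2 = q^2 := by ring
        rw [h4, hq2, hE]
        ring
      · simpa using integrable_cexp_quadratic (b := (π:ℂ)) (by simpa using Real.pi_pos) q 0
      · simpa using integrable_cexp_quadratic (b := (π:ℂ)) (by simpa using Real.pi_pos) (-q) 0
    rw [h3] at h2
    linear_combination h2
  rw [PhiFun, PhiFun]
  simp only [← hw]
  rw [hI]
  ring

private lemma phi_forward (τ μ : ℂ) (hτ : 0 < τ.im) : ∀ m : ℕ,
    PhiFun τ (μ + (m:ℂ)*τ) =
      PhiFun τ μ - ∑ j ∈ Finset.Icc 1 m, Complex.exp (-(π:ℂ)*I*(μ + (j:ℂ)*τ)^2/τ)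
  | 0 => by simp
  | (m+1) => by
      have ih := phi_forward τ μ hτ m
      have h := phi_step τ (μ + (m:ℂ)*τ) hτ
      have e1 : μ + ((m+1:ℕ):ℂ)*τ = μ + (m:ℂ)*τ + τ := by push_cast; ring
      rw [e1, h, ih, Finset.sum_Icc_succ_top (Nat.le_add_left 1 m)]
      have e2 : μ + (m:ℂ)*τ + τ = μ + ((m+1:ℕ):ℂ)*τ := by push_cast; ring
      rw [e2]
      push_cast
      ring

private lemma phi_backward (τ μ : ℂ) (hτ : 0 < τ.im) : ∀ m : ℕ,
    PhiFun τ (μ - (m:ℂ)*τ) =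
      PhiFun τ μ + ∑ j ∈ Finset.range m, Complex.exp (-(π:ℂ)*I*(μ - (j:ℂ)*τ)^2/τ)
  | 0 => by simp
  | (m+1) => by
      have ih := phi_backward τ μ hτ m
      have h := phi_step τ (μ - ((m+1:ℕ):ℂ)*τ) hτ
      have e1 : μ - ((m+1:ℕ):ℂ)*τ + τ = μ - (m:ℂ)*τ := by push_cast; ring
      rw [e1] at h
      rw [Finset.sum_range_succ]
      have h2 : PhiFun τ (μ - ((m+1:ℕ):ℂ)*τ) =
          PhiFun τ (μ - (m:ℂ)*τ) + Complex.exp (-(π:ℂ)*I*(μ-(m:ℂ)*τ)^2/τ) := by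
        linear_combination -h
      rw [h2, ih]
      ring


theorem PhiFun_open_quasiperiodicity (τ μ : ℂ) (hτ : 0 < τ.im) (m : ℕ) (hm : 0 < m) :
    PhiFun τ (μ + (m : ℂ) * τ) =
      PhiFun τ μ - ∑ j ∈ Finset.Icc 1 m, Complex.exp (-(π : ℂ) * I * (μ + (j : ℂ) * τ) ^ 2 / τ) ∧
    PhiFun τ (μ - (m : ℂ) * τ) =
      PhiFun τ μ + ∑ j ∈ Finset.range m, Complex.exp (-(π : ℂ) * I * (μ - (j : ℂ) * τ) ^ 2 / τ) := by
  exact ⟨phi_forward τ μ hτ m, phi_backward τ μ hτ m⟩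
end

section
/- For every τ ∈ ℍ and every μ ∈ ℂ: Φ(τ, −μ) = −i/√(−iτ) − e^{−iπ μ²/τ} − Φ(τ, μ). -/
open Complex Real MeasureTheory Finset

lemma aux_norm_cosh_le (z : ℂ) : ‖Complex.cosh z‖ ≤ Real.exp ‖z‖ := by
  rw [Complex.cosh, norm_div]
  have h1 : ‖Complex.exp z‖ ≤ Real.exp ‖z‖ := by
    rw [Complex.norm_exp]
    exact Real.exp_le_exp.2 ((Complex.re_le_norm z))
  have h2 : ‖Complex.exp (-z)‖ ≤ Real.exp ‖z‖ := by
    rw [Complex.norm_exp]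
    refine Real.exp_le_exp.2 ?_
    simpa using (Complex.re_le_norm (-z)).trans (by simp)
  calc ‖Complex.exp z + Complex.exp (-z)‖ / ‖(2:ℂ)‖
      ≤ (Real.exp ‖z‖ + Real.exp ‖z‖) / 2 := by
        apply div_le_div₀ (by positivity) ((norm_add_le _ _).trans (add_le_add h1 h2)) two_pos
        simp
    _ = Real.exp ‖z‖ := by ring

lemma aux_norm_sinh_le (z : ℂ) : ‖Complex.sinh z‖ ≤ ‖z‖ * Real.exp ‖z‖ := by
  have hz : z ∈ Metric.closedBall (0:ℂ) ‖z‖ := by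
    rw [Metric.mem_closedBall, dist_zero_right]
  have := Convex.norm_image_sub_le_of_norm_hasDerivWithin_le
    (f := Complex.sinh) (f' := Complex.cosh) (s := Metric.closedBall (0:ℂ) ‖z‖)
    (fun x _ => (Complex.hasDerivAt_sinh x).hasDerivWithinAt)
    (fun x hx => (aux_norm_cosh_le x).trans (Real.exp_le_exp.2 (by
      rw [Metric.mem_closedBall, dist_zero_right] at hx; exact hx)))
    (convex_closedBall _ _) (Metric.mem_closedBall_self (norm_nonneg z)) hz
  simpa [Complex.sinh_zero, mul_comm] using this

lemma aux_sinh_lower (z : ℂ) : Real.sinh |z.re| ≤ ‖Complex.sinh z‖ := by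
  rw [Complex.sinh, norm_div]
  have h : |‖Complex.exp z‖ - ‖Complex.exp (-z)‖| ≤ ‖Complex.exp z - Complex.exp (-z)‖ :=
    abs_norm_sub_norm_le _ _
  rw [Complex.norm_exp, Complex.norm_exp, neg_re] at h
  have h2 : Real.exp z.re - Real.exp (-z.re) = 2 * Real.sinh z.re := by
    rw [Real.sinh_eq]; ring
  rw [h2] at h
  have : |2 * Real.sinh z.re| = 2 * Real.sinh |z.re| := by
    rw [abs_mul, Real.abs_sinh]; norm_num
  rw [this] at h
  have h3 : ‖(2:ℂ)‖ = 2 := by norm_num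
  rw [h3]
  linarith

lemma aux_integrable (c s : ℂ) (hcre : 0 < c.re) :
    Integrable (fun x : ℝ => Complex.exp (-(π : ℂ) * (x : ℂ) ^ 2) *
      (Complex.sinh ((π : ℂ) * (x : ℂ) * c * s) / Complex.sinh ((π : ℂ) * (x : ℂ) * c))) := by
  have hπ : (0:ℝ) < (π:ℂ).re := by simpa using Real.pi_pos
  set K : ℝ := ‖c * s‖ / c.re with hK
  set B : ℝ := π * ‖c * s‖ with hB
  have hKnn : 0 ≤ K := div_nonneg (norm_nonneg _) hcre.le
  have hBnn : 0 ≤ B := mul_nonneg Real.pi_pos.le (norm_nonneg _)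
  have hg : Integrable (fun x : ℝ => K * (‖Complex.exp (-(π:ℂ) * (x:ℂ)^2 + (B:ℂ) * x + 0)‖ +
      ‖Complex.exp (-(π:ℂ) * (x:ℂ)^2 + (↑(-B) : ℂ) * x + 0)‖)) :=
    (((integrable_cexp_quadratic hπ (B:ℂ) 0).norm.add
      (integrable_cexp_quadratic hπ (↑(-B) : ℂ) 0).norm).const_mul K)
  refine hg.mono' ?_ ?_
  · apply Measurable.aestronglyMeasurable
    fun_prop
  · filter_upwards with x
    have hnorm : ∀ b : ℝ, ‖Complex.exp (-(π:ℂ) * (x:ℂ)^2 + (b:ℂ) * x + 0)‖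
        = Real.exp (-(π * x^2) + b * x) := by
      intro b
      have h : -(π:ℂ) * (x:ℂ)^2 + (b:ℂ) * x + 0 = ((-(π * x^2) + b * x : ℝ) : ℂ) := by
        push_cast; ring
      rw [h, Complex.norm_exp, Complex.ofReal_re]
    rw [norm_mul]
    rcases eq_or_ne x 0 with rfl | hx
    · simp only [Complex.ofReal_zero, mul_zero, zero_mul, zero_pow, ne_eq, OfNat.ofNat_ne_zero,
        not_false_eq_true, Complex.sinh_zero, div_zero, norm_zero, mul_zero]
      positivity
    · have habs : ‖Complex.exp (-(π:ℂ) * (x:ℂ)^2)‖ = Real.exp (-(π * x^2)) := by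
        have h : -(π:ℂ) * (x:ℂ)^2 = ((-(π * x^2) : ℝ) : ℂ) := by push_cast; ring
        rw [h, Complex.norm_exp, Complex.ofReal_re]
      rw [habs, norm_div, hnorm B, hnorm (-B)]

      have hd0 : (0:ℝ) < π * |x| * c.re := by positivity
      have hdl : π * |x| * c.re ≤ ‖Complex.sinh ((π:ℂ) * (x:ℂ) * c)‖ := by
        have h1 : Real.sinh (π * |x| * c.re) ≤ ‖Complex.sinh ((π:ℂ) * (x:ℂ) * c)‖ := by
          have hre : ((π:ℂ) * (x:ℂ) * c).re = π * x * c.re := by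
            simp [Complex.mul_re]
          have h2 := aux_sinh_lower ((π:ℂ) * (x:ℂ) * c)
          rw [hre] at h2
          have h3 : |π * x * c.re| = π * |x| * c.re := by
            rw [abs_mul, abs_mul, abs_of_pos Real.pi_pos, abs_of_pos hcre]
          rwa [h3] at h2
        exact le_trans (Real.self_le_sinh_iff.2 hd0.le) h1
      have hnu : ‖Complex.sinh ((π:ℂ) * (x:ℂ) * c * s)‖ ≤
          (π * |x| * ‖c * s‖) * Real.exp (B * |x|) := by
        have habs2 : ‖(π:ℂ) * (x:ℂ) * c * s‖ = π * |x| * ‖c * s‖ := by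
          rw [show (π:ℂ) * (x:ℂ) * c * s = ((π:ℂ) * (x:ℂ)) * (c * s) by ring]
          simp [norm_mul, Complex.norm_real, Real.norm_eq_abs, abs_of_pos Real.pi_pos]
        have heq : B * |x| = π * |x| * ‖c * s‖ := by rw [hB]; ring
        rw [heq]
        have h4 := aux_norm_sinh_le ((π:ℂ) * (x:ℂ) * c * s)
        rwa [habs2] at h4
      have hratio : ‖Complex.sinh ((π:ℂ) * (x:ℂ) * c * s)‖ / ‖Complex.sinh ((π:ℂ) * (x:ℂ) * c)‖
          ≤ K * Real.exp (B * |x|) := by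
        have := div_le_div₀ (by positivity) hnu hd0 hdl
        refine this.trans (le_of_eq ?_)
        rw [hK]
        field_simp
      calc Real.exp (-(π * x^2)) * (‖Complex.sinh ((π:ℂ) * (x:ℂ) * c * s)‖ / ‖Complex.sinh ((π:ℂ) * (x:ℂ) * c)‖)
          ≤ Real.exp (-(π * x^2)) * (K * Real.exp (B * |x|)) := by
            gcongr
        _ ≤ K * (Real.exp (-(π * x^2) + B * x) + Real.exp (-(π * x^2) + (-B) * x)) := by
            have hBx : Real.exp (B * |x|) ≤ Real.exp (B * x) + Real.exp (-B * x) := by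
              rcases le_total 0 x with h | h
              · rw [_root_.abs_of_nonneg h]; nlinarith [Real.exp_pos (-B * x)]
              · rw [_root_.abs_of_nonpos h, show B * -x = -B * x from by ring]
                nlinarith [Real.exp_pos (B * x)]
            calc Real.exp (-(π * x^2)) * (K * Real.exp (B * |x|))
                ≤ Real.exp (-(π * x^2)) * (K * (Real.exp (B * x) + Real.exp (-B * x))) := by gcongr
              _ = K * (Real.exp (-(π * x^2) + B * x) + Real.exp (-(π * x^2) + (-B) * x)) := by
                  rw [Real.exp_add, Real.exp_add]; ring

theorem PhiFun_reflection (τ μ : ℂ) (hτ : 0 < τ.im) :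
    PhiFun τ (-μ) =
      -I / (-I * τ) ^ (1/2 : ℂ) - Complex.exp (-(π : ℂ) * I * μ ^ 2 / τ) - PhiFun τ μ := by
  have hτ0 : τ ≠ 0 := by
    intro h; rw [h] at hτ; simp at hτ
  have hz0 : -I * τ ≠ 0 := by
    simp [I_ne_zero, hτ0]
  set c : ℂ := (-I * τ) ^ (1/2 : ℂ) with hcdef
  have hc2 : c * c = -I * τ := by
    rw [hcdef, ← Complex.cpow_add _ _ hz0]
    norm_num
  have hcre : 0 < c.re := by
    rw [hcdef, show (1/2 : ℂ) = (2⁻¹ : ℂ) by norm_num, Complex.cpow_inv_two_re]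
    apply Real.sqrt_pos.2
    have h1 : (-I * τ).re = τ.im := by simp
    have h2 : 0 < ‖-I * τ‖ := by
      simpa using (norm_pos_iff.mpr hz0)
    rw [h1]
    positivity
  have hc0 : c ≠ 0 := by
    intro h; rw [h] at hcre; simp at hcre
  have hπℂ : ((π : ℂ)) ≠ 0 := Complex.ofReal_ne_zero.mpr Real.pi_ne_zero
  have hπre : (0:ℝ) < (π:ℂ).re := by simpa using Real.pi_pos
  -- nonvanishing of sinh(π x c) for x ≠ 0
  have hsinh_ne : ∀ x : ℝ, x ≠ 0 → Complex.sinh ((π:ℂ) * (x:ℂ) * c) ≠ 0 := by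
    intro x hx h0
    have hre : ((π:ℂ) * (x:ℂ) * c).re = π * x * c.re := by simp [Complex.mul_re]
    have h1 := aux_sinh_lower ((π:ℂ) * (x:ℂ) * c)
    rw [h0, hre] at h1
    simp only [norm_zero] at h1
    have h2 : 0 < |π * x * c.re| := by
      apply abs_pos.2
      positivity
    have := Real.sinh_pos_iff.2 h2
    linarith
  set t : ℂ := 2 * μ / τ with htdef
  set b : ℂ := (π:ℂ) * c * t with hbdef
  -- pointwise identity
  have hpt : ∀ᵐ x : ℝ, Complex.exp (-(π : ℂ) * (x : ℂ) ^ 2) *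
        (Complex.sinh ((π : ℂ) * (x : ℂ) * c * (1 + t)) / Complex.sinh ((π : ℂ) * (x : ℂ) * c)) +
      Complex.exp (-(π : ℂ) * (x : ℂ) ^ 2) *
        (Complex.sinh ((π : ℂ) * (x : ℂ) * c * (1 - t)) / Complex.sinh ((π : ℂ) * (x : ℂ) * c)) =
      Complex.exp (-(π:ℂ) * (x:ℂ)^2 + b * x + 0) + Complex.exp (-(π:ℂ) * (x:ℂ)^2 + (-b) * x + 0) := by
    have hne : ∀ᵐ x : ℝ, x ≠ 0 := by
      refine MeasureTheory.ae_iff.2 ?_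
      simp
    filter_upwards [hne] with x hx0
    · have hs := hsinh_ne x hx0
      set a : ℂ := (π:ℂ) * (x:ℂ) * c with hadef
      have e1 : a * (1 + t) = a + a * t := by ring
      have e2 : a * (1 - t) = a - a * t := by ring
      rw [e1, e2, Complex.sinh_add, Complex.sinh_sub]
      have hcosh : Complex.exp (-(π:ℂ) * (x:ℂ)^2 + b * x + 0) + Complex.exp (-(π:ℂ) * (x:ℂ)^2 + (-b) * x + 0)
          = Complex.exp (-(π:ℂ) * (x:ℂ)^2) * (2 * Complex.cosh (a * t)) := by
        rw [Complex.cosh]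
        rw [show -(π:ℂ) * (x:ℂ)^2 + b * x + 0 = -(π:ℂ) * (x:ℂ)^2 + (b * x) by ring,
          show -(π:ℂ) * (x:ℂ)^2 + (-b) * x + 0 = -(π:ℂ) * (x:ℂ)^2 + (-(b * x)) by ring,
          Complex.exp_add, Complex.exp_add]
        have : a * t = b * x := by rw [hadef, hbdef]; ring
        rw [this]
        ring
      rw [hcosh]
      field_simp
      ring
  -- the two integrands are integrable
  have hi1 := aux_integrable c (1 + t) hcre
  have hi2 := aux_integrable c (1 - t) hcre
  have hq1 : Integrable (fun x : ℝ => Complex.exp (-(π:ℂ) * (x:ℂ)^2 + b * x + 0)) :=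
    integrable_cexp_quadratic hπre b 0
  have hq2 : Integrable (fun x : ℝ => Complex.exp (-(π:ℂ) * (x:ℂ)^2 + (-b) * x + 0)) :=
    integrable_cexp_quadratic hπre (-b) 0
  -- value of the Gaussian integrals
  have hb2 : ∀ u : ℂ, u = b ∨ u = -b → (0:ℂ) - u^2 / (4 * -(π:ℂ)) = -(π:ℂ) * I * μ^2 / τ := by
    intro u hu
    have hu2 : u^2 = b^2 := by rcases hu with rfl | rfl <;> ring
    rw [hu2, hbdef, htdef]
    have hexp : ((π:ℂ) * c * (2 * μ / τ))^2 = 4 * (π:ℂ)^2 * (-I * τ) * μ^2 / τ^2 := by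
      rw [show ((π:ℂ) * c * (2 * μ / τ))^2 = 4 * (π:ℂ)^2 * (c * c) * μ^2 / τ^2 from by ring, hc2]
    rw [hexp]
    field_simp
    ring
  have hgauss : ∀ u : ℂ, u = b ∨ u = -b →
      (∫ x : ℝ, Complex.exp (-(π:ℂ) * (x:ℂ)^2 + u * x + 0)) = Complex.exp (-(π:ℂ) * I * μ^2 / τ) := by
    intro u hu
    have hlt : (-(π:ℂ)).re < 0 := by simpa using Real.pi_pos
    rw [integral_cexp_quadratic hlt u 0, hb2 u hu]
    have : ((π:ℂ) / -(-(π:ℂ))) = 1 := by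
      rw [neg_neg, div_self hπℂ]
    rw [this, Complex.one_cpow, one_mul]
  -- main integral identity
  have hint : (∫ x : ℝ, Complex.exp (-(π : ℂ) * (x : ℂ) ^ 2) *
        (Complex.sinh ((π : ℂ) * (x : ℂ) * c * (1 + t)) / Complex.sinh ((π : ℂ) * (x : ℂ) * c)))
      + (∫ x : ℝ, Complex.exp (-(π : ℂ) * (x : ℂ) ^ 2) *
        (Complex.sinh ((π : ℂ) * (x : ℂ) * c * (1 - t)) / Complex.sinh ((π : ℂ) * (x : ℂ) * c)))
      = 2 * Complex.exp (-(π:ℂ) * I * μ^2 / τ) := by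
    rw [← integral_add hi1 hi2, integral_congr_ae hpt, integral_add hq1 hq2,
      hgauss b (Or.inl rfl), hgauss (-b) (Or.inr rfl)]
    ring
  -- conclude
  have ht1 : 1 + 2 * -μ / τ = 1 - t := by rw [htdef]; ring
  have ht2 : 1 + 2 * μ / τ = 1 + t := by rw [htdef]
  simp only [PhiFun, ← hcdef]
  rw [ht1, ht2]
  linear_combination (-(1:ℂ)/2) * hint
end
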